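/- arXiv:2101.07233 — 9 statements merged into one kernel-verified Lean document; each statement's English description precedes it below -/
import Mathlib

section
/- For every edge e of G, the energy of e in the unit s-t electric flow satisfies r_e · f_e² ≤ min(r_e, r_e⁻¹ · 𝓔²). -/
open Matrix

/-- The four Penrose conditions characterizing the Moore–Penrose pseudoinverse. -/
def IsMoorePenrose {n : Type*} [Fintype n] (M Md : Matrix n n ℝ) : Prop :=
  M * Md * M = M ∧ Md * M * Md = Md ∧ (M * Md)ᵀ = M * Md ∧ (Md * M)ᵀ = Md * M


/-- sign lemma: threshold indicator is monotone in p. -/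
lemma cut_term_nonneg {V : Type*} (p : V → ℝ) (θ : ℝ) (u w : V) :
    0 ≤ ((if θ ≤ p u then (1:ℝ) else 0) - (if θ ≤ p w then 1 else 0)) * (p u - p w) := by
  rcases le_total (p w) (p u) with h | h
  · apply mul_nonneg _ (by linarith)
    by_cases hw : θ ≤ p w
    · simp [hw, le_trans hw h]
    · simp [hw]; positivity
  · have h1 : ((if θ ≤ p u then (1:ℝ) else 0) - (if θ ≤ p w then 1 else 0)) ≤ 0 := by
      by_cases hu : θ ≤ p u
      · simp [hu, le_trans hu h]
      · simp [hu]; positivity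
    exact mul_nonneg_of_nonpos_of_nonpos h1 (by linarith)

lemma cut_bound {V E : Type*} [Fintype E]
    (head tail : E → V) (q : E → ℝ) (hq : ∀ e, 0 < q e) (p : V → ℝ) (a b : V)
    (hId : ∀ x : V → ℝ, x b - x a =
      ∑ e, (x (head e) - x (tail e)) * (p (head e) - p (tail e)) * q e)
    (e : E) : (p (head e) - p (tail e)) * q e ≤ 1 := by
  rcases le_or_gt (p (head e)) (p (tail e)) with h | h
  · have : (p (head e) - p (tail e)) * q e ≤ 0 :=
      mul_nonpos_of_nonpos_of_nonneg (by linarith) (hq e).le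
    linarith
  · set θ := p (head e) with hθ
    set x : V → ℝ := fun u => if θ ≤ p u then 1 else 0 with hx
    have hterm : ∀ e' : E, 0 ≤ (x (head e') - x (tail e')) * (p (head e') - p (tail e')) * q e' :=
      fun e' => mul_nonneg (cut_term_nonneg p θ _ _) (hq e').le
    have hxh : x (head e) = 1 := by simp [hx, hθ]
    have hxt : x (tail e) = 0 := by simp [hx, not_le.2 h]
    have hsingle : (x (head e) - x (tail e)) * (p (head e) - p (tail e)) * q e ≤
        ∑ e', (x (head e') - x (tail e')) * (p (head e') - p (tail e')) * q e' :=
      Finset.single_le_sum (fun e' _ => hterm e') (Finset.mem_univ e)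
    have hxb : x b ≤ 1 := by by_cases hb : θ ≤ p b <;> simp [hx, hb]
    have hxa : 0 ≤ x a := by by_cases ha : θ ≤ p a <;> simp [hx, ha]
    have := hId x
    rw [hxh, hxt] at hsingle
    calc (p (head e) - p (tail e)) * q e = (1 - 0) * (p (head e) - p (tail e)) * q e := by ring
    _ ≤ ∑ e', (x (head e') - x (tail e')) * (p (head e') - p (tail e')) * q e' := hsingle
    _ = x b - x a := (hId x).symm
    _ ≤ 1 := by linarith

lemma max_principle {V E : Type*} [Fintype V] [Fintype E]
    (head tail : E → V) (q : E → ℝ) (hq : ∀ e, 0 < q e) (p : V → ℝ) (a b : V)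
    (hId : ∀ x : V → ℝ, x b - x a =
      ∑ e, (x (head e) - x (tail e)) * (p (head e) - p (tail e)) * q e)
    (hcn : ∀ x : V → ℝ, (∀ e, x (head e) = x (tail e)) → ∀ v w : V, x v = x w) :
    ∀ v, p v ≤ p b := by
  have hne : (Finset.univ : Finset V).Nonempty := ⟨b, Finset.mem_univ b⟩
  obtain ⟨b', -, hb'⟩ := Finset.exists_max_image Finset.univ p hne
  have key : p b' ≤ p b := by
    by_contra hlt
    push_neg at hlt
    set θ := p b' with hθ
    set x : V → ℝ := fun u => if θ ≤ p u then 1 else 0 with hx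
    have hterm : ∀ e' : E, 0 ≤ (x (head e') - x (tail e')) * (p (head e') - p (tail e')) * q e' :=
      fun e' => mul_nonneg (cut_term_nonneg p θ _ _) (hq e').le
    have hxb : x b = 0 := by simp [hx, not_le.2 hlt]
    have hxa : 0 ≤ x a := by by_cases ha : θ ≤ p a <;> simp [hx, ha]
    have hsum0 : ∑ e', (x (head e') - x (tail e')) * (p (head e') - p (tail e')) * q e' = 0 := by
      have h1 := (hId x).symm
      rw [hxb] at h1
      have h2 : (0:ℝ) ≤ ∑ e', (x (head e') - x (tail e')) * (p (head e') - p (tail e')) * q e' :=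
        Finset.sum_nonneg fun e' _ => hterm e'
      linarith
    have hzero := (Finset.sum_eq_zero_iff_of_nonneg (fun e' _ => hterm e')).1 hsum0
    have hedge : ∀ e' : E, x (head e') = x (tail e') := by
      intro e'
      have h0 := hzero e' (Finset.mem_univ e')
      have hq' : q e' ≠ 0 := (hq e').ne'
      have h1 : (x (head e') - x (tail e')) * (p (head e') - p (tail e')) = 0 := by
        rcases mul_eq_zero.1 h0 with h | h
        · exact h
        · exact absurd h hq'
      rcases mul_eq_zero.1 h1 with h | h
      · linarith [h]
      · have : p (head e') = p (tail e') := by linarith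
        simp [hx, this]
    have := hcn x hedge b' b
    rw [hxb] at this
    simp [hx, hθ] at this
  exact fun v => le_trans (hb' v (Finset.mem_univ v)) key

/-- Lemma `badres`: for every edge `e`, the energy of `e` in the unit
`s`-`t` electric flow satisfies `r_e · f_e² ≤ min (r_e, r_e⁻¹ · 𝓔²)`. -/
theorem energy_le_min {V E : Type*} [Fintype V] [Fintype E] [DecidableEq V] [DecidableEq E]
    [Nonempty E]
    (head tail : E → V) (s t : V) (hst : s ≠ t)
    (r : E → ℝ) (hr : ∀ e, 0 < r e)
    (B : Matrix E V ℝ)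
    (hB : ∀ e v, B e v = (if v = head e then (1 : ℝ) else 0) - (if v = tail e then 1 else 0))
    (L : Matrix V V ℝ)
    (hL : L = Bᵀ * Matrix.diagonal (fun e => (r e)⁻¹) * B)
    (hconn : ∀ x : V → ℝ, L *ᵥ x = 0 → ∀ v w : V, x v = x w)
    (Ld : Matrix V V ℝ) (hLd : IsMoorePenrose L Ld)
    (χst : V → ℝ)
    (hχ : χst = fun v => (if v = t then (1 : ℝ) else 0) - (if v = s then 1 else 0))
    (f : E → ℝ)
    (hf : f = fun e => (r e)⁻¹ * (B *ᵥ (Ld *ᵥ χst)) e)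
    (En : ℝ) (hEn : En = χst ⬝ᵥ (Ld *ᵥ χst))
    (e : E) :
    r e * f e ^ 2 ≤ min (r e) ((r e)⁻¹ * En ^ 2) := by
  classical
  set p : V → ℝ := Ld *ᵥ χst with hp
  set q : E → ℝ := fun e => (r e)⁻¹ with hqdef
  have hq : ∀ e, 0 < q e := fun e => inv_pos.2 (hr e)
  -- basic computations
  have hBx : ∀ y : V → ℝ, ∀ e, (B *ᵥ y) e = y (head e) - y (tail e) := by
    intro y e
    simp [Matrix.mulVec, dotProduct, hB, sub_mul, ite_mul, one_mul, zero_mul,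
      Finset.sum_sub_distrib, Finset.sum_ite_eq', Finset.mem_univ]
  have hdotχ : ∀ y : V → ℝ, y ⬝ᵥ χst = y t - y s := by
    intro y
    simp [hχ, dotProduct, mul_sub, mul_ite, mul_one, mul_zero,
      Finset.sum_sub_distrib, Finset.sum_ite_eq', Finset.mem_univ]
  have hsumχ : ∑ v, χst v = 0 := by
    simp [hχ, Finset.sum_sub_distrib, Finset.sum_ite_eq', Finset.mem_univ]
  have hLsymm : Lᵀ = L := by
    rw [hL]
    simp [Matrix.transpose_mul, Matrix.mul_assoc]
  have hLmv : ∀ y : V → ℝ, L *ᵥ y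
      = Bᵀ *ᵥ (Matrix.diagonal (fun e => (r e)⁻¹) *ᵥ (B *ᵥ y)) := by
    intro y
    rw [hL, ← Matrix.mulVec_mulVec, ← Matrix.mulVec_mulVec]
  have hL1 : L *ᵥ (fun _ => (1:ℝ)) = 0 := by
    rw [hLmv]
    have : B *ᵥ (fun _ => (1:ℝ)) = 0 := by
      funext e; rw [hBx]; simp
    rw [this]
    simp
  have hvm1 : (fun _ => (1:ℝ)) ᵥ* L = 0 := by
    have h := Matrix.mulVec_transpose L (fun _ => (1:ℝ))
    rw [hLsymm] at h
    rw [← h, hL1]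
  -- L * (L * Ld) = L
  have hLLdL : L * (L * Ld) = L := by
    calc L * (L * Ld) = Lᵀ * (L * Ld)ᵀ := by rw [hLsymm, hLd.2.2.1]
    _ = ((L * Ld) * L)ᵀ := (Matrix.transpose_mul (L * Ld) L).symm
    _ = Lᵀ := by rw [hLd.1]
    _ = L := hLsymm
  -- the projection identity: L *ᵥ p = χst
  have hproj : L *ᵥ p = χst := by
    set d : V → ℝ := fun v => ((L * Ld) *ᵥ χst) v - χst v with hd
    have hLd0 : L *ᵥ d = 0 := by
      have : d = (L * Ld) *ᵥ χst - χst := rfl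
      rw [this, Matrix.mulVec_sub, Matrix.mulVec_mulVec, hLLdL, sub_self]
    have hdc := hconn d hLd0
    have hsum1 : ∑ v, ((L * Ld) *ᵥ χst) v = 0 := by
      have h1 : ∑ v, ((L * Ld) *ᵥ χst) v = (fun _ => (1:ℝ)) ⬝ᵥ ((L * Ld) *ᵥ χst) := by
        simp [dotProduct]
      rw [h1, Matrix.dotProduct_mulVec, ← Matrix.vecMul_vecMul, hvm1]
      simp
    have hsumd : ∑ v, d v = 0 := by
      simp only [hd, Finset.sum_sub_distrib, hsum1, hsumχ, sub_zero]
    have hds : d s = 0 := by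
      have hcst : ∑ v, d v = (Fintype.card V : ℝ) * d s := by
        rw [Finset.sum_congr rfl (fun v _ => hdc v s)]
        simp [Finset.sum_const, Finset.card_univ, nsmul_eq_mul]
      rw [hsumd] at hcst
      have hcard : (Fintype.card V : ℝ) ≠ 0 := by
        have : Nonempty V := ⟨s⟩
        exact_mod_cast Fintype.card_ne_zero
      exact (mul_eq_zero.1 hcst.symm).resolve_left hcard
    have hdall : ∀ v, d v = 0 := fun v => (hdc v s).trans hds
    have : (L * Ld) *ᵥ χst = χst := by
      funext v
      have := hdall v
      simpa [hd, sub_eq_zero] using this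
    rw [hp, Matrix.mulVec_mulVec, this]
  -- the fundamental identity
  have hId : ∀ x : V → ℝ, x t - x s =
      ∑ e', (x (head e') - x (tail e')) * (p (head e') - p (tail e')) * q e' := by
    intro x
    have h1 : x t - x s = x ⬝ᵥ (L *ᵥ p) := by rw [hproj, hdotχ]
    rw [h1, hLmv, Matrix.dotProduct_mulVec, Matrix.vecMul_transpose]
    simp only [dotProduct, Matrix.mulVec_diagonal]
    refine Finset.sum_congr rfl fun e' _ => ?_
    rw [hBx, hBx]
    ring
  -- connectivity in edge form
  have hcn : ∀ x : V → ℝ, (∀ e', x (head e') = x (tail e')) → ∀ v w : V, x v = x w := by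
    intro x hx
    apply hconn
    rw [hLmv]
    have : B *ᵥ x = 0 := by
      funext e'; rw [hBx, hx e']; simp
    rw [this]
    simp
  -- reversed identity (for -p, swapping s and t)
  have hId' : ∀ x : V → ℝ, x s - x t =
      ∑ e', (x (head e') - x (tail e')) * ((-p) (head e') - (-p) (tail e')) * q e' := by
    intro x
    have h1 := hId x
    have h2 : ∑ e', (x (head e') - x (tail e')) * ((-p) (head e') - (-p) (tail e')) * q e'
        = -∑ e', (x (head e') - x (tail e')) * (p (head e') - p (tail e')) * q e' := by
      rw [← Finset.sum_neg_distrib]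
      refine Finset.sum_congr rfl fun e' _ => ?_
      simp only [Pi.neg_apply]
      ring
    rw [h2, ← h1]
    ring
  -- f in terms of p
  have hf' : ∀ e', f e' = (p (head e') - p (tail e')) * q e' := by
    intro e'
    rw [hf]
    simp only [← hp, hBx]
    ring
  -- En = p t - p s
  have hEn' : En = p t - p s := by
    rw [hEn, dotProduct_comm, hdotχ]
  -- flow bounds
  have hflow1 : f e ≤ 1 := by
    rw [hf' e]
    exact cut_bound head tail q hq p s t hId e
  have hflow2 : -f e ≤ 1 := by
    have := cut_bound head tail q hq (-p) t s hId' e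
    rw [hf' e]
    simp only [Pi.neg_apply] at this
    linarith [this]
  -- potential bounds
  have hmax : ∀ v, p v ≤ p t := max_principle head tail q hq p s t hId hcn
  have hmin : ∀ v, p s ≤ p v := by
    have h := max_principle head tail q hq (-p) t s hId' hcn
    intro v
    have := h v
    simp only [Pi.neg_apply] at this
    linarith
  -- assemble
  have hre : r e ≠ 0 := (hr e).ne'
  refine le_min ?_ ?_
  · have h1 : (0:ℝ) ≤ (1 - f e) * (1 + f e) := mul_nonneg (by linarith) (by linarith)
    have h2 : f e ^ 2 ≤ 1 := by nlinarith
    calc r e * f e ^ 2 ≤ r e * 1 := mul_le_mul_of_nonneg_left h2 (hr e).le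
    _ = r e := mul_one _
  · have hΔ1 : p (head e) - p (tail e) ≤ En := by
      rw [hEn']; linarith [hmax (head e), hmin (tail e)]
    have hΔ2 : -(p (head e) - p (tail e)) ≤ En := by
      rw [hEn']; linarith [hmax (tail e), hmin (head e)]
    have hsq : (p (head e) - p (tail e)) ^ 2 ≤ En ^ 2 := sq_le_sq' (by linarith) hΔ1
    have heq : r e * f e ^ 2 = (r e)⁻¹ * (p (head e) - p (tail e)) ^ 2 := by
      rw [hf' e, hqdef]
      field_simp
    rw [heq]
    exact mul_le_mul_of_nonneg_left hsq (inv_nonneg.2 (hr e).le)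
end

section
/- For every edge e of G, the unit s-t electric flow satisfies |f_e| ≤ 1. -/
open Matrix

/-- every edge of the unit `s`-`t` electric flow carries at most one
unit of flow: `|f_e| ≤ 1`. -/
theorem unit_flow_le_one {V E : Type*} [Fintype V] [Fintype E] [DecidableEq V]
    [DecidableEq E] [Nonempty E]
    (head tail : E → V) (s t : V) (hst : s ≠ t)
    (r : E → ℝ) (hr : ∀ e, 0 < r e)
    (B : Matrix E V ℝ)
    (hB : ∀ e v, B e v = (if v = head e then (1 : ℝ) else 0) - (if v = tail e then 1 else 0))
    (L : Matrix V V ℝ)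
    (hL : L = Bᵀ * Matrix.diagonal (fun e => (r e)⁻¹) * B)
    (hconn : ∀ x : V → ℝ, L *ᵥ x = 0 → ∀ v w : V, x v = x w)
    (Ld : Matrix V V ℝ) (hLd : IsMoorePenrose L Ld)
    (χst : V → ℝ)
    (hχ : χst = fun v => (if v = t then (1 : ℝ) else 0) - (if v = s then 1 else 0))
    (f : E → ℝ)
    (hf : f = fun e => (r e)⁻¹ * (B *ᵥ (Ld *ᵥ χst)) e) :
    ∀ e : E, |f e| ≤ 1 := by
  have hV : Nonempty V := ⟨s⟩
  -- (B *ᵥ x) e = x (head e) - x (tail e)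
  have hBv : ∀ (x : V → ℝ) (e : E), (B *ᵥ x) e = x (head e) - x (tail e) := by
    intro x e
    simp only [Matrix.mulVec, dotProduct, hB, sub_mul, one_mul, ite_mul, zero_mul,
      Finset.sum_sub_distrib, Finset.sum_ite_eq', Finset.mem_univ, if_true]
  -- dot product with a χ-type vector
  have hdot : ∀ (u v : V) (z : V → ℝ),
      z ⬝ᵥ (fun w => (if w = u then (1:ℝ) else 0) - if w = v then 1 else 0) = z u - z v := by
    intro u v z
    simp only [dotProduct, mul_sub, mul_ite, mul_one, mul_zero,
      Finset.sum_sub_distrib, Finset.sum_ite_eq', Finset.mem_univ, if_true]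
  -- quadratic form
  have quad : ∀ x y : V → ℝ,
      x ⬝ᵥ (L *ᵥ y) = ∑ e, (r e)⁻¹ * ((B *ᵥ x) e * (B *ᵥ y) e) := by
    intro x y
    rw [hL, ← Matrix.mulVec_mulVec, ← Matrix.mulVec_mulVec,
      Matrix.dotProduct_mulVec, Matrix.vecMul_transpose]
    simp only [dotProduct, Matrix.mulVec_diagonal]
    exact Finset.sum_congr rfl (fun e _ => by ring)
  -- symmetry of L
  have Lsym : Lᵀ = L := by
    rw [hL, Matrix.transpose_mul, Matrix.transpose_mul, Matrix.diagonal_transpose,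
      Matrix.transpose_transpose, Matrix.mul_assoc]
  have hdotsym : ∀ x y : V → ℝ, x ⬝ᵥ (L *ᵥ y) = y ⬝ᵥ (L *ᵥ x) := by
    intro x y
    rw [quad, quad]
    exact Finset.sum_congr rfl (fun e _ => by ring)
  -- L kills vectors with vanishing B
  have hLzero : ∀ x : V → ℝ, (∀ e, x (head e) = x (tail e)) → L *ᵥ x = 0 := by
    intro x hx
    have hBx : B *ᵥ x = 0 := by
      funext e; rw [hBv, hx e, sub_self]; rfl
    rw [hL, ← Matrix.mulVec_mulVec, ← Matrix.mulVec_mulVec, hBx, Matrix.mulVec_zero,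
      Matrix.mulVec_zero]
  -- sum of a mulVec of L vanishes
  have hsumL : ∀ z : V → ℝ, ∑ v, (L *ᵥ z) v = 0 := by
    intro z
    have h1 : ∑ v, (L *ᵥ z) v = (fun _ : V => (1:ℝ)) ⬝ᵥ (L *ᵥ z) := by
      simp [dotProduct]
    rw [h1, quad]
    apply Finset.sum_eq_zero
    intro e _
    have : (B *ᵥ fun _ : V => (1:ℝ)) e = 0 := by rw [hBv]; ring
    rw [this]; ring
  -- pseudoinverse solves on mean-zero vectors
  have solve : ∀ χ : V → ℝ, (∑ v, χ v = 0) → L *ᵥ (Ld *ᵥ χ) = χ := by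
    intro χ hχ0
    set y : V → ℝ := χ - L *ᵥ (Ld *ᵥ χ) with hy
    have hyL : y ᵥ* L = 0 := by
      have h1 : L *ᵥ (Ld *ᵥ χ) = (L * Ld) *ᵥ χ := by rw [Matrix.mulVec_mulVec]
      have h2 : ((L * Ld) *ᵥ χ) ᵥ* L = χ ᵥ* L := by
        rw [show (L * Ld) *ᵥ χ = χ ᵥ* (L * Ld)ᵀ from by
          rw [hLd.2.2.1]
          rw [← Matrix.mulVec_transpose, hLd.2.2.1]]
        rw [Matrix.vecMul_vecMul, hLd.2.2.1, hLd.1]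
      rw [hy, Matrix.sub_vecMul, h1, h2, sub_self]
    have hyK : L *ᵥ y = 0 := by
      rw [← Lsym, Matrix.mulVec_transpose, hyL]
    have hyconst := hconn y hyK
    have hsumy : ∑ v, y v = 0 := by
      simp only [hy, Pi.sub_apply, Finset.sum_sub_distrib, hχ0, hsumL, sub_self]
    have hy0 : ∀ v, y v = 0 := by
      intro v
      have : ∑ w, y w = ∑ _w : V, y v := Finset.sum_congr rfl (fun w _ => hyconst w v)
      rw [hsumy, Finset.sum_const] at this
      have hc : 0 < (Finset.univ : Finset V).card := Finset.card_pos.mpr ⟨v, Finset.mem_univ v⟩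
      have := this.symm
      rw [nsmul_eq_mul] at this
      have hcr : (0:ℝ) < (Finset.univ : Finset V).card := by exact_mod_cast hc
      rcases mul_eq_zero.mp this with h | h
      · exact absurd h hcr.ne'
      · exact h
    funext v
    have := hy0 v
    simp only [hy, Pi.sub_apply, sub_eq_zero] at this
    exact this.symm
  -- maximum principle
  have maxp : ∀ (ψ : V → ℝ) (u v : V), u ≠ v →
      L *ᵥ ψ = (fun w => (if w = u then (1:ℝ) else 0) - if w = v then 1 else 0) →
      ∀ w, ψ w ≤ ψ u := by
    intro ψ u v huv hψ w0
    by_contra hcon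
    push_neg at hcon
    obtain ⟨m, hm⟩ := Finite.exists_max ψ
    have hum : ψ u < ψ m := lt_of_lt_of_le hcon (hm w0)
    set x : V → ℝ := fun w => if ψ m ≤ ψ w then 1 else 0 with hx
    have hxm : x m = 1 := by simp [hx]
    have hxu : x u = 0 := by simp [hx, not_le.mpr hum]
    have hx01 : ∀ w, x w = 0 ∨ x w = 1 := by
      intro w; by_cases h : ψ m ≤ ψ w <;> simp [hx, h]
    have key : x ⬝ᵥ (L *ᵥ ψ) ≤ 0 := by
      rw [hψ, hdot, hxu]
      rcases hx01 v with h | h <;> rw [h] <;> norm_num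
    have tnn : ∀ e : E, 0 ≤ (r e)⁻¹ * ((B *ᵥ x) e * (B *ᵥ ψ) e) := by
      intro e
      apply mul_nonneg (le_of_lt (inv_pos.mpr (hr e)))
      rw [hBv, hBv]
      simp only [hx]
      rcases le_or_gt (ψ m) (ψ (head e)) with h1 | h1 <;>
        rcases le_or_gt (ψ m) (ψ (tail e)) with h2 | h2
      · rw [if_pos h1, if_pos h2]; nlinarith
      · rw [if_pos h1, if_neg (not_le.mpr h2)]; nlinarith
      · rw [if_neg (not_le.mpr h1), if_pos h2]; nlinarith
      · rw [if_neg (not_le.mpr h1), if_neg (not_le.mpr h2)]; nlinarith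
    have key2 : x ⬝ᵥ (L *ᵥ ψ) = 0 :=
      le_antisymm key (by rw [quad]; exact Finset.sum_nonneg (fun e _ => tnn e))
    have hzero : ∀ e : E, (r e)⁻¹ * ((B *ᵥ x) e * (B *ᵥ ψ) e) = 0 := by
      have := (Finset.sum_eq_zero_iff_of_nonneg (fun e _ => tnn e)).mp
        (by rw [← quad x ψ]; exact key2)
      intro e; exact this e (Finset.mem_univ e)
    have hflat : ∀ e : E, x (head e) = x (tail e) := by
      intro e
      by_contra hne
      have h := hzero e
      rw [hBv, hBv] at h
      simp only [hx] at hne h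
      have hrp := inv_pos.mpr (hr e)
      rcases le_or_gt (ψ m) (ψ (head e)) with h1 | h1 <;>
        rcases le_or_gt (ψ m) (ψ (tail e)) with h2 | h2
      · rw [if_pos h1, if_pos h2] at hne; exact hne rfl
      · rw [if_pos h1, if_neg (not_le.mpr h2)] at h; nlinarith
      · rw [if_neg (not_le.mpr h1), if_pos h2] at h; nlinarith
      · rw [if_neg (not_le.mpr h1), if_neg (not_le.mpr h2)] at hne; exact hne rfl
    have := hconn x (hLzero x hflat) u m
    rw [hxu, hxm] at this
    norm_num at this
  -- main argument
  intro e0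
  set φ : V → ℝ := Ld *ᵥ χst with hφ
  set u := head e0 with hu
  set v := tail e0 with hv
  have hfe : f e0 = (r e0)⁻¹ * (φ u - φ v) := by
    rw [hf]
    simp only [hBv, hφ, hu, hv]
  by_cases huv : u = v
  · rw [hfe, huv, sub_self, mul_zero]; norm_num
  · set χe : V → ℝ := fun w => (if w = u then (1:ℝ) else 0) - if w = v then 1 else 0 with hχe
    have hsumχe : ∑ w, χe w = 0 := by
      simp only [hχe, Finset.sum_sub_distrib, Finset.sum_ite_eq', Finset.mem_univ, if_true,
        sub_self]
    have hsumχst : ∑ w, χst w = 0 := by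
      simp only [hχ, Finset.sum_sub_distrib, Finset.sum_ite_eq', Finset.mem_univ, if_true,
        sub_self]
    set ψ : V → ℝ := Ld *ᵥ χe with hψ
    have hLψ : L *ᵥ ψ = χe := solve χe hsumχe
    have hLφ : L *ᵥ φ = χst := solve χst hsumχst
    -- φ u - φ v = ψ t - ψ s
    have hkey : φ u - φ v = ψ t - ψ s := by
      have h1 : φ ⬝ᵥ (L *ᵥ ψ) = φ u - φ v := by rw [hLψ, hχe, hdot]
      have h2 : ψ ⬝ᵥ (L *ᵥ φ) = ψ t - ψ s := by rw [hLφ, hχ, hdot]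
      rw [← h1, hdotsym, h2]
    -- A := ψ u - ψ v
    have hAq : ψ u - ψ v = ∑ e, (r e)⁻¹ * ((B *ᵥ ψ) e * (B *ᵥ ψ) e) := by
      have h1 : ψ ⬝ᵥ (L *ᵥ ψ) = ψ u - ψ v := by rw [hLψ, hχe, hdot]
      rw [← h1, quad]
    have hAnn : 0 ≤ ψ u - ψ v := by
      rw [hAq]
      exact Finset.sum_nonneg fun e _ =>
        mul_nonneg (le_of_lt (inv_pos.mpr (hr e))) (mul_self_nonneg _)
    have hsingle : (r e0)⁻¹ * ((ψ u - ψ v) * (ψ u - ψ v)) ≤ ψ u - ψ v := by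
      have h1 := Finset.single_le_sum
        (f := fun e => (r e)⁻¹ * ((B *ᵥ ψ) e * (B *ᵥ ψ) e))
        (fun e _ => mul_nonneg (le_of_lt (inv_pos.mpr (hr e))) (mul_self_nonneg _))
        (Finset.mem_univ e0)
      have h2 : (r e0)⁻¹ * ((ψ u - ψ v) * (ψ u - ψ v)) ≤
          ∑ e, (r e)⁻¹ * ((B *ᵥ ψ) e * (B *ᵥ ψ) e) := by
        simpa only [hBv, ← hu, ← hv] using h1
      exact h2.trans_eq hAq.symm
    have hAr : ψ u - ψ v ≤ r e0 := by
      have hrp := hr e0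
      have hc : r e0 * (r e0)⁻¹ = 1 := mul_inv_cancel₀ hrp.ne'
      have h6 : (ψ u - ψ v) * (ψ u - ψ v) ≤ r e0 * (ψ u - ψ v) := by
        calc (ψ u - ψ v) * (ψ u - ψ v)
            = r e0 * ((r e0)⁻¹ * ((ψ u - ψ v) * (ψ u - ψ v))) := by
              rw [← mul_assoc, hc, one_mul]
          _ ≤ r e0 * (ψ u - ψ v) := mul_le_mul_of_nonneg_left hsingle hrp.le
      nlinarith [h6, hAnn, hrp]
    -- max principle bounds
    have hub : ∀ w, ψ w ≤ ψ u := maxp ψ u v huv hLψ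
    have hlb : ∀ w, ψ v ≤ ψ w := by
      have hneg : L *ᵥ (-ψ) = (fun w => (if w = v then (1:ℝ) else 0) - if w = u then 1 else 0) := by
        rw [Matrix.mulVec_neg, hLψ]
        funext w; simp only [hχe, Pi.neg_apply]; ring
      intro w
      have := maxp (-ψ) v u (Ne.symm huv) hneg w
      simpa using this
    have h1 : ψ t - ψ s ≤ r e0 := by
      have := hub t; have := hlb s; linarith
    have h2 : ψ s - ψ t ≤ r e0 := by
      have := hub s; have := hlb t; linarith
    rw [hfe, hkey, abs_le]
    have hrp := hr e0
    have hinv := inv_pos.mpr hrp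
    have hc : (r e0)⁻¹ * r e0 = 1 := inv_mul_cancel₀ hrp.ne'
    constructor <;>
      nlinarith [mul_le_mul_of_nonneg_left h1 hinv.le, mul_le_mul_of_nonneg_left h2 hinv.le]
end

section
/- Let ε > 0 and let L̃ be a real symmetric positive semidefinite matrix with ker L̃ = ker L and e^{−ε} L ⪯ L̃ ⪯ e^{ε} L (in the Loewner order). Then for every edge e of G, r_e^{−1/2} · |χ_eᵀ (L† − L̃†) χ_{st}| ≤ (e^{ε} − 1) · √𝓔. -/
open Matrix

section Helpers

variable {n : Type*} [Fintype n] [DecidableEq n]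

/-- Uniqueness of the Moore–Penrose pseudoinverse (abstract form). -/
lemma mp_unique' (M A C : Matrix n n ℝ)
    (hA1 : M * A * M = M) (hA2 : A * M * A = A) (hA3 : (M * A)ᵀ = M * A) (hA4 : (A * M)ᵀ = A * M)
    (hC1 : M * C * M = M) (hC2 : C * M * C = C) (hC3 : (M * C)ᵀ = M * C) (hC4 : (C * M)ᵀ = C * M) :
    A = C := by
  have hMA : M * A = M * C := by
    calc M * A = (M * C * M) * A := by rw [hC1]
    _ = (M*C) * (M*A) := by noncomm_ring
    _ = (M*C)ᵀ * (M*A)ᵀ := by rw [hC3, hA3]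
    _ = Cᵀ * (M * A * M)ᵀ := by simp [Matrix.transpose_mul]; noncomm_ring
    _ = Cᵀ * Mᵀ := by rw [hA1]
    _ = (M * C)ᵀ := by rw [Matrix.transpose_mul]
    _ = M * C := hC3
  have hAM : A * M = C * M := by
    calc A * M = A * (M * C * M) := by rw [hC1]
    _ = (A*M) * (C*M) := by noncomm_ring
    _ = (A*M)ᵀ * (C*M)ᵀ := by rw [hC4, hA4]
    _ = (M * A * M)ᵀ * Cᵀ := by simp [Matrix.transpose_mul]; noncomm_ring
    _ = Mᵀ * Cᵀ := by rw [hA1]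
    _ = (C * M)ᵀ := by rw [Matrix.transpose_mul]
    _ = C * M := hC4
  calc A = A * M * A := hA2.symm
  _ = A * (M * C) := by rw [← hMA]; noncomm_ring
  _ = (A * M) * C := by noncomm_ring
  _ = (C * M) * C := by rw [hAM]
  _ = C := hC2

/-- A Moore–Penrose pseudoinverse of a symmetric matrix is symmetric. -/
lemma mp_symmetric (M Md : Matrix n n ℝ) (hM : Mᵀ = M)
    (h1 : M * Md * M = M) (h2 : Md * M * Md = Md)
    (h3 : (M * Md)ᵀ = M * Md) (h4 : (Md * M)ᵀ = Md * M) :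
    Mdᵀ = Md := by
  have k1 : M * Mdᵀ = Md * M := by
    calc M * Mdᵀ = (Md * Mᵀ)ᵀ := by simp [Matrix.transpose_mul]
    _ = (Md * M)ᵀ := by rw [hM]
    _ = Md * M := h4
  have k2 : Mdᵀ * M = M * Md := by
    calc Mdᵀ * M = (Mᵀ * Md)ᵀ := by simp [Matrix.transpose_mul]
    _ = (M * Md)ᵀ := by rw [hM]
    _ = M * Md := h3
  apply mp_unique' M Mdᵀ Md ?_ ?_ ?_ ?_ h1 h2 h3 h4
  · have := congrArg Matrix.transpose h1
    simpa [Matrix.transpose_mul, hM, Matrix.mul_assoc] using this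
  · have := congrArg Matrix.transpose h2
    simpa [Matrix.transpose_mul, hM, Matrix.mul_assoc] using this
  · rw [k1, h4]
  · rw [k2, h3]

lemma dp_symm (J : Matrix n n ℝ) (hJ : Jᵀ = J) (u w : n → ℝ) :
    u ⬝ᵥ (J *ᵥ w) = (J *ᵥ u) ⬝ᵥ w := by
  rw [dotProduct_mulVec]
  nth_rewrite 1 [← hJ]
  rw [vecMul_transpose]

lemma dp_CS (v w : n → ℝ) : (v ⬝ᵥ w)^2 ≤ (v ⬝ᵥ v) * (w ⬝ᵥ w) := by
  have h := Finset.sum_mul_sq_le_sq_mul_sq Finset.univ v w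
  simpa [dotProduct, pow_two] using h

lemma psd_diag_nonneg {M : Matrix n n ℝ} (hM : M.PosSemidef) (i : n) : 0 ≤ M i i := by
  have := hM.dotProduct_mulVec_nonneg (Pi.single i 1)
  simpa [dotProduct_single, single_dotProduct, mulVec_single] using this

lemma transfer_zero (M N P : Matrix n n ℝ) (h : ∀ z : n → ℝ, M *ᵥ z = 0 → N *ᵥ z = 0)
    (hMP : M * P = 0) : N * P = 0 := by
  ext i j
  have h1 : M *ᵥ (P *ᵥ Pi.single j 1) = 0 := by
    rw [mulVec_mulVec, hMP, zero_mulVec]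
  have h2 := congrFun (h _ h1) i
  rw [mulVec_mulVec, mulVec_single] at h2
  simpa using h2

/-- product of (A - a•1) and (b•1 - A) is PSD when a•1 ⪯ A ⪯ b•1, A symmetric. -/
lemma interval_mul_psd (A : Matrix n n ℝ) (hA : A.IsHermitian) (a b : ℝ)
    (h1 : (A - a • 1).PosSemidef) (h2 : (b • 1 - A).PosSemidef) :
    ((A - a • 1) * (b • 1 - A)).PosSemidef := by
  set U : Matrix n n ℝ := (hA.eigenvectorUnitary : Matrix n n ℝ) with hU
  have hUU : U * star U = 1 := (Matrix.mem_unitaryGroup_iff).mp hA.eigenvectorUnitary.2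
  have hUU' : star U * U = 1 := (Matrix.mem_unitaryGroup_iff').mp hA.eigenvectorUnitary.2
  have hdiag : star U * A * U = diagonal (RCLike.ofReal ∘ hA.eigenvalues) := by
    simpa [Unitary.conjStarAlgAut_star_apply] using hA.conjStarAlgAut_star_eigenvectorUnitary
  have hofReal : (RCLike.ofReal ∘ hA.eigenvalues : n → ℝ) = hA.eigenvalues := rfl
  rw [hofReal] at hdiag
  have hbound1 : ∀ i, a ≤ hA.eigenvalues i := by
    intro i
    have hpsd : (star U * (A - a • 1) * U).PosSemidef := by
      have := h1.conjTranspose_mul_mul_same U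
      simpa [Matrix.star_eq_conjTranspose] using this
    have heq : star U * (A - a • 1) * U = diagonal hA.eigenvalues - a • 1 := by
      rw [Matrix.mul_sub, Matrix.sub_mul, hdiag]
      rw [Matrix.mul_smul, Matrix.smul_mul, mul_one, hUU']
    have := psd_diag_nonneg (heq ▸ hpsd) i
    simpa [Matrix.sub_apply, Matrix.smul_apply, Matrix.one_apply, diagonal_apply] using this
  have hbound2 : ∀ i, hA.eigenvalues i ≤ b := by
    intro i
    have hpsd : (star U * (b • 1 - A) * U).PosSemidef := by
      have := h2.conjTranspose_mul_mul_same U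
      simpa [Matrix.star_eq_conjTranspose] using this
    have heq : star U * (b • 1 - A) * U = b • 1 - diagonal hA.eigenvalues := by
      rw [Matrix.mul_sub, Matrix.sub_mul, hdiag]
      rw [Matrix.mul_smul, Matrix.smul_mul, mul_one, hUU']
    have := psd_diag_nonneg (heq ▸ hpsd) i
    simpa [Matrix.sub_apply, Matrix.smul_apply, Matrix.one_apply, diagonal_apply] using this
  have hAspec : A = U * diagonal hA.eigenvalues * star U := by
    have := hA.spectral_theorem
    rwa [Unitary.conjStarAlgAut_apply, hofReal] at this
  have hsm : ∀ c : ℝ, U * diagonal (fun _ : n => c) * star U = c • (1 : Matrix n n ℝ) := by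
    intro c
    rw [← Matrix.smul_one_eq_diagonal, Matrix.mul_smul, Matrix.smul_mul, mul_one, hUU]
  have hfac1 : A - a • 1 = U * diagonal (fun i => hA.eigenvalues i - a) * star U := by
    rw [← diagonal_sub, Matrix.mul_sub, Matrix.sub_mul, hsm, ← hAspec]
  have hfac2 : b • 1 - A = U * diagonal (fun i => b - hA.eigenvalues i) * star U := by
    rw [← diagonal_sub, Matrix.mul_sub, Matrix.sub_mul, hsm, ← hAspec]
  rw [hfac1, hfac2]
  have key : U * diagonal (fun i => hA.eigenvalues i - a) * star U *
      (U * diagonal (fun i => b - hA.eigenvalues i) * star U)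
      = U * diagonal (fun i => (hA.eigenvalues i - a) * (b - hA.eigenvalues i)) * star U := by
    rw [← diagonal_mul_diagonal]
    calc U * diagonal (fun i => hA.eigenvalues i - a) * star U *
        (U * diagonal (fun i => b - hA.eigenvalues i) * star U)
        = U * diagonal (fun i => hA.eigenvalues i - a) * (star U * U) *
          diagonal (fun i => b - hA.eigenvalues i) * star U := by noncomm_ring
    _ = _ := by rw [hUU']; noncomm_ring
  rw [key]
  have hd : (diagonal (fun i => (hA.eigenvalues i - a) * (b - hA.eigenvalues i))).PosSemidef := by
    rw [posSemidef_diagonal_iff]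
    intro i
    have h1 := hbound1 i; have h2 := hbound2 i
    nlinarith
  have := hd.mul_mul_conjTranspose_same U
  simpa [Matrix.star_eq_conjTranspose] using this

lemma sandwich_helper (c P Q R : ℝ) (hc : 0 < c) (h1 : Q ≤ c * P)
    (h2 : 0 ≤ Q - 2*(c*P) + c*(c*R)) : P ≤ c * R := by nlinarith

end Helpers

set_option maxHeartbeats 4000000 in
/-- Lemma `approxenergy`: if `L̃` is symmetric PSD with the same kernel
as `L` and `e^{−ε} L ⪯ L̃ ⪯ e^{ε} L`, then for every edge `e`,
`r_e^{−1/2} · |χ_eᵀ (L† − L̃†) χ_{st}| ≤ (e^ε − 1) · √𝓔`. -/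
theorem approx_solver_flow_error {V E : Type*} [Fintype V] [Fintype E] [DecidableEq V]
    [DecidableEq E] [Nonempty E]
    (head tail : E → V) (s t : V) (hst : s ≠ t)
    (r : E → ℝ) (hr : ∀ e, 0 < r e)
    (B : Matrix E V ℝ)
    (hB : ∀ e v, B e v = (if v = head e then (1 : ℝ) else 0) - (if v = tail e then 1 else 0))
    (L : Matrix V V ℝ)
    (hL : L = Bᵀ * Matrix.diagonal (fun e => (r e)⁻¹) * B)
    (hconn : ∀ x : V → ℝ, L *ᵥ x = 0 → ∀ v w : V, x v = x w)
    (Ld : Matrix V V ℝ) (hLd : IsMoorePenrose L Ld)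
    (χst : V → ℝ)
    (hχ : χst = fun v => (if v = t then (1 : ℝ) else 0) - (if v = s then 1 else 0))
    (En : ℝ) (hEn : En = χst ⬝ᵥ (Ld *ᵥ χst))
    (ε : ℝ) (hε : 0 < ε)
    (Lt : Matrix V V ℝ) (hLtsymm : Ltᵀ = Lt) (hLtpsd : Lt.PosSemidef)
    (hker : ∀ x : V → ℝ, Lt *ᵥ x = 0 ↔ L *ᵥ x = 0)
    (hlow : (Lt - Real.exp (-ε) • L).PosSemidef)
    (hup : (Real.exp ε • L - Lt).PosSemidef)
    (Ltd : Matrix V V ℝ) (hLtd : IsMoorePenrose Lt Ltd) :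
    ∀ e : E,
      (Real.sqrt (r e))⁻¹ * |(fun v => B e v) ⬝ᵥ ((Ld - Ltd) *ᵥ χst)| ≤
        (Real.exp ε - 1) * Real.sqrt En := by
  intro e
  obtain ⟨hL1, hL2, hL3, hL4⟩ := hLd
  obtain ⟨hT1, hT2, hT3, hT4⟩ := hLtd
  -- basic symmetry and positivity facts
  have Lsymm : Lᵀ = L := by
    rw [hL]
    simp [Matrix.transpose_mul, Matrix.diagonal_transpose, Matrix.mul_assoc]
  have Lpsd : L.PosSemidef := by
    have hD : (Matrix.diagonal fun e => (r e)⁻¹ : Matrix E E ℝ).PosSemidef :=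
      Matrix.PosSemidef.diagonal (fun e => inv_nonneg.mpr (hr e).le)
    have := hD.conjTranspose_mul_mul_same B
    rw [Matrix.conjTranspose_eq_transpose_of_trivial] at this
    rwa [hL]
  have Ldsymm : Ldᵀ = Ld := mp_symmetric L Ld Lsymm hL1 hL2 hL3 hL4
  have Ltdsymm : Ltdᵀ = Ltd := mp_symmetric Lt Ltd hLtsymm hT1 hT2 hT3 hT4
  have Ldpsd : Ld.PosSemidef := by
    have := Lpsd.conjTranspose_mul_mul_same Ld
    rw [Matrix.conjTranspose_eq_transpose_of_trivial, Ldsymm] at this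
    rwa [hL2] at this
  -- projections
  set Pp := L * Ld with hPp
  clear_value Pp
  have PpT : Ppᵀ = Pp := hL3
  have PpL : Pp * L = L := hL1
  have PpAlt : Pp = Ld * L := by
    calc Pp = (Ld * L)ᵀ := by rw [hPp, Matrix.transpose_mul, Lsymm, Ldsymm]
    _ = Ld * L := hL4
  have LPp : L * Pp = L := by rw [PpAlt, ← Matrix.mul_assoc, ← hPp, hL1]
  have PpPp : Pp * Pp = Pp := by
    nth_rewrite 2 [hPp]
    rw [← Matrix.mul_assoc, PpL, ← hPp]
  have PpLd : Pp * Ld = Ld := by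
    have hLdPp : Ld * Pp = Ld := by rw [hPp, ← Matrix.mul_assoc, hL2]
    have ht : (Ld * Pp)ᵀ = Pp * Ld := by rw [Matrix.transpose_mul, PpT, Ldsymm]
    rw [← ht, hLdPp, Ldsymm]
  set Pt := Lt * Ltd with hPt
  clear_value Pt
  have PtT : Ptᵀ = Pt := hT3
  have PtAlt : Pt = Ltd * Lt := by
    calc Pt = (Ltd * Lt)ᵀ := by rw [hPt, Matrix.transpose_mul, hLtsymm, Ltdsymm]
    _ = Ltd * Lt := hT4
  have LtPt : Lt * Pt = Lt := by rw [PtAlt, ← Matrix.mul_assoc, ← hPt, hT1]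
  -- kernel transfer between L and Lt
  have LtPp0 : Lt * (1 - Pp) = 0 :=
    transfer_zero L Lt (1 - Pp) (fun z hz => (hker z).mpr hz)
      (by rw [Matrix.mul_sub, Matrix.mul_one, LPp, sub_self])
  have PpLt : Pp * Lt = Lt := by
    have h0 : (1 - Pp) * Lt = 0 := by
      have ht : ((1 - Pp) * Lt)ᵀ = Lt * (1 - Pp) := by
        rw [Matrix.transpose_mul, Matrix.transpose_sub, Matrix.transpose_one, PpT, hLtsymm]
      have := congrArg Matrix.transpose (ht.trans LtPp0)
      simpa using this
    rw [Matrix.sub_mul, Matrix.one_mul] at h0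
    exact (sub_eq_zero.mp h0).symm
  have LPt0 : L * (1 - Pt) = 0 :=
    transfer_zero Lt L (1 - Pt) (fun z hz => (hker z).mp hz)
      (by rw [Matrix.mul_sub, Matrix.mul_one, LtPt, sub_self])
  have PtL : Pt * L = L := by
    have h0 : (1 - Pt) * L = 0 := by
      have ht : ((1 - Pt) * L)ᵀ = L * (1 - Pt) := by
        rw [Matrix.transpose_mul, Matrix.transpose_sub, Matrix.transpose_one, PtT, Lsymm]
      have := congrArg Matrix.transpose (ht.trans LPt0)
      simpa using this
    rw [Matrix.sub_mul, Matrix.one_mul] at h0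
    exact (sub_eq_zero.mp h0).symm
  have PpPt : Pp * Pt = Pt := by rw [hPt, ← Matrix.mul_assoc, PpLt]
  have PtPp : Pt * Pp = Pp := by rw [hPp, ← Matrix.mul_assoc, PtL]
  have PtPp' : Pt * Pp = Pt := by
    have ht : (Pp * Pt)ᵀ = Pt * Pp := by rw [Matrix.transpose_mul, PpT, PtT]
    rw [← ht, PpPt, PtT]
  have PteqPp : Pt = Pp := by rw [← PtPp, PtPp']
  have PpLtd : Pp * Ltd = Ltd := by
    have hLtdPt : Ltd * Pt = Ltd := by rw [hPt, ← Matrix.mul_assoc, hT2]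
    have ht : (Ltd * Pt)ᵀ = Pt * Ltd := by rw [Matrix.transpose_mul, PtT, Ltdsymm]
    have h2 : Pt * Ltd = Ltd := by rw [← ht, hLtdPt, Ltdsymm]
    rw [← PteqPp]; exact h2
  -- projection fixes zero-sum vectors
  have hproj : ∀ c : V → ℝ, (∑ v, c v) = 0 → Pp *ᵥ c = c := by
    intro c hc
    set k := c - Pp *ᵥ c with hk
    have hLk : L *ᵥ k = 0 := by
      rw [hk, Matrix.mulVec_sub, Matrix.mulVec_mulVec, LPp, sub_self]
    have hconst := hconn k hLk
    have hsum : c ⬝ᵥ k = 0 := by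
      calc c ⬝ᵥ k = ∑ v, c v * k v := rfl
      _ = ∑ v, c v * k s := Finset.sum_congr rfl fun v _ => by rw [hconst v s]
      _ = (∑ v, c v) * k s := by rw [← Finset.sum_mul]
      _ = 0 := by rw [hc, zero_mul]
    have hsymm1 : (1 - Pp)ᵀ = 1 - Pp := by
      rw [Matrix.transpose_sub, Matrix.transpose_one, PpT]
    have hid : (1 - Pp) * (1 - Pp) = 1 - Pp := by
      calc (1 - Pp) * (1 - Pp) = 1 - Pp - Pp + Pp * Pp := by noncomm_ring
      _ = 1 - Pp := by rw [PpPp]; abel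
    have hk1 : k = (1 - Pp) *ᵥ c := by rw [hk, Matrix.sub_mulVec, Matrix.one_mulVec]
    have hkk : k ⬝ᵥ k = c ⬝ᵥ k := by
      calc k ⬝ᵥ k = ((1 - Pp) *ᵥ c) ⬝ᵥ ((1 - Pp) *ᵥ c) := by rw [← hk1]
      _ = c ⬝ᵥ ((1 - Pp) *ᵥ ((1 - Pp) *ᵥ c)) :=
        (dp_symm (1 - Pp) hsymm1 c ((1 - Pp) *ᵥ c)).symm
      _ = c ⬝ᵥ ((1 - Pp) *ᵥ c) := by rw [Matrix.mulVec_mulVec, hid]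
      _ = c ⬝ᵥ k := by rw [← hk1]
    have hk0 : k = 0 := dotProduct_self_eq_zero.mp (by rw [hkk, hsum])
    rw [hk] at hk0
    exact (sub_eq_zero.mp hk0).symm
  have sum_χst : ∑ v, χst v = 0 := by
    rw [hχ]; simp [Finset.sum_sub_distrib]
  have hPχ : Pp *ᵥ χst = χst := hproj χst sum_χst
  set χe : V → ℝ := fun v => B e v with hχe
  clear_value χe
  have sum_χe : ∑ v, χe v = 0 := by
    simp only [hχe, hB]; simp [Finset.sum_sub_distrib]
  have hPχe : Pp *ᵥ χe = χe := hproj χe sum_χe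
  -- potentials
  set x := Ld *ᵥ χst with hx
  clear_value x
  have hLx : L *ᵥ x = χst := by rw [hx, Matrix.mulVec_mulVec, ← hPp]; exact hPχ
  set av := Ld *ᵥ χe with hav
  clear_value av
  have hLa : L *ᵥ av = χe := by rw [hav, Matrix.mulVec_mulVec, ← hPp]; exact hPχe
  set y := Ltd *ᵥ χst with hy
  clear_value y
  set u := (Ld - Ltd) *ᵥ χst with hu
  clear_value u
  have hu' : u = x - y := by rw [hu, Matrix.sub_mulVec, ← hx, ← hy]
  -- square root of L
  obtain ⟨J, Jpsd, JJ⟩ : ∃ J : Matrix V V ℝ, J.PosSemidef ∧ J * J = L :=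
    open scoped MatrixOrder in
      ⟨CFC.sqrt L, (CFC.sqrt_nonneg L).posSemidef, CFC.sqrt_mul_sqrt_self L Lpsd.nonneg⟩
  have Jsymm : Jᵀ = J := by
    have := Jpsd.1
    rwa [Matrix.IsHermitian, Matrix.conjTranspose_eq_transpose_of_trivial] at this
  have kerLJ : ∀ z : V → ℝ, L *ᵥ z = 0 → J *ᵥ z = 0 := by
    intro z hz
    have h1 : (J *ᵥ z) ⬝ᵥ (J *ᵥ z) = 0 := by
      rw [← dp_symm J Jsymm z (J *ᵥ z), Matrix.mulVec_mulVec, JJ, hz, dotProduct_zero]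
    exact dotProduct_self_eq_zero.mp h1
  have JPp0 : J * (1 - Pp) = 0 :=
    transfer_zero L J _ kerLJ (by rw [Matrix.mul_sub, Matrix.mul_one, LPp, sub_self])
  have JPp : J * Pp = J := by
    rw [Matrix.mul_sub, Matrix.mul_one] at JPp0
    exact (sub_eq_zero.mp JPp0).symm
  have PpJ : Pp * J = J := by
    have ht : (J * Pp)ᵀ = Pp * J := by rw [Matrix.transpose_mul, PpT, Jsymm]
    rw [← ht, JPp, Jsymm]
  -- the conjugated operators
  set A := J * Ltd * J with hA
  clear_value A
  set Ab := J * Ld * J with hAb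
  clear_value Ab
  have Asymm : Aᵀ = A := by
    rw [hA]; simp [Matrix.transpose_mul, Jsymm, Ltdsymm, Matrix.mul_assoc]
  have Absymm : Abᵀ = Ab := by
    rw [hAb]; simp [Matrix.transpose_mul, Jsymm, Ldsymm, Matrix.mul_assoc]
  have AbJ : Ab * J = J := by
    calc Ab * J = J * Ld * (J * J) := by rw [hAb, Matrix.mul_assoc]
    _ = J * (Ld * L) := by rw [JJ, Matrix.mul_assoc]
    _ = J * Pp := by rw [← PpAlt]
    _ = J := JPp
  have AbA : Ab * A = A := by
    calc Ab * A = (Ab * J) * (Ltd * J) := by rw [hA]; noncomm_ring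
    _ = J * (Ltd * J) := by rw [AbJ]
    _ = A := by rw [hA, Matrix.mul_assoc]
  have AbAb : Ab * Ab = Ab := by
    calc Ab * Ab = (Ab * J) * (Ld * J) := by rw [hAb]; noncomm_ring
    _ = J * (Ld * J) := by rw [AbJ]
    _ = Ab := by rw [hAb, Matrix.mul_assoc]
  -- scalar preliminaries
  have hexp1 : 1 ≤ Real.exp ε := by nlinarith [Real.add_one_le_exp ε]
  have hprod : Real.exp ε * Real.exp (-ε) = 1 := by rw [← Real.exp_add]; simp
  have hexpc : Real.exp (-ε) = (Real.exp ε)⁻¹ := Real.exp_neg ε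
  -- key sandwich inequalities for vectors in the range of J
  have sand : ∀ z : V → ℝ,
      ((J *ᵥ z) ⬝ᵥ (Ltd *ᵥ (J *ᵥ z)) ≤ Real.exp ε * ((J *ᵥ z) ⬝ᵥ (Ld *ᵥ (J *ᵥ z)))) ∧
      ((J *ᵥ z) ⬝ᵥ (Ld *ᵥ (J *ᵥ z)) ≤ Real.exp ε * ((J *ᵥ z) ⬝ᵥ (Ltd *ᵥ (J *ᵥ z)))) := by
    intro z
    set w := J *ᵥ z with hw
    clear_value w
    have hPw : Pp *ᵥ w = w := by rw [hw, Matrix.mulVec_mulVec, PpJ]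
    set x' := Ld *ᵥ w with hx'
    clear_value x'
    set y' := Ltd *ᵥ w with hy'
    clear_value y'
    have hLx' : L *ᵥ x' = w := by rw [hx', Matrix.mulVec_mulVec, ← hPp]; exact hPw
    have hLty' : Lt *ᵥ y' = w := by
      rw [hy', Matrix.mulVec_mulVec, ← hPt, PteqPp]; exact hPw
    have t1 : w ⬝ᵥ y' = y' ⬝ᵥ (Lt *ᵥ y') := by rw [hLty', dotProduct_comm]
    have t2 : w ⬝ᵥ x' = x' ⬝ᵥ (L *ᵥ x') := by rw [hLx', dotProduct_comm]
    constructor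
    · -- upper bound : w⬝Ltd w ≤ e^ε w⬝Ld w
      have q1 : Real.exp (-ε) * (y' ⬝ᵥ (L *ᵥ y')) ≤ y' ⬝ᵥ (Lt *ᵥ y') := by
        have h := hlow.dotProduct_mulVec_nonneg y'
        simp only [star_trivial, Matrix.sub_mulVec, Matrix.smul_mulVec,
          dotProduct_sub, dotProduct_smul, smul_eq_mul] at h
        linarith
      have h1 : y' ⬝ᵥ (L *ᵥ y') ≤ Real.exp ε * (w ⬝ᵥ y') := by
        have h := mul_le_mul_of_nonneg_left q1 (Real.exp_pos ε).le
        rw [← mul_assoc, hprod, one_mul] at h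
        rw [t1]; exact h
      have q2 : 0 ≤ (y' - Real.exp ε • x') ⬝ᵥ (L *ᵥ (y' - Real.exp ε • x')) := by
        have h := Lpsd.dotProduct_mulVec_nonneg (y' - Real.exp ε • x')
        simpa [star_trivial] using h
      have e1 : y' ⬝ᵥ (L *ᵥ x') = y' ⬝ᵥ w := by rw [hLx']
      have e2 : x' ⬝ᵥ (L *ᵥ y') = w ⬝ᵥ y' := by
        rw [dp_symm L Lsymm, hLx']
      have q2' : 0 ≤ y' ⬝ᵥ (L *ᵥ y') - 2 * (Real.exp ε * (w ⬝ᵥ y'))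
          + Real.exp ε * (Real.exp ε * (w ⬝ᵥ x')) := by
        have expand : (y' - Real.exp ε • x') ⬝ᵥ (L *ᵥ (y' - Real.exp ε • x'))
            = y' ⬝ᵥ (L *ᵥ y') - 2 * (Real.exp ε * (w ⬝ᵥ y'))
              + Real.exp ε * (Real.exp ε * (w ⬝ᵥ x')) := by
          rw [Matrix.mulVec_sub, Matrix.mulVec_smul]
          simp only [dotProduct_sub, sub_dotProduct, smul_dotProduct, dotProduct_smul,
            smul_eq_mul]
          rw [e1, e2, t2]
          rw [dotProduct_comm y' w]
          ring
        rw [← expand]; exact q2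
      exact sandwich_helper (Real.exp ε) (w ⬝ᵥ y') (y' ⬝ᵥ (L *ᵥ y')) (w ⬝ᵥ x')
        (Real.exp_pos ε) h1 q2'
    · -- lower bound : w⬝Ld w ≤ e^ε w⬝Ltd w
      have h1 : x' ⬝ᵥ (Lt *ᵥ x') ≤ Real.exp ε * (w ⬝ᵥ x') := by
        have h := hup.dotProduct_mulVec_nonneg x'
        simp only [star_trivial, Matrix.sub_mulVec, Matrix.smul_mulVec,
          dotProduct_sub, dotProduct_smul, smul_eq_mul] at h
        rw [t2]; linarith
      have q2 : 0 ≤ (x' - Real.exp ε • y') ⬝ᵥ (Lt *ᵥ (x' - Real.exp ε • y')) := by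
        have h := hLtpsd.dotProduct_mulVec_nonneg (x' - Real.exp ε • y')
        simpa [star_trivial] using h
      have e1 : x' ⬝ᵥ (Lt *ᵥ y') = x' ⬝ᵥ w := by rw [hLty']
      have e2 : y' ⬝ᵥ (Lt *ᵥ x') = w ⬝ᵥ x' := by
        rw [dp_symm Lt hLtsymm, hLty']
      have q2' : 0 ≤ x' ⬝ᵥ (Lt *ᵥ x') - 2 * (Real.exp ε * (w ⬝ᵥ x'))
          + Real.exp ε * (Real.exp ε * (w ⬝ᵥ y')) := by
        have expand : (x' - Real.exp ε • y') ⬝ᵥ (Lt *ᵥ (x' - Real.exp ε • y'))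
            = x' ⬝ᵥ (Lt *ᵥ x') - 2 * (Real.exp ε * (w ⬝ᵥ x'))
              + Real.exp ε * (Real.exp ε * (w ⬝ᵥ y')) := by
          rw [Matrix.mulVec_sub, Matrix.mulVec_smul]
          simp only [dotProduct_sub, sub_dotProduct, smul_dotProduct, dotProduct_smul,
            smul_eq_mul]
          rw [e1, e2, t1]
          rw [dotProduct_comm x' w]
          ring
        rw [← expand]; exact q2
      exact sandwich_helper (Real.exp ε) (w ⬝ᵥ x') (x' ⬝ᵥ (Lt *ᵥ x')) (w ⬝ᵥ y')
        (Real.exp_pos ε) h1 q2'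
  -- quadratic form computations for A, Ab
  have eAq : ∀ z : V → ℝ, z ⬝ᵥ (A *ᵥ z) = (J *ᵥ z) ⬝ᵥ (Ltd *ᵥ (J *ᵥ z)) := by
    intro z
    rw [hA, ← Matrix.mulVec_mulVec, ← Matrix.mulVec_mulVec, dp_symm J Jsymm]
  have eAbq : ∀ z : V → ℝ, z ⬝ᵥ (Ab *ᵥ z) = (J *ᵥ z) ⬝ᵥ (Ld *ᵥ (J *ᵥ z)) := by
    intro z
    rw [hAb, ← Matrix.mulVec_mulVec, ← Matrix.mulVec_mulVec, dp_symm J Jsymm]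
  have hLdnn : ∀ v : V → ℝ, 0 ≤ v ⬝ᵥ (Ld *ᵥ v) := by
    intro v; have := Ldpsd.dotProduct_mulVec_nonneg v; simpa [star_trivial] using this
  -- 1 - Ab is an orthogonal projection: z⬝Ab z ≤ z⬝z
  have hAble : ∀ z : V → ℝ, z ⬝ᵥ (Ab *ᵥ z) ≤ z ⬝ᵥ z := by
    intro z
    have hsymm1 : (1 - Ab)ᵀ = 1 - Ab := by
      rw [Matrix.transpose_sub, Matrix.transpose_one, Absymm]
    have hid : (1 - Ab) * (1 - Ab) = 1 - Ab := by
      calc (1 - Ab) * (1 - Ab) = 1 - Ab - Ab + Ab * Ab := by noncomm_ring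
      _ = 1 - Ab := by rw [AbAb]; abel
    have h0 : z ⬝ᵥ ((1 - Ab) *ᵥ z) = ((1 - Ab) *ᵥ z) ⬝ᵥ ((1 - Ab) *ᵥ z) := by
      calc z ⬝ᵥ ((1 - Ab) *ᵥ z) = z ⬝ᵥ (((1 - Ab) * (1 - Ab)) *ᵥ z) := by rw [hid]
      _ = z ⬝ᵥ ((1 - Ab) *ᵥ ((1 - Ab) *ᵥ z)) := by rw [Matrix.mulVec_mulVec]
      _ = ((1 - Ab) *ᵥ z) ⬝ᵥ ((1 - Ab) *ᵥ z) := dp_symm (1 - Ab) hsymm1 _ _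
    have h1 : 0 ≤ z ⬝ᵥ ((1 - Ab) *ᵥ z) := by
      rw [h0]; exact Finset.sum_nonneg fun i _ => mul_self_nonneg _
    rw [Matrix.sub_mulVec, Matrix.one_mulVec, dotProduct_sub] at h1
    linarith
  -- the shifted operator A' = A + (1 - Ab)
  set A' := A + (1 - Ab) with hA'def
  clear_value A'
  have A'symm : A'ᵀ = A' := by
    rw [hA'def, Matrix.transpose_add, Matrix.transpose_sub, Matrix.transpose_one, Asymm, Absymm]
  have A'herm : A'.IsHermitian := by
    rw [Matrix.IsHermitian, Matrix.conjTranspose_eq_transpose_of_trivial]; exact A'symm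
  have hA'q : ∀ z : V → ℝ, z ⬝ᵥ (A' *ᵥ z)
      = z ⬝ᵥ (A *ᵥ z) + (z ⬝ᵥ z - z ⬝ᵥ (Ab *ᵥ z)) := by
    intro z
    rw [hA'def, Matrix.add_mulVec, Matrix.sub_mulVec, Matrix.one_mulVec,
      dotProduct_add, dotProduct_sub]
  have hlow' : (A' - (2 - Real.exp ε) • 1).PosSemidef := by
    refine Matrix.PosSemidef.of_dotProduct_mulVec_nonneg ?_ ?_
    · rw [Matrix.IsHermitian, Matrix.conjTranspose_eq_transpose_of_trivial,
        Matrix.transpose_sub, A'symm]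
      congr 1
      simp [Matrix.transpose_smul]
    · intro z
      simp only [star_trivial, Matrix.sub_mulVec, Matrix.smul_mulVec,
        Matrix.one_mulVec, dotProduct_sub, dotProduct_smul, smul_eq_mul]
      rw [hA'q z, eAq z, eAbq z]
      have s2 := (sand z).2
      have s3 := hLdnn (J *ᵥ z)
      have s4 := hAble z
      rw [eAbq z] at s4
      set X := (J *ᵥ z) ⬝ᵥ (Ld *ᵥ (J *ᵥ z)) with hX
      clear_value X
      set Y := (J *ᵥ z) ⬝ᵥ (Ltd *ᵥ (J *ᵥ z)) with hY
      clear_value Y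
      set ζ := z ⬝ᵥ z with hζ
      clear_value ζ
      have hζ0 : 0 ≤ ζ := le_trans s3 s4
      have key : 0 ≤ (Real.exp ε - 1) * (Real.exp ε * ζ - X) := by
        apply mul_nonneg (by linarith)
        nlinarith [mul_nonneg (sub_nonneg.mpr hexp1) hζ0]
      have h0 : 0 ≤ Real.exp ε * ((Y - X) + (Real.exp ε - 1) * ζ) := by nlinarith [s2, key]
      have h1 : Real.exp ε * 0 ≤ Real.exp ε * ((Y - X) + (Real.exp ε - 1) * ζ) := by
        rw [mul_zero]; exact h0
      have h2 := le_of_mul_le_mul_left h1 (Real.exp_pos ε)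
      linarith
  have hup' : ((Real.exp ε) • 1 - A').PosSemidef := by
    refine Matrix.PosSemidef.of_dotProduct_mulVec_nonneg ?_ ?_
    · rw [Matrix.IsHermitian, Matrix.conjTranspose_eq_transpose_of_trivial,
        Matrix.transpose_sub, A'symm, Matrix.transpose_smul, Matrix.transpose_one]
    · intro z
      simp only [star_trivial, Matrix.sub_mulVec, Matrix.smul_mulVec,
        Matrix.one_mulVec, dotProduct_sub, dotProduct_smul, smul_eq_mul]
      rw [hA'q z, eAq z, eAbq z]
      have s1 := (sand z).1
      have s4 := hAble z
      rw [eAbq z] at s4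
      have key := mul_nonneg (sub_nonneg.mpr hexp1) (sub_nonneg.mpr s4)
      nlinarith [s1, key]
  have hPmat := interval_mul_psd A' A'herm (2 - Real.exp ε) (Real.exp ε) hlow' hup'
  -- Step C : energy bound for the difference of potentials
  set w0 := J *ᵥ x with hw0
  clear_value w0
  have hEn0 : w0 ⬝ᵥ w0 = En := by
    rw [hw0, ← dp_symm J Jsymm x (J *ᵥ x), Matrix.mulVec_mulVec, JJ, hLx, hEn, dotProduct_comm]
  have hJy : J *ᵥ y = (J * Ltd * L) *ᵥ x := by
    rw [hy, ← hLx, Matrix.mulVec_mulVec, Matrix.mulVec_mulVec]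
  have hAw0 : A *ᵥ w0 = (J * Ltd * L) *ᵥ x := by
    have hAJ : A * J = J * Ltd * L := by
      calc A * J = J * Ltd * (J * J) := by rw [hA, Matrix.mul_assoc]
      _ = J * Ltd * L := by rw [JJ]
    rw [hw0, Matrix.mulVec_mulVec, hAJ]
  have hJu : J *ᵥ u = w0 - A *ᵥ w0 := by
    rw [hu', Matrix.mulVec_sub, hJy, hAw0, ← hw0]
  have hULU : u ⬝ᵥ (L *ᵥ u) = (w0 - A *ᵥ w0) ⬝ᵥ (w0 - A *ᵥ w0) := by
    rw [← JJ, ← Matrix.mulVec_mulVec, dp_symm J Jsymm, hJu]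
  have hC : u ⬝ᵥ (L *ᵥ u) ≤ (Real.exp ε - 1)^2 * En := by
    have hPm := hPmat.dotProduct_mulVec_nonneg w0
    set q0 := A *ᵥ w0 with hq0
    clear_value q0
    have hAb0 : Ab *ᵥ w0 = w0 := by rw [hw0, Matrix.mulVec_mulVec, AbJ]
    have hAbq : Ab *ᵥ q0 = q0 := by rw [hq0, Matrix.mulVec_mulVec, AbA, ← hq0]
    have h3 : A' *ᵥ w0 = q0 := by
      rw [hA'def, Matrix.add_mulVec, Matrix.sub_mulVec, Matrix.one_mulVec, hAb0, ← hq0]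
      abel
    have h4 : A' *ᵥ q0 = A *ᵥ q0 := by
      rw [hA'def, Matrix.add_mulVec, Matrix.sub_mulVec, Matrix.one_mulVec, hAbq]
      abel
    have h5 : ((A' - (2 - Real.exp ε) • 1) * ((Real.exp ε) • 1 - A')) *ᵥ w0
        = Real.exp ε • q0 - A *ᵥ q0 - ((2 - Real.exp ε) * Real.exp ε) • w0
          + (2 - Real.exp ε) • q0 := by
      rw [← Matrix.mulVec_mulVec]
      simp only [Matrix.sub_mulVec, Matrix.mulVec_sub, Matrix.mulVec_smul,
        Matrix.smul_mulVec, Matrix.one_mulVec, h3, h4]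
      module
    have h6 : 0 ≤ w0 ⬝ᵥ (((A' - (2 - Real.exp ε) • 1) * ((Real.exp ε) • 1 - A')) *ᵥ w0) := by
      simpa [star_trivial] using hPm
    rw [h5] at h6
    simp only [dotProduct_sub, dotProduct_add, dotProduct_smul, smul_eq_mul] at h6
    have e7 : w0 ⬝ᵥ (A *ᵥ q0) = q0 ⬝ᵥ q0 := by rw [dp_symm A Asymm, ← hq0]
    rw [e7] at h6
    rw [hULU, ← hEn0]
    have expand2 : (w0 - q0) ⬝ᵥ (w0 - q0) = w0 ⬝ᵥ w0 - 2*(w0 ⬝ᵥ q0) + q0 ⬝ᵥ q0 := by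
      simp only [dotProduct_sub, sub_dotProduct]
      rw [dotProduct_comm q0 w0]; ring
    rw [expand2]
    nlinarith [h6]
  -- Step A : Cauchy–Schwarz
  have hsplit : χe ⬝ᵥ u = (J *ᵥ av) ⬝ᵥ (J *ᵥ u) := by
    calc χe ⬝ᵥ u = (L *ᵥ av) ⬝ᵥ u := by rw [hLa]
    _ = (J *ᵥ (J *ᵥ av)) ⬝ᵥ u := by rw [Matrix.mulVec_mulVec, JJ]
    _ = u ⬝ᵥ (J *ᵥ (J *ᵥ av)) := dotProduct_comm _ _
    _ = (J *ᵥ u) ⬝ᵥ (J *ᵥ av) := dp_symm J Jsymm _ _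
    _ = (J *ᵥ av) ⬝ᵥ (J *ᵥ u) := dotProduct_comm _ _
  have eJa : (J *ᵥ av) ⬝ᵥ (J *ᵥ av) = χe ⬝ᵥ av := by
    rw [← dp_symm J Jsymm av (J *ᵥ av), Matrix.mulVec_mulVec, JJ, hLa, dotProduct_comm]
  have eJu : (J *ᵥ u) ⬝ᵥ (J *ᵥ u) = u ⬝ᵥ (L *ᵥ u) := by
    rw [← dp_symm J Jsymm u (J *ᵥ u), Matrix.mulVec_mulVec, JJ]
  have hCS : (χe ⬝ᵥ u)^2 ≤ (χe ⬝ᵥ av) * (u ⬝ᵥ (L *ᵥ u)) := by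
    rw [hsplit, ← eJa, ← eJu]; exact dp_CS _ _
  -- Step B : effective resistance bound
  have hRnn : 0 ≤ χe ⬝ᵥ av := by
    have h := hLdnn χe
    rwa [← hav] at h
  have hBa : (B *ᵥ av) e = χe ⬝ᵥ av := by rw [hχe]; rfl
  have hsum2 : χe ⬝ᵥ av = ∑ e', (r e')⁻¹ * ((B *ᵥ av) e')^2 := by
    have h1 : χe ⬝ᵥ av = av ⬝ᵥ (L *ᵥ av) := by rw [hLa, dotProduct_comm]
    rw [h1, hL, ← Matrix.mulVec_mulVec, ← Matrix.mulVec_mulVec,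
      dotProduct_mulVec, vecMul_transpose]
    simp only [dotProduct, Matrix.mulVec_diagonal]
    exact Finset.sum_congr rfl fun i _ => by ring
  have hterm : (r e)⁻¹ * ((B *ᵥ av) e)^2 ≤ ∑ e', (r e')⁻¹ * ((B *ᵥ av) e')^2 :=
    Finset.single_le_sum (f := fun e' => (r e')⁻¹ * ((B *ᵥ av) e')^2)
      (fun i _ => mul_nonneg (inv_nonneg.mpr (hr i).le) (sq_nonneg _)) (Finset.mem_univ e)
  have hRe : χe ⬝ᵥ av ≤ r e := by
    have hS2 : (χe ⬝ᵥ av)^2 ≤ r e * (χe ⬝ᵥ av) := by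
      have h := hterm
      rw [hBa, ← hsum2] at h
      have h2 := mul_le_mul_of_nonneg_left h (hr e).le
      rw [← mul_assoc, mul_inv_cancel₀ (hr e).ne', one_mul] at h2
      exact h2
    nlinarith [hRnn, hr e]
  -- final combination
  have hEnnn : 0 ≤ En := by
    rw [hEn, hx]
    have := Ldpsd.dotProduct_mulVec_nonneg χst
    simpa [star_trivial] using this
  have huLu_nn : 0 ≤ u ⬝ᵥ (L *ᵥ u) := by
    have := Lpsd.dotProduct_mulVec_nonneg u
    simpa [star_trivial] using this
  have hdel : 0 ≤ Real.exp ε - 1 := by linarith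
  have habs : |χe ⬝ᵥ u| ≤ Real.sqrt (r e) * ((Real.exp ε - 1) * Real.sqrt En) := by
    rw [← Real.sqrt_sq_eq_abs]
    have hle : (χe ⬝ᵥ u)^2 ≤ (r e) * ((Real.exp ε - 1)^2 * En) :=
      le_trans hCS (mul_le_mul hRe hC huLu_nn (hr e).le)
    calc Real.sqrt ((χe ⬝ᵥ u)^2) ≤ Real.sqrt (r e * ((Real.exp ε - 1)^2 * En)) :=
      Real.sqrt_le_sqrt hle
    _ = Real.sqrt (r e) * ((Real.exp ε - 1) * Real.sqrt En) := by
      rw [Real.sqrt_mul (hr e).le, Real.sqrt_mul (by positivity), Real.sqrt_sq hdel]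
  have hs : 0 < Real.sqrt (r e) := Real.sqrt_pos.mpr (hr e)
  calc (Real.sqrt (r e))⁻¹ * |χe ⬝ᵥ u|
      ≤ (Real.sqrt (r e))⁻¹ * (Real.sqrt (r e) * ((Real.exp ε - 1) * Real.sqrt En)) := by
        apply mul_le_mul_of_nonneg_left habs (by positivity)
  _ = (Real.exp ε - 1) * Real.sqrt En := by
      field_simp
end

section
/- Let C be a nonempty strict subset of V and let x ∈ ℝ^V satisfy x_v = 0 for all v ∉ C and 1ᵀ x = 0. Then (L† x)_C equals SC(L, C)† (x_C) up to an additive multiple of the all-ones vector on C: there exists c ∈ ℝ with (L† x)_C = SC(L, C)† (x_C) + c · 1_C. Equivalently, for every y ∈ ℝ^V supported on C with 1ᵀ y = 0, one has yᵀ L† x = (y_C)ᵀ SC(L, C)† (x_C). -/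
open Matrix

/-- If `M` is symmetric with kernel contained in the constants, and `x` has zero sum,
then `Md *ᵥ x` solves `M *ᵥ ? = x`, where `Md` is a Moore–Penrose pseudoinverse of `M`. -/
lemma mp_solve {n : Type*} [Fintype n] [DecidableEq n] (M Md : Matrix n n ℝ)
    (hMP : IsMoorePenrose M Md) (hsym : Mᵀ = M)
    (hker : ∀ z : n → ℝ, M *ᵥ z = 0 → ∀ a b, z a = z b)
    (a0 : n) (x : n → ℝ) (hx : ∑ i, x i = 0) :
    M *ᵥ (Md *ᵥ x) = x := by
  have hM : ∀ a b, M a b = M b a := by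
    intro a b
    conv_lhs => rw [← hsym]
    rfl
  set P : Matrix n n ℝ := 1 - M * Md with hP
  have hPsym : Pᵀ = P := by
    rw [hP, Matrix.transpose_sub, Matrix.transpose_one, hMP.2.2.1]
  have hPM : P * M = 0 := by
    rw [hP, Matrix.sub_mul, Matrix.one_mul, hMP.1, sub_self]
  have hrow : ∀ i, M *ᵥ (fun j => P i j) = 0 := by
    intro i
    funext k
    have h1 : (P * M) i k = 0 := by rw [hPM]; rfl
    calc (M *ᵥ fun j => P i j) k = ∑ j, M k j * P i j := rfl
      _ = ∑ j, P i j * M j k := by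
          refine Finset.sum_congr rfl fun j _ => ?_
          rw [hM k j]; ring
      _ = (P * M) i k := (Matrix.mul_apply).symm
      _ = 0 := h1
  have hconst : ∀ i j, P i j = P a0 a0 := by
    intro i j
    have h1 : P i j = P i a0 := hker _ (hrow i) j a0
    have h2 : P i a0 = P a0 i := by
      conv_lhs => rw [← hPsym]
      rfl
    have h3 : P a0 i = P a0 a0 := hker _ (hrow a0) i a0
    rw [h1, h2, h3]
  have hPx : P *ᵥ x = 0 := by
    funext i
    calc (P *ᵥ x) i = ∑ j, P i j * x j := rfl
      _ = ∑ j, P a0 a0 * x j := Finset.sum_congr rfl fun j _ => by rw [hconst i j]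
      _ = P a0 a0 * ∑ j, x j := (Finset.mul_sum _ _ _).symm
      _ = 0 := by rw [hx, mul_zero]
  have := hPx
  rw [hP, Matrix.sub_mulVec, Matrix.one_mulVec, sub_eq_zero] at this
  rw [Matrix.mulVec_mulVec]
  exact this.symm

/-- Fact `scsubset`: for a demand `x` supported on a nonempty strict
subset `C` of the vertices with total demand zero, `(L† x)_C` equals `SC(L, C)† x_C` up to
an additive multiple of the all-ones vector on `C`; equivalently, dotting against any
mean-zero vector `y` supported on `C` gives `yᵀ L† x = y_Cᵀ SC(L, C)† x_C`. -/
theorem schur_complement_solution {V E : Type*} [Fintype V] [Fintype E] [DecidableEq V]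
    [DecidableEq E] [Nonempty E]
    (head tail : E → V) (s t : V) (hst : s ≠ t)
    (r : E → ℝ) (hr : ∀ e, 0 < r e)
    (B : Matrix E V ℝ)
    (hB : ∀ e v, B e v = (if v = head e then (1 : ℝ) else 0) - (if v = tail e then 1 else 0))
    (L : Matrix V V ℝ)
    (hL : L = Bᵀ * Matrix.diagonal (fun e => (r e)⁻¹) * B)
    (hconn : ∀ x : V → ℝ, L *ᵥ x = 0 → ∀ v w : V, x v = x w)
    (Ld : Matrix V V ℝ) (hLd : IsMoorePenrose L Ld)
    (C : Set V) [DecidablePred (· ∈ C)] (hC : C.Nonempty) (hCne : C ≠ Set.univ)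
    (LFF : Matrix {v // v ∉ C} {v // v ∉ C} ℝ) (hLFF : LFF = Matrix.of fun a b => L a.1 b.1)
    (LFC : Matrix {v // v ∉ C} {v // v ∈ C} ℝ) (hLFC : LFC = Matrix.of fun a b => L a.1 b.1)
    (LCF : Matrix {v // v ∈ C} {v // v ∉ C} ℝ) (hLCF : LCF = Matrix.of fun a b => L a.1 b.1)
    (LCC : Matrix {v // v ∈ C} {v // v ∈ C} ℝ) (hLCC : LCC = Matrix.of fun a b => L a.1 b.1)
    (SC : Matrix {v // v ∈ C} {v // v ∈ C} ℝ) (hSC : SC = LCC - LCF * LFF⁻¹ * LFC)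
    (SCd : Matrix {v // v ∈ C} {v // v ∈ C} ℝ) (hSCd : IsMoorePenrose SC SCd)
    (x : V → ℝ) (hx0 : ∀ v, v ∉ C → x v = 0) (hxsum : ∑ v, x v = 0) :
    (∃ c : ℝ, ∀ v : {v // v ∈ C},
        (Ld *ᵥ x) v.1 = (SCd *ᵥ fun w : {v // v ∈ C} => x w.1) v + c) ∧
      (∀ y : V → ℝ, (∀ v, v ∉ C → y v = 0) → ∑ v, y v = 0 →
        y ⬝ᵥ (Ld *ᵥ x) =
          (fun w : {v // v ∈ C} => y w.1) ⬝ᵥ (SCd *ᵥ fun w : {v // v ∈ C} => x w.1)) := by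
  classical
  obtain ⟨v0, hv0⟩ := hC
  -- splitting sums over V into C-part and F-part
  have hsplit : ∀ f : V → ℝ, ∑ v, f v =
      (∑ a : {v // v ∈ C}, f a.1) + (∑ a : {v // v ∉ C}, f a.1) := fun f =>
    (Fintype.sum_subtype_add_sum_subtype (· ∈ C) f).symm
  -- symmetry of L
  have hLsym : Lᵀ = L := by
    rw [hL, Matrix.transpose_mul, Matrix.transpose_mul, Matrix.transpose_transpose,
      Matrix.diagonal_transpose, Matrix.mul_assoc]
  have hLsym' : ∀ a b, L a b = L b a := by
    intro a b
    conv_lhs => rw [← hLsym]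
    rfl
  -- constants are in the kernel of B, hence of L
  have hBrow : ∀ e, ∑ v, B e v = 0 := by
    intro e
    simp [hB, Finset.sum_sub_distrib]
  -- PSD: zero quadratic form implies in kernel
  have hpsd : ∀ z : V → ℝ, z ⬝ᵥ (L *ᵥ z) = 0 → L *ᵥ z = 0 := by
    intro z hz
    have hcalc : z ⬝ᵥ (L *ᵥ z) = ∑ e, (r e)⁻¹ * ((B *ᵥ z) e) ^ 2 := by
      rw [hL, ← Matrix.mulVec_mulVec, ← Matrix.mulVec_mulVec,
        Matrix.dotProduct_mulVec, Matrix.vecMul_transpose]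
      simp only [dotProduct, Matrix.mulVec_diagonal]
      exact Finset.sum_congr rfl fun e _ => by ring
    have hterm : ∀ e ∈ Finset.univ, (0:ℝ) ≤ (r e)⁻¹ * ((B *ᵥ z) e) ^ 2 := fun e _ =>
      mul_nonneg (inv_nonneg.2 (hr e).le) (sq_nonneg _)
    have hall := (Finset.sum_eq_zero_iff_of_nonneg hterm).1 (hcalc ▸ hz)
    have hBz : B *ᵥ z = 0 := by
      funext e
      have he := hall e (Finset.mem_univ e)
      have hne : (r e)⁻¹ ≠ 0 := inv_ne_zero (hr e).ne'
      have h2 : ((B *ᵥ z) e) ^ 2 = 0 := (mul_eq_zero.1 he).resolve_left hne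
      exact pow_eq_zero_iff two_ne_zero |>.mp h2
    rw [hL, ← Matrix.mulVec_mulVec, ← Matrix.mulVec_mulVec, hBz]
    simp
  -- glue a C-vector and an F-vector into a V-vector
  set glue : ({v // v ∈ C} → ℝ) → ({v // v ∉ C} → ℝ) → (V → ℝ) :=
    fun zC zF v => if h : v ∈ C then zC ⟨v, h⟩ else zF ⟨v, h⟩ with hglue
  have hmv : ∀ (f : V → ℝ) (v : V), (L *ᵥ f) v = ∑ w, L v w * f w := fun f v => rfl
  -- block decomposition of L *ᵥ glue
  have hblockF : ∀ (zC : {v // v ∈ C} → ℝ) (zF : {v // v ∉ C} → ℝ) (a : {v // v ∉ C}),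
      (L *ᵥ glue zC zF) a.1 = (LFF *ᵥ zF) a + (LFC *ᵥ zC) a := by
    intro zC zF a
    rw [hmv, hsplit fun w => L a.1 w * glue zC zF w]
    rw [hLFF, hLFC]
    have h1 : ∀ b : {v // v ∈ C}, L a.1 b.1 * glue zC zF b.1 = L a.1 b.1 * zC b := by
      intro b; rw [hglue]; simp [b.2]
    have h2 : ∀ b : {v // v ∉ C}, L a.1 b.1 * glue zC zF b.1 = L a.1 b.1 * zF b := by
      intro b; rw [hglue]; simp [b.2]
    rw [Finset.sum_congr rfl fun b _ => h1 b, Finset.sum_congr rfl fun b _ => h2 b, add_comm]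
    rfl
  have hblockC : ∀ (zC : {v // v ∈ C} → ℝ) (zF : {v // v ∉ C} → ℝ) (a : {v // v ∈ C}),
      (L *ᵥ glue zC zF) a.1 = (LCF *ᵥ zF) a + (LCC *ᵥ zC) a := by
    intro zC zF a
    rw [hmv, hsplit fun w => L a.1 w * glue zC zF w]
    rw [hLCF, hLCC]
    have h1 : ∀ b : {v // v ∈ C}, L a.1 b.1 * glue zC zF b.1 = L a.1 b.1 * zC b := by
      intro b; rw [hglue]; simp [b.2]
    have h2 : ∀ b : {v // v ∉ C}, L a.1 b.1 * glue zC zF b.1 = L a.1 b.1 * zF b := by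
      intro b; rw [hglue]; simp [b.2]
    rw [Finset.sum_congr rfl fun b _ => h1 b, Finset.sum_congr rfl fun b _ => h2 b, add_comm]
    rfl
  -- L_FF is invertible
  have hLFFdet : IsUnit LFF.det := by
    rw [isUnit_iff_ne_zero]
    intro hdet
    obtain ⟨z, hz0, hzz⟩ := (Matrix.exists_mulVec_eq_zero_iff).2 hdet
    set zt : V → ℝ := glue 0 z with hzt
    have hq : zt ⬝ᵥ (L *ᵥ zt) = 0 := by
      show ∑ v, zt v * (L *ᵥ zt) v = 0
      rw [hsplit fun v => zt v * (L *ᵥ zt) v]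
      have h1 : ∀ a : {v // v ∈ C}, zt a.1 * (L *ᵥ zt) a.1 = 0 := by
        intro a
        have : zt a.1 = 0 := by rw [hzt, hglue]; simp [a.2]
        rw [this, zero_mul]
      have h2 : ∀ a : {v // v ∉ C}, zt a.1 * (L *ᵥ zt) a.1 = 0 := by
        intro a
        have := hblockF 0 z a
        rw [hzz] at this
        have hz2 : (L *ᵥ zt) a.1 = 0 := by
          rw [hzt, this]
          simp
        rw [hz2, mul_zero]
      rw [Finset.sum_eq_zero fun a _ => h1 a, Finset.sum_eq_zero fun a _ => h2 a, add_zero]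
    have hLzt := hpsd zt hq
    have hcst := hconn zt hLzt
    have hzt0 : zt v0 = 0 := by rw [hzt, hglue]; simp [hv0]
    apply hz0
    funext a
    have : zt a.1 = 0 := by rw [hcst a.1 v0, hzt0]
    rw [hzt, hglue] at this
    simpa [a.2] using this
  have hFFinv : LFF⁻¹ * LFF = 1 := Matrix.nonsing_inv_mul _ hLFFdet
  have hFFinv' : LFF * LFF⁻¹ = 1 := Matrix.mul_nonsing_inv _ hLFFdet
  -- kernel of SC consists of constants
  have hext : ∀ zC : {v // v ∈ C} → ℝ,
      (∀ a : {v // v ∉ C}, (L *ᵥ glue zC (-((LFF⁻¹ * LFC) *ᵥ zC))) a.1 = 0) ∧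
      (∀ a : {v // v ∈ C}, (L *ᵥ glue zC (-((LFF⁻¹ * LFC) *ᵥ zC))) a.1 = (SC *ᵥ zC) a) := by
    intro zC
    constructor
    · intro a
      rw [hblockF]
      have : LFF *ᵥ (-((LFF⁻¹ * LFC) *ᵥ zC)) = -(LFC *ᵥ zC) := by
        rw [Matrix.mulVec_neg, Matrix.mulVec_mulVec, ← Matrix.mul_assoc, hFFinv',
          Matrix.one_mul]
      rw [this]
      simp
    · intro a
      rw [hblockC]
      have h1 : LCF *ᵥ (-((LFF⁻¹ * LFC) *ᵥ zC)) = -((LCF * LFF⁻¹ * LFC) *ᵥ zC) := by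
        rw [Matrix.mulVec_neg, Matrix.mulVec_mulVec, Matrix.mul_assoc]
      rw [h1, hSC, Matrix.sub_mulVec]
      simp [sub_eq_add_neg, add_comm]
  have hSCker : ∀ zC : {v // v ∈ C} → ℝ, SC *ᵥ zC = 0 →
      ∀ a b : {v // v ∈ C}, zC a = zC b := by
    intro zC hzC a b
    set w : V → ℝ := glue zC (-((LFF⁻¹ * LFC) *ᵥ zC)) with hw
    have hLw : L *ᵥ w = 0 := by
      funext v
      by_cases h : v ∈ C
      · have := (hext zC).2 ⟨v, h⟩
        rw [hzC] at this
        exact this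
      · exact (hext zC).1 ⟨v, h⟩
    have hcst := hconn w hLw
    have h1 : w a.1 = zC a := by rw [hw, hglue]; simp [a.2]
    have h2 : w b.1 = zC b := by rw [hw, hglue]; simp [b.2]
    rw [← h1, ← h2, hcst a.1 b.1]
  -- symmetry of SC
  have hLCCsym : LCCᵀ = LCC := by
    ext a b
    rw [hLCC]
    exact hLsym' b.1 a.1
  have hLFFsym : LFFᵀ = LFF := by
    ext a b
    rw [hLFF]
    exact hLsym' b.1 a.1
  have hLFCt : LFCᵀ = LCF := by
    ext a b
    rw [hLFC, hLCF]
    exact hLsym' b.1 a.1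
  have hLCFt : LCFᵀ = LFC := by rw [← hLFCt, Matrix.transpose_transpose]
  have hSCsym : SCᵀ = SC := by
    rw [hSC, Matrix.transpose_sub, hLCCsym, Matrix.transpose_mul, Matrix.transpose_mul,
      Matrix.transpose_nonsing_inv, hLFFsym, hLFCt, hLCFt, Matrix.mul_assoc]
  -- the solution u := Ld *ᵥ x
  set u : V → ℝ := Ld *ᵥ x with hu
  have hLu : L *ᵥ u = x := mp_solve L Ld hLd hLsym hconn v0 x hxsum
  set uC : {v // v ∈ C} → ℝ := fun a => u a.1 with huC
  set uF : {v // v ∉ C} → ℝ := fun a => u a.1 with huF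
  have hgu : glue uC uF = u := by
    funext v
    rw [hglue]
    by_cases h : v ∈ C <;> simp [h, huC, huF]
  -- solve for uF
  have hFeq : LFF *ᵥ uF = -(LFC *ᵥ uC) := by
    funext a
    have h1 := hblockF uC uF a
    rw [hgu, hLu] at h1
    have h2 : x a.1 = 0 := hx0 a.1 a.2
    rw [h2] at h1
    have := eq_neg_of_add_eq_zero_left h1.symm
    exact this
  have huFeq : uF = -((LFF⁻¹ * LFC) *ᵥ uC) := by
    have h := congrArg (fun w => LFF⁻¹ *ᵥ w) hFeq
    simpa [Matrix.mulVec_mulVec, hFFinv, Matrix.mulVec_neg] using h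
  -- SC *ᵥ uC = x_C
  set xC : {v // v ∈ C} → ℝ := fun a => x a.1 with hxC
  have hSCu : SC *ᵥ uC = xC := by
    funext a
    have h1 := (hext uC).2 a
    rw [← huFeq, hgu, hLu] at h1
    exact h1.symm
  -- sum of xC is zero
  have hxCsum : ∑ a : {v // v ∈ C}, xC a = 0 := by
    have h1 := hsplit x
    have h2 : ∑ a : {v // v ∉ C}, x a.1 = 0 :=
      Finset.sum_eq_zero fun a _ => hx0 a.1 a.2
    rw [hxsum, h2, add_zero] at h1
    exact h1.symm
  -- SC *ᵥ (SCd *ᵥ xC) = xC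
  have hSCw : SC *ᵥ (SCd *ᵥ xC) = xC :=
    mp_solve SC SCd hSCd hSCsym hSCker ⟨v0, hv0⟩ xC hxCsum
  -- difference is in the kernel of SC, hence constant
  have hdiff : SC *ᵥ (uC - SCd *ᵥ xC) = 0 := by
    rw [Matrix.mulVec_sub, hSCu, hSCw, sub_self]
  have hcdiff := hSCker _ hdiff
  set c : ℝ := uC ⟨v0, hv0⟩ - (SCd *ᵥ xC) ⟨v0, hv0⟩ with hc
  have hpart1 : ∀ a : {v // v ∈ C}, uC a = (SCd *ᵥ xC) a + c := by
    intro a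
    have := hcdiff a ⟨v0, hv0⟩
    simp only [Pi.sub_apply] at this
    rw [hc]
    linarith
  constructor
  · exact ⟨c, fun a => hpart1 a⟩
  · intro y hy0 hysum
    have hysplit := hsplit y
    have hyF : ∑ a : {v // v ∉ C}, y a.1 = 0 :=
      Finset.sum_eq_zero fun a _ => hy0 a.1 a.2
    have hyC : ∑ a : {v // v ∈ C}, y a.1 = 0 := by
      rw [hysum, hyF, add_zero] at hysplit
      exact hysplit.symm
    show ∑ v, y v * u v = ∑ a : {v // v ∈ C}, y a.1 * (SCd *ᵥ xC) a
    rw [hsplit fun v => y v * u v]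
    have h2 : ∑ a : {v // v ∉ C}, y a.1 * u a.1 = 0 :=
      Finset.sum_eq_zero fun a _ => by rw [hy0 a.1 a.2, zero_mul]
    rw [h2, add_zero]
    calc ∑ a : {v // v ∈ C}, y a.1 * u a.1
        = ∑ a : {v // v ∈ C}, (y a.1 * (SCd *ᵥ xC) a + y a.1 * c) :=
          Finset.sum_congr rfl fun a _ => by rw [show u a.1 = uC a from rfl, hpart1 a]; ring
      _ = ∑ a : {v // v ∈ C}, y a.1 * (SCd *ᵥ xC) a + (∑ a : {v // v ∈ C}, y a.1) * c := by
          rw [Finset.sum_add_distrib, Finset.sum_mul]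
      _ = ∑ a : {v // v ∈ C}, y a.1 * (SCd *ᵥ xC) a := by rw [hyC, zero_mul, add_zero]
end

section
/- Let C ⊆ V be nonempty, let v ∈ V∖C, and let d ∈ ℝ^V. Identifying π^C(d) ∈ ℝ^C and π^C(χ_v) ∈ ℝ^C with their zero-paddings in ℝ^{C∪{v}}, and letting χ_v ∈ ℝ^{C∪{v}} denote the indicator vector of v, one has π^{C∪{v}}(d) = π^C(d) + [π^{C∪{v}}(d)]_v · (χ_v − π^C(χ_v)). -/
open Matrix

open Classical in
/-- The projection `π^C(d) = d_C − L_CF L_FF⁻¹ d_F` of a demand vector onto a terminal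
set `C`, viewed as a vector on all of `V` by zero-padding outside `C`. -/
noncomputable def proj {V : Type*} [Fintype V] [DecidableEq V]
    (L : Matrix V V ℝ) (C : Set V) (d : V → ℝ) : V → ℝ :=
  fun v =>
    if h : v ∈ C then
      d v -
        ((Matrix.of (fun (a : {v // v ∈ C}) (b : {v // v ∉ C}) => L a.1 b.1) *
            (Matrix.of (fun (a b : {v // v ∉ C}) => L a.1 b.1))⁻¹) *ᵥ
          fun b : {v // v ∉ C} => d b.1) ⟨v, h⟩
    else 0

section Aux

open Classical

set_option linter.unusedSectionVars false

variable {V E : Type*} [Fintype V] [Fintype E] [DecidableEq V] [DecidableEq E]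

/-- Zero-padding of a vector on the complement of `C`. -/
noncomputable def ext0 (C : Set V) (x : {u // u ∉ C} → ℝ) : V → ℝ :=
  fun w => if h : w ∉ C then x ⟨w, h⟩ else 0

lemma sum_ext0 (C : Set V) (x : {u // u ∉ C} → ℝ) (f : V → ℝ) :
    (∑ b, f b * ext0 C x b) = ∑ b : {u // u ∉ C}, f b.1 * x b := by
  rw [← Fintype.sum_subtype_add_sum_subtype (· ∉ C) (fun b => f b * ext0 C x b)]
  have h1 : ∀ b : {u // u ∉ C}, f b.1 * ext0 C x b.1 = f b.1 * x b := by
    intro b; simp [ext0, b.2]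
  have h2 : ∀ b : {u // ¬ u ∉ C}, f b.1 * ext0 C x b.1 = 0 := by
    intro b; simp [ext0, b.2]
  rw [Finset.sum_congr rfl fun b _ => h1 b, Finset.sum_eq_zero fun b _ => h2 b, add_zero]

lemma mulVec_ext0 (L : Matrix V V ℝ) (C : Set V) (x : {u // u ∉ C} → ℝ) (a : V) :
    (L *ᵥ ext0 C x) a = ∑ b : {u // u ∉ C}, L a b.1 * x b := by
  simpa [Matrix.mulVec, dotProduct] using sum_ext0 C x (fun b => L a b)

variable (r : E → ℝ) (hr : ∀ e, 0 < r e) (B : Matrix E V ℝ) (L : Matrix V V ℝ)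
    (hL : L = Bᵀ * Matrix.diagonal (fun e => (r e)⁻¹) * B)
    (hconn : ∀ x : V → ℝ, L *ᵥ x = 0 → ∀ v w : V, x v = x w)

include hr hL hconn in
lemma key (C : Set V) (hC : C.Nonempty) (g : V → ℝ)
    (hg0 : ∀ c ∈ C, g c = 0) (hgL : ∀ a, a ∉ C → (L *ᵥ g) a = 0) : g = 0 := by
  have hq : ∀ a, g a * (L *ᵥ g) a = 0 := by
    intro a
    by_cases h : a ∈ C
    · rw [hg0 a h, zero_mul]
    · rw [hgL a h, mul_zero]
  have hdot : g ⬝ᵥ (L *ᵥ g) = 0 := Finset.sum_eq_zero fun a _ => hq a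
  have h2 : g ⬝ᵥ (L *ᵥ g) = ∑ e, (r e)⁻¹ * ((B *ᵥ g) e * (B *ᵥ g) e) := by
    rw [hL, ← Matrix.mulVec_mulVec, ← Matrix.mulVec_mulVec, Matrix.dotProduct_mulVec,
      Matrix.vecMul_transpose]
    simp [Matrix.mulVec_diagonal, dotProduct, mul_comm, mul_left_comm]
  have hBg : B *ᵥ g = 0 := by
    funext e
    have hnn : ∀ e ∈ Finset.univ, (0:ℝ) ≤ (r e)⁻¹ * ((B *ᵥ g) e * (B *ᵥ g) e) :=
      fun e _ => mul_nonneg (inv_nonneg.mpr (hr e).le) (mul_self_nonneg _)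
    have hz := (Finset.sum_eq_zero_iff_of_nonneg hnn).mp (by rw [← h2, hdot])
    have he := hz e (Finset.mem_univ e)
    rcases mul_eq_zero.mp he with h | h
    · exact absurd h (inv_ne_zero (hr e).ne')
    · simpa using mul_self_eq_zero.mp h
  have hLg : L *ᵥ g = 0 := by
    rw [hL, ← Matrix.mulVec_mulVec, ← Matrix.mulVec_mulVec, hBg]
    simp
  obtain ⟨c, hc⟩ := hC
  funext w
  exact (hconn g hLg w c).trans (hg0 c hc)

include hr hL hconn in
lemma M_unit (C : Set V) (hC : C.Nonempty) :
    IsUnit (Matrix.of (fun (a b : {u // u ∉ C}) => L a.1 b.1)).det := by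
  rw [isUnit_iff_ne_zero]
  intro hdet
  obtain ⟨x, hx0, hx⟩ := Matrix.exists_mulVec_eq_zero_iff.mpr hdet
  have hg0 : ∀ c ∈ C, ext0 C x c = 0 := by
    intro c hc; simp [ext0, hc]
  have hgL : ∀ a, a ∉ C → (L *ᵥ ext0 C x) a = 0 := by
    intro a ha
    rw [mulVec_ext0]
    have := congrFun hx ⟨a, ha⟩
    simpa [Matrix.mulVec, dotProduct] using this
  have hez := key r hr B L hL hconn C hC (ext0 C x) hg0 hgL
  apply hx0
  funext b
  have := congrFun hez b.1
  simpa [ext0, b.2] using this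

include hr hL hconn in
lemma exists_solver (C : Set V) (hC : C.Nonempty) (d : V → ℝ) :
    ∃ g : V → ℝ, (∀ c ∈ C, g c = 0) ∧ (∀ a, a ∉ C → (L *ᵥ g) a = d a) := by
  set M := Matrix.of (fun (a b : {u // u ∉ C}) => L a.1 b.1) with hM
  refine ⟨ext0 C (M⁻¹ *ᵥ fun b : {u // u ∉ C} => d b.1), ?_, ?_⟩
  · intro c hc; simp [ext0, hc]
  · intro a ha
    rw [mulVec_ext0]
    have : (∑ b : {u // u ∉ C}, L a b.1 * (M⁻¹ *ᵥ fun b : {u // u ∉ C} => d b.1) b)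
        = (M *ᵥ (M⁻¹ *ᵥ fun b : {u // u ∉ C} => d b.1)) ⟨a, ha⟩ := by
      simp [Matrix.mulVec, dotProduct, hM]
    rw [this, Matrix.mulVec_mulVec, Matrix.mul_nonsing_inv _ (M_unit r hr B L hL hconn C hC),
      Matrix.one_mulVec]

include hr hL hconn in
lemma proj_eq (C : Set V) (hC : C.Nonempty) (d : V → ℝ) (g : V → ℝ)
    (hg0 : ∀ c ∈ C, g c = 0) (hg1 : ∀ a, a ∉ C → (L *ᵥ g) a = d a) :
    ∀ w, w ∈ C → proj L C d w = d w - (L *ᵥ g) w := by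
  set M := Matrix.of (fun (a b : {u // u ∉ C}) => L a.1 b.1) with hM
  set x0 : {u // u ∉ C} → ℝ := M⁻¹ *ᵥ fun b : {u // u ∉ C} => d b.1 with hx0
  set g0 := ext0 C x0 with hg0def
  have hg00 : ∀ c ∈ C, g0 c = 0 := by intro c hc; simp [hg0def, ext0, hc]
  have hg01 : ∀ a, a ∉ C → (L *ᵥ g0) a = d a := by
    intro a ha
    rw [hg0def, mulVec_ext0]
    have : (∑ b : {u // u ∉ C}, L a b.1 * x0 b) = (M *ᵥ x0) ⟨a, ha⟩ := by
      simp [Matrix.mulVec, dotProduct, hM]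
    rw [this, hx0, Matrix.mulVec_mulVec, Matrix.mul_nonsing_inv _ (M_unit r hr B L hL hconn C hC),
      Matrix.one_mulVec]
  have huniq : g = g0 := by
    have hdz : g - g0 = 0 := by
      apply key r hr B L hL hconn C hC
      · intro c hc; simp [hg0 c hc, hg00 c hc]
      · intro a ha
        rw [Matrix.mulVec_sub]
        simp [hg1 a ha, hg01 a ha]
    exact sub_eq_zero.mp hdz
  intro w hw
  have hproj : proj L C d w = d w -
      ((Matrix.of (fun (a : {u // u ∈ C}) (b : {u // u ∉ C}) => L a.1 b.1) * M⁻¹) *ᵥ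
        fun b : {u // u ∉ C} => d b.1) ⟨w, hw⟩ := by
    simp [proj, hw, hM]
  rw [hproj, huniq]
  congr 1
  rw [← Matrix.mulVec_mulVec, hg0def, mulVec_ext0]
  simp [Matrix.mulVec, dotProduct, hx0]

end Aux

/-- Fact `projchange`: adding a vertex `v ∉ C` to the terminal set
updates the projection by
`π^{C∪{v}}(d) = π^C(d) + [π^{C∪{v}}(d)]_v · (χ_v − π^C(χ_v))`,
all vectors being identified with their zero-paddings on `V`. -/
theorem proj_insert_terminal {V E : Type*} [Fintype V] [Fintype E] [DecidableEq V]
    [DecidableEq E] [Nonempty E]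
    (head tail : E → V) (s t : V) (hst : s ≠ t)
    (r : E → ℝ) (hr : ∀ e, 0 < r e)
    (B : Matrix E V ℝ)
    (hB : ∀ e v, B e v = (if v = head e then (1 : ℝ) else 0) - (if v = tail e then 1 else 0))
    (L : Matrix V V ℝ)
    (hL : L = Bᵀ * Matrix.diagonal (fun e => (r e)⁻¹) * B)
    (hconn : ∀ x : V → ℝ, L *ᵥ x = 0 → ∀ v w : V, x v = x w)
    (C : Set V) (hC : C.Nonempty) (v : V) (hv : v ∉ C) (d : V → ℝ) :
    ∀ w : V,
      proj L (insert v C) d w =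
        proj L C d w +
          proj L (insert v C) d v *
            ((if w = v then (1 : ℝ) else 0) -
              proj L C (fun u => if u = v then (1 : ℝ) else 0) w) := by
  classical
  set χv : V → ℝ := fun u => if u = v then (1 : ℝ) else 0 with hχv
  have hC' : (insert v C).Nonempty := ⟨v, Set.mem_insert v C⟩
  obtain ⟨g', hg'0, hg'1⟩ := exists_solver r hr B L hL hconn (insert v C) hC' d
  obtain ⟨gv, hgv0, hgv1⟩ := exists_solver r hr B L hL hconn C hC χv
  set α := proj L (insert v C) d v with hαdef
  have hproj' := proj_eq r hr B L hL hconn (insert v C) hC' d g' hg'0 hg'1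
  have hα : α = d v - (L *ᵥ g') v := hproj' v (Set.mem_insert v C)
  -- the combined vector solves the (C, d) problem
  set h : V → ℝ := g' + α • gv with hh
  have hh0 : ∀ c ∈ C, h c = 0 := by
    intro c hc
    simp [hh, hg'0 c (Set.mem_insert_of_mem v hc), hgv0 c hc]
  have hh1 : ∀ a, a ∉ C → (L *ᵥ h) a = d a := by
    intro a ha
    have hsplit : (L *ᵥ h) a = (L *ᵥ g') a + α * (L *ᵥ gv) a := by
      simp [hh, Matrix.mulVec_add, Matrix.mulVec_smul]
    by_cases hav : a = v
    · subst hav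
      rw [hsplit, hgv1 a ha]
      have h1 : χv a = 1 := by simp [hχv]
      rw [h1, hα]
      ring
    · have ha' : a ∉ insert v C := by
        simp [Set.mem_insert_iff, hav, ha]
      rw [hsplit, hg'1 a ha', hgv1 a ha]
      have : χv a = 0 := by simp [hχv, hav]
      rw [this]; ring
  have hprojC := proj_eq r hr B L hL hconn C hC d h hh0 hh1
  have hprojχ := proj_eq r hr B L hL hconn C hC χv gv hgv0 hgv1
  intro w
  by_cases hw : w ∈ C
  · have hwv : w ≠ v := fun h => hv (h ▸ hw)
    have hLh : (L *ᵥ h) w = (L *ᵥ g') w + α * (L *ᵥ gv) w := by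
      simp [hh, Matrix.mulVec_add, Matrix.mulVec_smul]
    rw [hproj' w (Set.mem_insert_of_mem v hw), hprojC w hw, hprojχ w hw, hLh]
    have hχw : χv w = 0 := by simp [hχv, hwv]
    rw [hχw, if_neg hwv]
    ring
  · by_cases hwv : w = v
    · subst hwv
      have h1 : proj L C d w = 0 := by simp [proj, hw]
      have h2 : proj L C χv w = 0 := by simp [proj, hw]
      rw [h1, h2, if_pos rfl]
      ring
    · have hw' : w ∉ insert v C := by simp [Set.mem_insert_iff, hwv, hw]
      have h0 : proj L (insert v C) d w = 0 := by simp [proj, hw']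
      have h1 : proj L C d w = 0 := by simp [proj, hw]
      have h2 : proj L C χv w = 0 := by simp [proj, hw]
      rw [h0, h1, h2, if_neg hwv]
      ring
end

section
/- Let X₁, …, X_n be mutually independent real random variables such that each X_i takes values in the two-element set {0, a_i} for some real a_i with |a_i| ≤ M, where M > 0. Let S = X₁ + ⋯ + X_n, and let t, E > 0 satisfy t ≤ E and Σ_{i=1}^n |𝔼[X_i]| ≤ E. Then ℙ(|S − 𝔼[S]| > t) ≤ 2 exp(−t² / (6 E M)). -/
open MeasureTheory ProbabilityTheory Real

/-- A two-point valued random variable with values in `{0, a}` is bounded, hence integrable. -/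
lemma two_point_integrable {Ω : Type*} [MeasurableSpace Ω]
    (μ : Measure Ω) [IsProbabilityMeasure μ] {X : Ω → ℝ} {a M : ℝ} (ha : |a| ≤ M)
    (hr : ∀ ω, X ω = 0 ∨ X ω = a) (hmeas : Measurable X) : Integrable X μ := by
  refine (integrable_const M).mono' hmeas.aestronglyMeasurable (ae_of_all _ fun ω => ?_)
  rcases hr ω with h | h <;> simp [h, Real.norm_eq_abs, ha]
  exact (abs_nonneg a).trans ha

lemma two_point_exp_integrable {Ω : Type*} [MeasurableSpace Ω]
    (μ : Measure Ω) [IsProbabilityMeasure μ] {X : Ω → ℝ} {a M : ℝ} (ha : |a| ≤ M)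
    (hr : ∀ ω, X ω = 0 ∨ X ω = a) (hmeas : Measurable X) (s : ℝ) :
    Integrable (fun ω => Real.exp (s * X ω)) μ := by
  refine (integrable_const (Real.exp (|s| * M))).mono'
    ((hmeas.const_mul s).exp).aestronglyMeasurable (ae_of_all _ fun ω => ?_)
  rw [Real.norm_eq_abs, Real.abs_exp, Real.exp_le_exp]
  calc s * X ω ≤ |s * X ω| := le_abs_self _
    _ = |s| * |X ω| := abs_mul _ _
    _ ≤ |s| * M := by
        refine mul_le_mul_of_nonneg_left ?_ (abs_nonneg s)
        rcases hr ω with h | h <;> simp [h]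
        · exact (abs_nonneg a).trans ha
        · exact ha

/-- mgf bound for a `{0,a}`-valued random variable. -/
lemma two_point_mgf_le {Ω : Type*} [MeasurableSpace Ω]
    (μ : Measure Ω) [IsProbabilityMeasure μ] {X : Ω → ℝ} {a M s : ℝ} (hM : 0 < M)
    (ha : |a| ≤ M) (hr : ∀ ω, X ω = 0 ∨ X ω = a) (hmeas : Measurable X)
    (hs : |s| * M ≤ 1) :
    mgf X μ s ≤ Real.exp (s * (∫ ω, X ω ∂μ) + s ^ 2 * M * |∫ ω, X ω ∂μ|) := by
  by_cases ha0 : a = 0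
  · have hX0 : ∀ ω, X ω = 0 := fun ω => (hr ω).elim id (fun h => by rw [h, ha0])
    have hXf : X = fun _ => (0 : ℝ) := funext hX0
    simp [mgf, hXf]
  -- a ≠ 0
  set m := ∫ ω, X ω ∂μ with hm
  have hXint : Integrable X μ := two_point_integrable μ ha hr hmeas
  set c : ℝ := (Real.exp (s * a) - 1) / a with hc
  have hkey : ∀ ω, Real.exp (s * X ω) = 1 + c * X ω := by
    intro ω
    rcases hr ω with h | h
    · simp [h]
    · rw [h, hc]
      field_simp
      ring
  have hmgf : mgf X μ s = 1 + c * m := by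
    rw [mgf]
    calc ∫ ω, Real.exp (s * X ω) ∂μ = ∫ ω, (1 + c * X ω) ∂μ := by
          exact integral_congr_ae (ae_of_all _ hkey)
      _ = 1 + c * m := by
          rw [integral_add (integrable_const 1) (hXint.const_mul c), integral_const,
            integral_const_mul]
          simp [hm]
  -- sign of m/a
  have hp : 0 ≤ m / a := by
    rcases lt_or_gt_of_ne ha0 with hlt | hgt
    · have hmn : m ≤ 0 := by
        refine integral_nonpos (fun ω => ?_)
        rcases hr ω with h | h <;> simp [h, hlt.le]
      exact div_nonneg_iff.mpr (Or.inr ⟨hmn, hlt.le⟩)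
    · have hmn : 0 ≤ m := by
        refine integral_nonneg (fun ω => ?_)
        rcases hr ω with h | h <;> simp [h, hgt.le]
      exact div_nonneg hmn hgt.le
  have habsm : |m| = (m / a) * |a| := by
    have : m = (m / a) * a := (div_mul_cancel₀ m ha0).symm
    rw [this, abs_mul, abs_of_nonneg hp]
    rw [← this]
  -- bound on exp(u) - 1 - u with u = s * a
  set u : ℝ := s * a with hu
  have hu1 : |u| ≤ 1 := by
    rw [hu, abs_mul]
    calc |s| * |a| ≤ |s| * M := mul_le_mul_of_nonneg_left ha (abs_nonneg s)
      _ ≤ 1 := hs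
  have hD : Real.exp u - 1 - u ≤ u ^ 2 := by
    have h2 := Real.exp_bound hu1 (n := 2) (by norm_num)
    have hsum2 : ∑ i ∈ Finset.range 2, u ^ i / (Nat.factorial i) = 1 + u := by
      simp [Finset.sum_range_succ]
    rw [hsum2] at h2
    have : Real.exp u - (1 + u) ≤ |u| ^ 2 * ((2 + 1 : ℕ) / ((Nat.factorial 2) * 2)) :=
      (le_abs_self _).trans h2
    have h34 : (|u| : ℝ) ^ 2 * ((2 + 1 : ℕ) / ((Nat.factorial 2) * 2)) = (3 / 4) * u ^ 2 := by
      rw [sq_abs]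
      norm_num [Nat.factorial]
      ring
    rw [h34] at this
    nlinarith [sq_nonneg u]
  -- key inequality : c * m ≤ s * m + s ^ 2 * M * |m|
  have hcm : c * m ≤ s * m + s ^ 2 * M * |m| := by
    have h1 : c * m - s * m = (m / a) * (Real.exp u - 1 - u) := by
      rw [hc, hu]
      field_simp
    have h2 : (m / a) * (Real.exp u - 1 - u) ≤ (m / a) * u ^ 2 :=
      mul_le_mul_of_nonneg_left hD hp
    have h3 : (m / a) * u ^ 2 ≤ s ^ 2 * M * |m| := by
      have haa : a ^ 2 = |a| * |a| := by rw [sq, ← abs_mul_abs_self]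
      have heq : (m / a) * u ^ 2 = s ^ 2 * ((m / a * |a|) * |a|) := by
        rw [hu, mul_pow, haa]; ring
      rw [heq, ← habsm]
      have : |m| * |a| ≤ M * |m| := by
        calc |m| * |a| ≤ |m| * M := mul_le_mul_of_nonneg_left ha (abs_nonneg m)
          _ = M * |m| := mul_comm _ _
      nlinarith [sq_nonneg s]
    linarith
  rw [hmgf]
  calc 1 + c * m ≤ Real.exp (c * m) := by linarith [Real.add_one_le_exp (c * m)]
    _ ≤ Real.exp (s * m + s ^ 2 * M * |m|) := Real.exp_le_exp.mpr hcm

/-- Corollary of Bernstein's inequality: if `X₁, …, Xₙ` are mutually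
independent random variables, each valued in `{0, aᵢ}` with `|aᵢ| ≤ M`, and `t, E > 0`
satisfy `t ≤ E` and `Σᵢ |𝔼[Xᵢ]| ≤ E`, then
`μpr(|S − 𝔼[S]| > t) ≤ 2 exp(−t² / (6 E M))` for `S = Σᵢ Xᵢ`. -/
theorem bernstein_corollary {Ω : Type*} [MeasurableSpace Ω]
    (μpr : Measure Ω) [IsProbabilityMeasure μpr]
    (n : ℕ) (X : Fin n → Ω → ℝ) (a : Fin n → ℝ) (M : ℝ) (hM : 0 < M)
    (ha : ∀ i, |a i| ≤ M)
    (hrange : ∀ i ω, X i ω = 0 ∨ X i ω = a i)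
    (hmeas : ∀ i, Measurable (X i))
    (hindep : iIndepFun X μpr)
    (t E : ℝ) (ht : 0 < t) (hE : 0 < E) (htE : t ≤ E)
    (hsum : ∑ i, |∫ ω, X i ω ∂μpr| ≤ E) :
    μpr {ω | t < |(∑ i, X i ω) - ∫ ω', (∑ i, X i ω') ∂μpr|} ≤
      ENNReal.ofReal (2 * Real.exp (-t ^ 2 / (6 * E * M))) := by
  classical
  set lam : ℝ := t / (2 * M * E) with hlam
  have hlampos : 0 < lam := div_pos ht (by positivity)
  have hlamM : |lam| * M ≤ 1 := by
    rw [abs_of_pos hlampos, hlam]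
    rw [div_mul_eq_mul_div, div_le_one (by positivity)]
    nlinarith
  have hlamM' : |(-lam)| * M ≤ 1 := by rwa [abs_neg]
  set m : Fin n → ℝ := fun i => ∫ ω, X i ω ∂μpr with hm
  have hXint : ∀ i, Integrable (X i) μpr := fun i =>
    two_point_integrable μpr (ha i) (hrange i) (hmeas i)
  have hmS : (∫ ω', (∑ i, X i ω') ∂μpr) = ∑ i, m i := by
    rw [integral_finset_sum _ (fun i _ => hXint i)]
  set S : Ω → ℝ := ∑ i, X i with hS
  have hSω : ∀ ω, S ω = ∑ i, X i ω := fun ω => by simp [hS]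
  have hexpint : ∀ (s : ℝ), Integrable (fun ω => Real.exp (s * S ω)) μpr := by
    intro s
    exact hindep.integrable_exp_mul_sum hmeas
      (fun i _ => two_point_exp_integrable μpr (ha i) (hrange i) (hmeas i) s)
  -- mgf bound for the sum, for any s with |s| * M ≤ 1
  have hmgfS : ∀ (s : ℝ), |s| * M ≤ 1 →
      mgf S μpr s ≤ Real.exp (s * (∑ i, m i) + s ^ 2 * M * E) := by
    intro s hsM
    rw [hS, hindep.mgf_sum hmeas]
    calc (∏ i, mgf (X i) μpr s)
        ≤ ∏ i, Real.exp (s * m i + s ^ 2 * M * |m i|) := by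
          refine Finset.prod_le_prod (fun i _ => mgf_nonneg) (fun i _ => ?_)
          exact two_point_mgf_le μpr hM (ha i) (hrange i) (hmeas i) hsM
      _ = Real.exp (∑ i, (s * m i + s ^ 2 * M * |m i|)) := (Real.exp_sum _ _).symm
      _ ≤ Real.exp (s * (∑ i, m i) + s ^ 2 * M * E) := by
          rw [Real.exp_le_exp, Finset.sum_add_distrib, ← Finset.mul_sum, ← Finset.mul_sum]
          have : s ^ 2 * M * (∑ i, |m i|) ≤ s ^ 2 * M * E :=
            mul_le_mul_of_nonneg_left hsum (by positivity)
          linarith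
  -- the common tail bound
  have hexpbound : Real.exp (-lam * t + lam ^ 2 * M * E) ≤ Real.exp (-t ^ 2 / (6 * E * M)) := by
    rw [Real.exp_le_exp]
    have h1 : -lam * t + lam ^ 2 * M * E = -(t ^ 2 / (4 * M * E)) := by
      rw [hlam]; field_simp; ring
    rw [h1, neg_div, neg_le_neg_iff]
    refine div_le_div_of_nonneg_left (sq_nonneg t) (by positivity) (by nlinarith)
  -- upper tail
  have hup : (μpr {ω | (∑ i, m i) + t ≤ S ω}).toReal ≤ Real.exp (-t ^ 2 / (6 * E * M)) := by
    calc (μpr {ω | (∑ i, m i) + t ≤ S ω}).toReal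
        ≤ Real.exp (-lam * ((∑ i, m i) + t)) * mgf S μpr lam :=
          measure_ge_le_exp_mul_mgf _ hlampos.le (hexpint lam)
      _ ≤ Real.exp (-lam * ((∑ i, m i) + t)) *
            Real.exp (lam * (∑ i, m i) + lam ^ 2 * M * E) := by
          exact mul_le_mul_of_nonneg_left (hmgfS lam hlamM) (Real.exp_pos _).le
      _ = Real.exp (-lam * t + lam ^ 2 * M * E) := by
          rw [← Real.exp_add]; ring_nf
      _ ≤ Real.exp (-t ^ 2 / (6 * E * M)) := hexpbound
  -- lower tail
  have hlow : (μpr {ω | S ω ≤ (∑ i, m i) - t}).toReal ≤ Real.exp (-t ^ 2 / (6 * E * M)) := by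
    calc (μpr {ω | S ω ≤ (∑ i, m i) - t}).toReal
        ≤ Real.exp (-(-lam) * ((∑ i, m i) - t)) * mgf S μpr (-lam) :=
          measure_le_le_exp_mul_mgf _ (neg_nonpos.mpr hlampos.le) (hexpint (-lam))
      _ ≤ Real.exp (lam * ((∑ i, m i) - t)) *
            Real.exp ((-lam) * (∑ i, m i) + (-lam) ^ 2 * M * E) := by
          rw [neg_neg]
          exact mul_le_mul_of_nonneg_left (hmgfS (-lam) hlamM') (Real.exp_pos _).le
      _ = Real.exp (-lam * t + lam ^ 2 * M * E) := by
          rw [← Real.exp_add]; ring_nf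
      _ ≤ Real.exp (-t ^ 2 / (6 * E * M)) := hexpbound
  -- combine
  have hsub : {ω | t < |(∑ i, X i ω) - ∫ ω', (∑ i, X i ω') ∂μpr|} ⊆
      {ω | (∑ i, m i) + t ≤ S ω} ∪ {ω | S ω ≤ (∑ i, m i) - t} := by
    intro ω hω
    simp only [Set.mem_setOf_eq, hmS] at hω
    rcases lt_abs.mp hω with h | h
    · left
      simp only [Set.mem_setOf_eq, hSω]
      linarith
    · right
      simp only [Set.mem_setOf_eq, hSω]
      linarith
  calc μpr {ω | t < |(∑ i, X i ω) - ∫ ω', (∑ i, X i ω') ∂μpr|}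
      ≤ μpr ({ω | (∑ i, m i) + t ≤ S ω} ∪ {ω | S ω ≤ (∑ i, m i) - t}) := measure_mono hsub
    _ ≤ μpr {ω | (∑ i, m i) + t ≤ S ω} + μpr {ω | S ω ≤ (∑ i, m i) - t} := measure_union_le _ _
    _ = ENNReal.ofReal (μpr {ω | (∑ i, m i) + t ≤ S ω}).toReal +
        ENNReal.ofReal (μpr {ω | S ω ≤ (∑ i, m i) - t}).toReal := by
        rw [ENNReal.ofReal_toReal (measure_ne_top _ _), ENNReal.ofReal_toReal (measure_ne_top _ _)]
    _ ≤ ENNReal.ofReal (Real.exp (-t ^ 2 / (6 * E * M))) +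
        ENNReal.ofReal (Real.exp (-t ^ 2 / (6 * E * M))) := by
        exact add_le_add (ENNReal.ofReal_le_ofReal hup) (ENNReal.ofReal_le_ofReal hlow)
    _ = ENNReal.ofReal (2 * Real.exp (-t ^ 2 / (6 * E * M))) := by
        rw [← ENNReal.ofReal_add (Real.exp_pos _).le (Real.exp_pos _).le]
        congr 1; ring
end

section
/- Suppose G is preconditioned and μ ∈ (0, F*]. Then the central path flow f(μ) satisfies u(f(μ))_e ≥ μ/(14m) for every preconditioning edge e. Consequently, r(f(μ))_e ≤ 400 m²/μ² for every preconditioning edge e, and in the graph with resistances r(f(μ)) the energy of a unit s-t electric flow is at most 400 m/μ², i.e. χ_{st}ᵀ L(f(μ))† χ_{st} ≤ 400 m/μ². -/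
open Matrix

/-- Resistances induced by a flow: `r(f)_e = u⁺(f)_e⁻² + u⁻(f)_e⁻²`. -/
noncomputable def resist {E : Type*} (u f : E → ℝ) (e : E) : ℝ :=
  ((u e - f e) ^ 2)⁻¹ + ((u e + f e) ^ 2)⁻¹

/-- KKT characterization of the central path flow with parameter `μ`: a strictly
feasible flow routing `F* − μ` units from `s` to `t` admitting dual potentials. -/
def IsCentralFlow {V E : Type*} [Fintype V] [Fintype E]
    (B : Matrix E V ℝ) (u : E → ℝ) (χst : V → ℝ) (Fstar μ : ℝ) (f : E → ℝ) : Prop :=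
  (∀ e, |f e| < u e) ∧ Bᵀ *ᵥ f = (Fstar - μ) • χst ∧
    ∃ φ : V → ℝ, ∀ e, (B *ᵥ φ) e = (u e - f e)⁻¹ - (u e + f e)⁻¹

/-- `G` is preconditioned with parameter `U` and set of preconditioning edges `P`:
each edge in `P` joins `s` and `t` and has capacity `2U`, every other edge has capacity
at most `U`, and at least half of all edges lie in `P`. -/
def Preconditioned {V E : Type*} [Fintype E] (head tail : E → V) (s t : V)
    (u : E → ℝ) (U : ℝ) (P : Finset E) : Prop :=
  0 < U ∧
    (∀ e ∈ P, u e = 2 * U ∧ ((head e = s ∧ tail e = t) ∨ (head e = t ∧ tail e = s))) ∧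
    (∀ e ∉ P, u e ≤ U) ∧ Fintype.card E ≤ 2 * P.card

/-- A Moore–Penrose inverse of a symmetric real matrix is symmetric. -/
lemma mp_symm_aux {n : Type*} [Fintype n] [DecidableEq n] (M X : Matrix n n ℝ) (hM : Mᵀ = M)
    (h : IsMoorePenrose M X) : Xᵀ = X := by
  obtain ⟨h1, h2, h3, h4⟩ := h
  have p1 : M * Xᵀ * M = M := by
    calc M * Xᵀ * M = Mᵀ * Xᵀ * Mᵀ := by rw [hM]
    _ = (M * X * M)ᵀ := by simp [Matrix.transpose_mul, Matrix.mul_assoc]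
    _ = Mᵀ := by rw [h1]
    _ = M := hM
  have p3 : (M * Xᵀ)ᵀ = M * Xᵀ := by
    calc (M * Xᵀ)ᵀ = X * Mᵀ := by simp [Matrix.transpose_mul]
    _ = X * M := by rw [hM]
    _ = (X * M)ᵀ := h4.symm
    _ = Mᵀ * Xᵀ := by simp [Matrix.transpose_mul]
    _ = M * Xᵀ := by rw [hM]
  have p4 : (Xᵀ * M)ᵀ = Xᵀ * M := by
    calc (Xᵀ * M)ᵀ = Mᵀ * X := by simp [Matrix.transpose_mul]
    _ = M * X := by rw [hM]
    _ = (M * X)ᵀ := h3.symm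
    _ = Xᵀ * Mᵀ := by simp [Matrix.transpose_mul]
    _ = Xᵀ * M := by rw [hM]
  have p2 : Xᵀ * M * Xᵀ = Xᵀ := by
    calc Xᵀ * M * Xᵀ = Xᵀ * Mᵀ * Xᵀ := by rw [hM]
    _ = (X * M * X)ᵀ := by simp [Matrix.transpose_mul, Matrix.mul_assoc]
    _ = Xᵀ := by rw [h2]
  set Y := Xᵀ with hY
  have hMX : M * X = M * Y := by
    calc M * X = (M * Y * M) * X := by rw [p1]
    _ = (M * Y) * (M * X) := by rw [Matrix.mul_assoc]
    _ = (M * Y)ᵀ * (M * X)ᵀ := by rw [p3, h3]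
    _ = (Yᵀ * Mᵀ) * (Xᵀ * Mᵀ) := by simp [Matrix.transpose_mul]
    _ = Yᵀ * (Mᵀ * Xᵀ * Mᵀ) := by simp [Matrix.mul_assoc]
    _ = Yᵀ * (M * X * M)ᵀ := by simp [Matrix.transpose_mul, Matrix.mul_assoc]
    _ = Yᵀ * Mᵀ := by rw [h1]
    _ = (M * Y)ᵀ := by simp [Matrix.transpose_mul]
    _ = M * Y := p3
  have hXM : X * M = Y * M := by
    calc X * M = X * (M * Y * M) := by rw [p1]
    _ = (X * M) * (Y * M) := by simp [Matrix.mul_assoc]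
    _ = (X * M)ᵀ * (Y * M)ᵀ := by rw [h4, p4]
    _ = (Mᵀ * Xᵀ) * (Mᵀ * Yᵀ) := by simp [Matrix.transpose_mul]
    _ = (Mᵀ * Xᵀ * Mᵀ) * Yᵀ := by simp [Matrix.mul_assoc]
    _ = (M * X * M)ᵀ * Yᵀ := by simp [Matrix.transpose_mul, Matrix.mul_assoc]
    _ = Mᵀ * Yᵀ := by rw [h1]
    _ = (Y * M)ᵀ := by simp [Matrix.transpose_mul]
    _ = Y * M := p4
  calc Xᵀ = Y := rfl
  _ = Y * M * Y := p2.symm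
  _ = Y * (M * X) := by rw [Matrix.mul_assoc, hMX]
  _ = (Y * M) * X := by rw [Matrix.mul_assoc]
  _ = (X * M) * X := by rw [hXM]
  _ = X := h2

/-- Injectivity of `x ↦ (2U−x)⁻¹ − (2U+x)⁻¹` on `(−2U, 2U)`. -/
lemma pot_inj_aux (U x y : ℝ) (hx : |x| < 2*U) (hy : |y| < 2*U)
    (h : (2*U-x)⁻¹ - (2*U+x)⁻¹ = (2*U-y)⁻¹ - (2*U+y)⁻¹) : x = y := by
  rw [abs_lt] at hx hy
  have h1 : 0 < 2*U - x := by linarith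
  have h2 : 0 < 2*U + x := by linarith
  have h3 : 0 < 2*U - y := by linarith
  have h4 : 0 < 2*U + y := by linarith
  field_simp at h
  nlinarith [mul_pos h1 h2, mul_pos h3 h4, sq_nonneg (x-y), sq_nonneg (x+y)]

/-- Termwise duality bound. -/
lemma term_le_one_aux (a b g : ℝ) (ha : 0 < a) (hb : 0 < b) (hga : g ≤ a) (hgb : -b ≤ g) :
    g * (a⁻¹ - b⁻¹) ≤ 1 := by
  have key : a⁻¹ - b⁻¹ = (b - a) / (a*b) := by field_simp
  rw [key, mul_div_assoc', div_le_one (by positivity)]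
  rcases le_total a b with h | h
  · nlinarith
  · nlinarith

/-- Main residual bound on preconditioning edges. -/
lemma residual_aux (U mR μ x : ℝ) (hU : 0 < U) (hm : 1 ≤ mR) (hμ : 0 < μ)
    (hμU : μ ≤ 2*mR*U) (hx2 : |x| < 2*U) (hxU : -U ≤ x)
    (hΔ : μ * ((2*U-x)⁻¹ - (2*U+x)⁻¹) ≤ mR) :
    μ / (2*mR) ≤ min (2*U-x) (2*U+x) := by
  rw [abs_lt] at hx2
  have ha : 0 < 2*U - x := by linarith
  have hb : 0 < 2*U + x := by linarith
  have hm0 : 0 < mR := by linarith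
  have hμm : μ / (2*mR) ≤ U := by rw [div_le_iff₀ (by linarith)]; nlinarith
  rcases le_or_gt x U with h | h
  · apply le_min <;> linarith
  · have e1 : (2*U-x)⁻¹ - (2*U+x)⁻¹ = (2*x) / ((2*U-x)*(2*U+x)) := by
      field_simp; ring
    rw [e1, mul_div_assoc', div_le_iff₀ (by positivity)] at hΔ
    apply le_min
    · rw [div_le_iff₀ (by linarith)]
      nlinarith
    · linarith

lemma inv_sq_mono_aux (a c : ℝ) (hc : 0 < c) (h : c ≤ a) : (a^2)⁻¹ ≤ (c^2)⁻¹ := by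
  gcongr

/-- Energy bound for a pseudoinverse quadratic form via any feasible flow. -/
lemma energy_aux {V E : Type*} [Fintype V] [Fintype E] [DecidableEq V] [DecidableEq E]
    (B : Matrix E V ℝ) (r : E → ℝ) (hr : ∀ e, 0 < r e) (Ld : Matrix V V ℝ)
    (hLd : IsMoorePenrose (Bᵀ * Matrix.diagonal (fun e => (r e)⁻¹) * B) Ld)
    (χ : V → ℝ) (g : E → ℝ) (hg : Bᵀ *ᵥ g = χ) (C : ℝ)
    (hC : ∑ e, r e * (g e)^2 ≤ C) (hC0 : 0 ≤ C) :
    χ ⬝ᵥ (Ld *ᵥ χ) ≤ C := by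
  obtain ⟨h1, h2, h3, h4⟩ := hLd
  have hLsym : (Bᵀ * Matrix.diagonal (fun e => (r e)⁻¹) * B)ᵀ
      = Bᵀ * Matrix.diagonal (fun e => (r e)⁻¹) * B := by
    rw [Matrix.transpose_mul, Matrix.transpose_mul, Matrix.transpose_transpose,
      Matrix.diagonal_transpose, Matrix.mul_assoc]
  have hLdsym : Ldᵀ = Ld := mp_symm_aux _ Ld hLsym ⟨h1, h2, h3, h4⟩
  have key : ∀ x : V → ℝ,
      x ⬝ᵥ ((Bᵀ * Matrix.diagonal (fun e => (r e)⁻¹) * B) *ᵥ x)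
        = ∑ e, (r e)⁻¹ * ((B *ᵥ x) e)^2 := by
    intro x
    calc x ⬝ᵥ ((Bᵀ * Matrix.diagonal (fun e => (r e)⁻¹) * B) *ᵥ x)
        = x ⬝ᵥ (Bᵀ *ᵥ (Matrix.diagonal (fun e => (r e)⁻¹) *ᵥ (B *ᵥ x))) := by
          rw [Matrix.mul_assoc, ← Matrix.mulVec_mulVec, ← Matrix.mulVec_mulVec]
    _ = (B *ᵥ x) ⬝ᵥ (Matrix.diagonal (fun e => (r e)⁻¹) *ᵥ (B *ᵥ x)) := by
          rw [Matrix.dotProduct_mulVec, Matrix.vecMul_transpose]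
    _ = ∑ e, (r e)⁻¹ * ((B *ᵥ x) e)^2 := by
          simp only [dotProduct, Matrix.mulVec_diagonal]
          exact Finset.sum_congr rfl fun e _ => by ring
  have step : Ld *ᵥ ((Bᵀ * Matrix.diagonal (fun e => (r e)⁻¹) * B) *ᵥ (Ld *ᵥ χ))
      = (Ld * (Bᵀ * Matrix.diagonal (fun e => (r e)⁻¹) * B) * Ld) *ᵥ χ := by
    rw [Matrix.mulVec_mulVec, Matrix.mulVec_mulVec]
  have s1 : χ ⬝ᵥ (Ld *ᵥ χ)
      = (Ld *ᵥ χ) ⬝ᵥ ((Bᵀ * Matrix.diagonal (fun e => (r e)⁻¹) * B) *ᵥ (Ld *ᵥ χ)) := by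
    calc χ ⬝ᵥ (Ld *ᵥ χ)
        = χ ⬝ᵥ ((Ld * (Bᵀ * Matrix.diagonal (fun e => (r e)⁻¹) * B) * Ld) *ᵥ χ) := by rw [h2]
    _ = χ ⬝ᵥ (Ld *ᵥ ((Bᵀ * Matrix.diagonal (fun e => (r e)⁻¹) * B) *ᵥ (Ld *ᵥ χ))) := by
          rw [step]
    _ = (χ ᵥ* Ld) ⬝ᵥ ((Bᵀ * Matrix.diagonal (fun e => (r e)⁻¹) * B) *ᵥ (Ld *ᵥ χ)) :=
          Matrix.dotProduct_mulVec _ _ _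
    _ = (Ld *ᵥ χ) ⬝ᵥ ((Bᵀ * Matrix.diagonal (fun e => (r e)⁻¹) * B) *ᵥ (Ld *ᵥ χ)) := by
          rw [← Matrix.mulVec_transpose, hLdsym]
  have s2 : χ ⬝ᵥ (Ld *ᵥ χ) = ∑ e, g e * (B *ᵥ (Ld *ᵥ χ)) e := by
    calc χ ⬝ᵥ (Ld *ᵥ χ) = (Bᵀ *ᵥ g) ⬝ᵥ (Ld *ᵥ χ) := by rw [hg]
    _ = g ⬝ᵥ (B *ᵥ (Ld *ᵥ χ)) := by
          rw [Matrix.mulVec_transpose, ← Matrix.dotProduct_mulVec]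
    _ = ∑ e, g e * (B *ᵥ (Ld *ᵥ χ)) e := rfl
  set Q : ℝ := χ ⬝ᵥ (Ld *ᵥ χ) with hQdef
  have hQ1 : Q = ∑ e, (r e)⁻¹ * ((B *ᵥ (Ld *ᵥ χ)) e)^2 := by rw [s1, key]
  have hCS : Q^2 ≤ (∑ e, r e * (g e)^2) * Q := by
    conv_lhs => rw [s2]
    conv_rhs => rw [hQ1]
    apply Finset.sum_sq_le_sum_mul_sum_of_sq_eq_mul
    · intro e _
      exact mul_nonneg (hr e).le (sq_nonneg _)
    · intro e _
      exact mul_nonneg (inv_nonneg.mpr (hr e).le) (sq_nonneg _)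
    · intro e _
      have hrc : r e * (r e)⁻¹ = 1 := mul_inv_cancel₀ (hr e).ne'
      nlinarith [hrc]
  rcases le_or_gt Q 0 with h | h
  · exact le_trans h hC0
  · nlinarith [hCS, hC]

set_option maxHeartbeats 1000000 in
/-- Lemma `precon`/`elecenergy`: on a preconditioned graph the central
flow keeps residual capacity at least `μ/(14m)` on every preconditioning edge, hence
resistance at most `400m²/μ²` there, and the energy of the unit `s`-`t` electric flow
with resistances `r(f(μ))` is at most `400m/μ²`. -/
theorem precondition_energy_bound {V E : Type*} [Fintype V] [Fintype E] [DecidableEq V]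
    [DecidableEq E]
    (head tail : E → V) (s t : V) (hst : s ≠ t)
    (u : E → ℝ) (hu : ∀ e, 0 < u e)
    (B : Matrix E V ℝ)
    (hB : ∀ e v, B e v = (if v = head e then (1 : ℝ) else 0) - (if v = tail e then 1 else 0))
    (χst : V → ℝ)
    (hχ : χst = fun v => (if v = t then (1 : ℝ) else 0) - (if v = s then 1 else 0))
    (hconn : ∀ x : V → ℝ, (∀ e, x (head e) = x (tail e)) → ∀ v w : V, x v = x w)
    (Fstar : ℝ)
    (hFstar : IsGreatest
      {F : ℝ | ∃ f : E → ℝ, (∀ e, |f e| ≤ u e) ∧ Bᵀ *ᵥ f = F • χst} Fstar)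
    (U : ℝ) (P : Finset E) (hpre : Preconditioned head tail s t u U P)
    (μ : ℝ) (hμ0 : 0 < μ) (hμF : μ ≤ Fstar)
    (fμ : E → ℝ) (hfμ : IsCentralFlow B u χst Fstar μ fμ)
    (Ld : Matrix V V ℝ)
    (hLd : IsMoorePenrose (Bᵀ * Matrix.diagonal (fun e => (resist u fμ e)⁻¹) * B) Ld) :
    (∀ e ∈ P, μ / (14 * (Fintype.card E : ℝ)) ≤ min (u e - fμ e) (u e + fμ e)) ∧
      (∀ e ∈ P, resist u fμ e ≤ 400 * (Fintype.card E : ℝ) ^ 2 / μ ^ 2) ∧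
      χst ⬝ᵥ (Ld *ᵥ χst) ≤ 400 * (Fintype.card E : ℝ) / μ ^ 2 := by
  obtain ⟨hU, hPspec, hPout, hcard⟩ := hpre
  obtain ⟨hf1, hf2, φ, hφ⟩ := hfμ
  obtain ⟨⟨fstar, hfs1, hfs2⟩, -⟩ := hFstar
  set mR : ℝ := (Fintype.card E : ℝ) with hmR
  set k : ℝ := (P.card : ℝ) with hkdef
  -- E is nonempty (else all vertex functions would be "constant", contradicting s ≠ t)
  have hE : Nonempty E := by
    by_contra h
    rw [not_nonempty_iff] at h
    have := hconn (fun v => if v = s then 1 else 0) (fun e => (h.false e).elim) s t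
    simp [hst.symm] at this
  have hm1 : (1:ℝ) ≤ mR := by
    rw [hmR]; exact_mod_cast Nat.one_le_iff_ne_zero.mpr (Fintype.card_ne_zero)
  have hm0 : (0:ℝ) < mR := by linarith
  have hkm : mR ≤ 2 * k := by rw [hmR, hkdef]; exact_mod_cast hcard
  have hk0 : (0:ℝ) < k := by linarith
  -- positivity of residuals
  have hap : ∀ e, 0 < u e - fμ e := fun e => by have := (abs_lt.mp (hf1 e)).2; linarith
  have hbp : ∀ e, 0 < u e + fμ e := fun e => by have := (abs_lt.mp (hf1 e)).1; linarith
  have hrpos : ∀ e, 0 < resist u fμ e := fun e =>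
    add_pos (inv_pos.mpr (pow_pos (hap e) 2)) (inv_pos.mpr (pow_pos (hbp e) 2))
  -- |B e v| ≤ 1
  have hBabs : ∀ e v, |B e v| ≤ 1 := by
    intro e v; rw [hB]; split_ifs <;> norm_num
  -- u e ≤ 2U for every edge
  have hu2U : ∀ e, u e ≤ 2 * U := by
    intro e
    by_cases h : e ∈ P
    · exact (hPspec e h).1.le
    · have := hPout e h; linarith
  -- Fstar ≤ 2 mR U
  have hχs : χst s = -1 := by rw [hχ]; simp [hst]
  have hχt : χst t = 1 := by rw [hχ]; simp [hst.symm]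
  have hFle : Fstar ≤ 2 * mR * U := by
    have h1 : (Bᵀ *ᵥ fstar) s = -Fstar := by rw [hfs2]; simp [hχs]
    have h2 : (Bᵀ *ᵥ fstar) s = ∑ e, B e s * fstar e := by
      simp [Matrix.mulVec, dotProduct, Matrix.transpose_apply]
    have h3 : ∀ e, -(2*U) ≤ B e s * fstar e := by
      intro e
      have := abs_mul (B e s) (fstar e)
      have h4 : |B e s * fstar e| ≤ u e := by
        rw [abs_mul]
        calc |B e s| * |fstar e| ≤ 1 * u e := by
              apply mul_le_mul (hBabs e s) (hfs1 e) (abs_nonneg _) zero_le_one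
        _ = u e := one_mul _
      have := (abs_le.mp h4).1
      have := hu2U e
      linarith
    have h5 : -(mR * (2*U)) ≤ ∑ e, B e s * fstar e := by
      calc -(mR * (2*U)) = ∑ _e : E, -(2*U) := by
            rw [Finset.sum_const, Finset.card_univ, nsmul_eq_mul, hmR]; ring
      _ ≤ ∑ e, B e s * fstar e := Finset.sum_le_sum fun e _ => h3 e
    rw [h2] at h1
    nlinarith [h5, h1]
  have hμ2mU : μ ≤ 2 * mR * U := le_trans hμF hFle
  -- row formula for B *ᵥ φ
  have hBφ : ∀ e, φ (head e) - φ (tail e) = (u e - fμ e)⁻¹ - (u e + fμ e)⁻¹ := by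
    intro e
    have h1 : (B *ᵥ φ) e = φ (head e) - φ (tail e) := by
      simp [Matrix.mulVec, dotProduct, hB, sub_mul, Finset.sum_sub_distrib, ite_mul]
    rw [← h1]; exact hφ e
  -- potential gap bound : μ (φ t − φ s) ≤ mR
  have hΔle : μ * (φ t - φ s) ≤ mR := by
    have hA : Bᵀ *ᵥ (fstar - fμ) = μ • χst := by
      rw [Matrix.mulVec_sub, hfs2, hf2, ← sub_smul]; ring_nf
    have hS1 : (fstar - fμ) ⬝ᵥ (B *ᵥ φ) = μ * (φ t - φ s) := by
      rw [Matrix.dotProduct_mulVec, ← Matrix.mulVec_transpose, hA]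
      rw [hχ]
      simp only [dotProduct, Pi.smul_apply, smul_eq_mul, sub_mul, mul_sub, ite_mul, mul_ite,
        mul_one, mul_zero, one_mul, zero_mul]
      rw [Finset.sum_sub_distrib]
      simp [Finset.sum_ite_eq']
    have hS2 : (fstar - fμ) ⬝ᵥ (B *ᵥ φ) ≤ mR := by
      calc (fstar - fμ) ⬝ᵥ (B *ᵥ φ) = ∑ e, (fstar e - fμ e) * ((u e - fμ e)⁻¹ - (u e + fμ e)⁻¹) := by
            apply Finset.sum_congr rfl
            intro e _
            rw [hφ e]; rfl
      _ ≤ ∑ _e : E, 1 := by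
            apply Finset.sum_le_sum
            intro e _
            apply term_le_one_aux _ _ _ (hap e) (hbp e)
            · have := (abs_le.mp (hfs1 e)).2; linarith
            · have := (abs_le.mp (hfs1 e)).1; linarith
      _ = mR := by rw [Finset.sum_const, Finset.card_univ, nsmul_eq_mul, hmR, mul_one]
    linarith
  -- the "toward t" flow on each preconditioning edge
  set X : E → ℝ := fun e => if head e = t then fμ e else - fμ e with hXdef
  have hXΔ : ∀ e ∈ P, (2*U - X e)⁻¹ - (2*U + X e)⁻¹ = φ t - φ s := by
    intro e he
    obtain ⟨hue, hor⟩ := hPspec e he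
    have hb := hBφ e
    rw [hue] at hb
    rcases hor with ⟨hh, ht'⟩ | ⟨hh, ht'⟩
    · -- head = s, tail = t : X e = -fμ e
      have hX : X e = - fμ e := by simp [hXdef, hh, hst]
      rw [hh, ht'] at hb
      rw [hX]
      have e1 : 2*U - -fμ e = 2*U + fμ e := by ring
      have e2 : 2*U + -fμ e = 2*U - fμ e := by ring
      rw [e1, e2]; linarith
    · -- head = t, tail = s : X e = fμ e
      have hX : X e = fμ e := by simp [hXdef, hh]
      rw [hh, ht'] at hb
      rw [hX]; linarith
  have hXabs : ∀ e ∈ P, |X e| < 2*U := by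
    intro e he
    have hue := (hPspec e he).1
    have : |X e| = |fμ e| := by
      rw [hXdef]; dsimp only; split_ifs <;> simp [abs_neg]
    rw [this, ← hue]; exact hf1 e
  -- all X e agree on P
  have hXconst : ∀ e ∈ P, ∀ e' ∈ P, X e = X e' := by
    intro e he e' he'
    exact pot_inj_aux U _ _ (hXabs e he) (hXabs e' he') (by rw [hXΔ e he, hXΔ e' he'])
  -- incidence row at s on preconditioning edges
  have hBs : ∀ e ∈ P, B e s * fμ e = - X e := by
    intro e he
    obtain ⟨hue, hor⟩ := hPspec e he
    rcases hor with ⟨hh, ht'⟩ | ⟨hh, ht'⟩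
    · have hX : X e = - fμ e := by simp [hXdef, hh, hst]
      simp [hB, hh, ht', hst, hX]
    · have hX : X e = fμ e := by simp [hXdef, hh]
      simp [hB, hh, ht', hst, hX]
  have hcompl : ((Pᶜ : Finset E).card : ℝ) = mR - k := by
    rw [Finset.card_compl, Nat.cast_sub (Finset.card_le_univ P)]
  -- cut bound at s
  have hsumX : -((mR - k) * U) ≤ ∑ e ∈ P, X e := by
    have h1 : (Bᵀ *ᵥ fμ) s = -(Fstar - μ) := by rw [hf2]; simp [hχs]
    have h2 : (Bᵀ *ᵥ fμ) s = ∑ e, B e s * fμ e := by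
      simp [Matrix.mulVec, dotProduct, Matrix.transpose_apply]
    have h3 : ∑ e ∈ P, B e s * fμ e + ∑ e ∈ Pᶜ, B e s * fμ e = ∑ e, B e s * fμ e :=
      Finset.sum_add_sum_compl P _
    have h4 : ∑ e ∈ P, B e s * fμ e = - ∑ e ∈ P, X e := by
      rw [Finset.sum_congr rfl (fun e he => hBs e he), Finset.sum_neg_distrib]
    have h5 : -((mR - k) * U) ≤ ∑ e ∈ Pᶜ, B e s * fμ e := by
      have hterm : ∀ e ∈ Pᶜ, -U ≤ B e s * fμ e := by
        intro e he
        rw [Finset.mem_compl] at he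
        have h6 : |B e s * fμ e| ≤ u e := by
          rw [abs_mul]
          calc |B e s| * |fμ e| ≤ 1 * u e :=
                mul_le_mul (hBabs e s) (hf1 e).le (abs_nonneg _) zero_le_one
          _ = u e := one_mul _
        have := hPout e he
        have := (abs_le.mp h6).1
        linarith
      calc -((mR - k) * U) = ∑ _e ∈ Pᶜ, (-U) := by
            rw [Finset.sum_const, nsmul_eq_mul, hcompl]; ring
      _ ≤ ∑ e ∈ Pᶜ, B e s * fμ e := Finset.sum_le_sum hterm
    rw [← h3, h4] at h2
    rw [h2] at h1
    linarith
  -- X e ≥ -U on P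
  have hXU : ∀ e ∈ P, -U ≤ X e := by
    intro e he
    have hsum : ∑ e' ∈ P, X e' = k * X e := by
      rw [Finset.sum_congr rfl (fun e' he' => hXconst e' he' e he), Finset.sum_const,
        nsmul_eq_mul]
    rw [hsum] at hsumX
    nlinarith [mul_nonneg (by linarith : (0:ℝ) ≤ 2*k - mR) hU.le]
  -- the main residual lower bound with constant 2
  have hmin2 : ∀ e ∈ P, μ / (2*mR) ≤ min (u e - fμ e) (u e + fμ e) := by
    intro e he
    obtain ⟨hue, hor⟩ := hPspec e he
    have key := residual_aux U mR μ (X e) hU hm1 hμ0 hμ2mU (hXabs e he) (hXU e he)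
      (by rw [hXΔ e he]; exact hΔle)
    have hminEq : min (u e - fμ e) (u e + fμ e) = min (2*U - X e) (2*U + X e) := by
      rcases hor with ⟨hh, ht'⟩ | ⟨hh, ht'⟩
      · have hX : X e = - fμ e := by simp [hXdef, hh, hst]
        rw [hue, hX, min_comm]
        congr 1 <;> ring
      · have hX : X e = fμ e := by simp [hXdef, hh]
        rw [hue, hX]
    rw [hminEq]
    exact key
  -- resistances at most 5 m²/μ² on P
  have hres5 : ∀ e ∈ P, resist u fμ e ≤ 5 * mR^2 / μ^2 := by
    intro e he
    obtain ⟨hue, -⟩ := hPspec e he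
    have hmm := hmin2 e he
    rw [le_min_iff] at hmm
    have hab : (u e - fμ e) + (u e + fμ e) = 4*U := by rw [hue]; ring
    have hd : μ/mR ≤ 2*U := by rw [div_le_iff₀ hm0]; nlinarith
    have e1 : ((μ/(2*mR))^2)⁻¹ = 4*mR^2/μ^2 := by
      rw [div_pow, inv_div]; rw [div_eq_div_iff (by positivity) (by positivity)]; ring
    have e2 : ((μ/mR)^2)⁻¹ = mR^2/μ^2 := by
      rw [div_pow, inv_div]
    have hc0 : (0:ℝ) < μ/(2*mR) := by positivity
    have hd0 : (0:ℝ) < μ/mR := by positivity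
    unfold resist
    rcases le_total (u e - fμ e) (u e + fμ e) with h | h
    · have hbig : μ/mR ≤ u e + fμ e := by linarith
      have i1 := inv_sq_mono_aux _ _ hc0 hmm.1
      have i2 := inv_sq_mono_aux _ _ hd0 hbig
      rw [e1] at i1; rw [e2] at i2
      have : 4*mR^2/μ^2 + mR^2/μ^2 = 5*mR^2/μ^2 := by ring
      linarith
    · have hbig : μ/mR ≤ u e - fμ e := by linarith
      have i1 := inv_sq_mono_aux _ _ hd0 hbig
      have i2 := inv_sq_mono_aux _ _ hc0 hmm.2
      rw [e2] at i1; rw [e1] at i2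
      have : 4*mR^2/μ^2 + mR^2/μ^2 = 5*mR^2/μ^2 := by ring
      linarith
  -- the test unit flow through preconditioning edges
  set g : E → ℝ := fun e => if e ∈ P then (if head e = t then k⁻¹ else -k⁻¹) else 0 with hgdef
  have hBg : Bᵀ *ᵥ g = χst := by
    funext v
    have hterm : ∀ e ∈ P, B e v * g e = χst v * k⁻¹ := by
      intro e he
      obtain ⟨-, hor⟩ := hPspec e he
      rcases hor with ⟨hh, ht'⟩ | ⟨hh, ht'⟩
      · have hg : g e = -k⁻¹ := by simp [hgdef, he, hh, hst]
        rw [hg, hB, hh, ht']; simp only [hχ]; try ring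
      · have hg : g e = k⁻¹ := by simp [hgdef, he, hh]
        rw [hg, hB, hh, ht']; simp only [hχ]; try ring
    have hsplit : ∑ e ∈ P, B e v * g e + ∑ e ∈ Pᶜ, B e v * g e = ∑ e, B e v * g e :=
      Finset.sum_add_sum_compl P _
    have hPc : ∑ e ∈ Pᶜ, B e v * g e = 0 := by
      apply Finset.sum_eq_zero
      intro e he
      rw [Finset.mem_compl] at he
      simp [hgdef, he]
    have hPs : ∑ e ∈ P, B e v * g e = χst v := by
      rw [Finset.sum_congr rfl hterm, Finset.sum_const, nsmul_eq_mul]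
      field_simp
      rw [hkdef]; ring
    have hfull : (Bᵀ *ᵥ g) v = ∑ e, B e v * g e := by
      simp [Matrix.mulVec, dotProduct, Matrix.transpose_apply]
    rw [hfull, ← hsplit, hPs, hPc, add_zero]
  have hgsq : ∀ e ∈ P, (g e)^2 = (k^2)⁻¹ := by
    intro e he
    simp only [hgdef, if_pos he]
    split_ifs <;> rw [← inv_pow] <;> ring
  have hEbound : ∑ e, resist u fμ e * (g e)^2 ≤ 10 * mR / μ^2 := by
    have hsplit : ∑ e ∈ P, resist u fμ e * (g e)^2 + ∑ e ∈ Pᶜ, resist u fμ e * (g e)^2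
        = ∑ e, resist u fμ e * (g e)^2 := Finset.sum_add_sum_compl P _
    have hPc : ∑ e ∈ Pᶜ, resist u fμ e * (g e)^2 = 0 := by
      apply Finset.sum_eq_zero
      intro e he
      rw [Finset.mem_compl] at he
      simp [hgdef, he]
    have hPs : ∑ e ∈ P, resist u fμ e * (g e)^2 ≤ k * ((5 * mR^2 / μ^2) * (k^2)⁻¹) := by
      calc ∑ e ∈ P, resist u fμ e * (g e)^2 ≤ ∑ _e ∈ P, (5 * mR^2 / μ^2) * (k^2)⁻¹ := by
            apply Finset.sum_le_sum
            intro e he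
            rw [hgsq e he]
            exact mul_le_mul_of_nonneg_right (hres5 e he) (inv_nonneg.mpr (sq_nonneg k))
      _ = k * ((5 * mR^2 / μ^2) * (k^2)⁻¹) := by
            rw [Finset.sum_const, nsmul_eq_mul]
    have hfin1 : k * ((5 * mR^2 / μ^2) * (k^2)⁻¹) = 5 * mR^2 / (μ^2 * k) := by
      field_simp
    have hfin2 : 5 * mR^2 / (μ^2 * k) ≤ 10 * mR / μ^2 := by
      rw [div_le_div_iff₀ (mul_pos (pow_pos hμ0 2) hk0) (by positivity)]
      have hh : 5*mR*μ^2*mR ≤ 5*mR*μ^2*(2*k) := by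
        apply mul_le_mul_of_nonneg_left hkm
        positivity
      nlinarith [hh]
    rw [← hsplit, hPc, add_zero]
    linarith
  refine ⟨?_, ?_, ?_⟩
  · intro e he
    have h14 : μ / (14*mR) ≤ μ / (2*mR) := by
      apply div_le_div_of_nonneg_left hμ0.le (by linarith) (by linarith)
    exact le_trans h14 (hmin2 e he)
  · intro e he
    have h400 : 5 * mR^2 / μ^2 ≤ 400 * mR^2 / μ^2 := by
      rw [div_le_div_iff₀ (by positivity) (by positivity)]
      nlinarith [sq_nonneg mR, sq_nonneg μ, mul_nonneg (sq_nonneg mR) (sq_nonneg μ)]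
    exact le_trans (hres5 e he) h400
  · have h10 : (0:ℝ) ≤ 10 * mR / μ^2 := by positivity
    have hmain := energy_aux B (resist u fμ) hrpos Ld hLd χst g hBg (10 * mR / μ^2)
      hEbound h10
    have h400 : 10 * mR / μ^2 ≤ 400 * mR / μ^2 := by
      rw [div_le_div_iff₀ (by positivity) (by positivity)]
      nlinarith [mul_nonneg hm0.le (sq_nonneg μ)]
    exact le_trans hmain h400
end

section
/- Suppose G is preconditioned, μ ∈ (0, F*], 1 ≤ k ≤ √m/10, and μ̂ = μ − kμ/√m. With Δf := f(μ̂) − f(μ), one has Σ_{e∈E} (Δf_e)² · [ 1/(u⁺(f(μ))_e · u⁺(f(μ̂))_e) + 1/(u⁻(f(μ))_e · u⁻(f(μ̂))_e) ] ≤ 500 k². -/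
open Matrix

lemma aux_edge_identity (x y uu : ℝ) (h1 : x < uu) (h2 : -uu < x) (h3 : y < uu) (h4 : -uu < y) :
    ((uu - y)⁻¹ - (uu + y)⁻¹) - ((uu - x)⁻¹ - (uu + x)⁻¹)
      = (y - x) * (((uu - x) * (uu - y))⁻¹ + ((uu + x) * (uu + y))⁻¹) := by
  have h5 : uu - x ≠ 0 := by linarith
  have h6 : uu + x ≠ 0 := by linarith
  have h7 : uu - y ≠ 0 := by linarith
  have h8 : uu + y ≠ 0 := by linarith
  field_simp
  ring

lemma aux_recip_bound {a b U y : ℝ} (ha : 0 < a) (hb : 0 < b) (hab : a + b = 4 * U)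
    (hU : 0 < U) (hy : a⁻¹ - b⁻¹ = y) (hy0 : 0 ≤ y) :
    a⁻¹ ≤ 2 * y + U⁻¹ ∧ b⁻¹ ≤ U⁻¹ := by
  have hba : a ≤ b := by
    have h1 : b⁻¹ ≤ a⁻¹ := by linarith
    nlinarith [mul_inv_cancel₀ ha.ne', mul_inv_cancel₀ hb.ne', mul_pos ha hb]
  have hb2U : 2 * U ≤ b := by linarith
  constructor
  · rcases le_or_gt U a with h | h
    · have : a⁻¹ ≤ U⁻¹ := by
        apply inv_anti₀ hU h
      linarith
    · have hb3 : 3 * U ≤ b := by linarith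
      have h1 : b⁻¹ ≤ (3 * U)⁻¹ := inv_anti₀ (by linarith) hb3
      have h2 : (3*U)⁻¹ ≤ (3*a)⁻¹ := inv_anti₀ (by linarith) (by linarith)
      have h3 : (3*a)⁻¹ = a⁻¹/3 := by field_simp
      have : (2/3) * a⁻¹ ≤ y := by
        rw [← hy]
        have : b⁻¹ ≤ a⁻¹/3 := le_trans h1 (h3 ▸ h2)
        linarith
      have hainv : 0 < a⁻¹ := inv_pos.mpr ha
      have hUinv : 0 < U⁻¹ := inv_pos.mpr hU
      linarith
  · calc b⁻¹ ≤ (2*U)⁻¹ := inv_anti₀ (by linarith) hb2U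
      _ ≤ U⁻¹ := by rw [mul_inv]; nlinarith [inv_pos.mpr hU]

lemma aux_gy_le_one {a b g : ℝ} (ha : 0 < a) (hb : 0 < b) (hg1 : -b ≤ g) (hg2 : g ≤ a) :
    g * (a⁻¹ - b⁻¹) ≤ 1 := by
  rcases le_or_gt (a⁻¹ - b⁻¹) 0 with h | h
  · have := mul_nonneg (by linarith : (0:ℝ) ≤ b) (neg_nonneg.mpr h)
    calc g * (a⁻¹ - b⁻¹) ≤ (-b) * (a⁻¹ - b⁻¹) := by nlinarith
      _ = b * b⁻¹ - b * a⁻¹ := by ring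
      _ ≤ 1 := by
        rw [mul_inv_cancel₀ (ne_of_gt hb)]
        nlinarith [mul_nonneg hb.le (inv_pos.mpr ha).le]
  · calc g * (a⁻¹ - b⁻¹) ≤ a * (a⁻¹ - b⁻¹) := by nlinarith
      _ = a * a⁻¹ - a * b⁻¹ := by ring
      _ ≤ 1 := by
        rw [mul_inv_cancel₀ (ne_of_gt ha)]
        nlinarith [mul_nonneg ha.le (inv_pos.mpr hb).le]

lemma incidence_mulVec {V E : Type*} [Fintype V] [DecidableEq V] (head tail : E → V)
    (B : Matrix E V ℝ)
    (hB : ∀ e v, B e v = (if v = head e then (1 : ℝ) else 0) - (if v = tail e then 1 else 0))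
    (φ : V → ℝ) (e : E) : (B *ᵥ φ) e = φ (head e) - φ (tail e) := by
  simp only [Matrix.mulVec, dotProduct, hB, sub_mul, ite_mul, one_mul, zero_mul,
    Finset.sum_sub_distrib, Finset.sum_ite_eq', Finset.mem_univ, if_true]

lemma dot_shift {V E : Type*} [Fintype V] [Fintype E] (B : Matrix E V ℝ) (v : E → ℝ)
    (ψ : V → ℝ) : ∑ e, v e * (B *ᵥ ψ) e = (Bᵀ *ᵥ v) ⬝ᵥ ψ := by
  rw [show ∑ e, v e * (B *ᵥ ψ) e = v ⬝ᵥ (B *ᵥ ψ) from rfl, Matrix.dotProduct_mulVec,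
    Matrix.mulVec_transpose]

lemma chi_dot {V : Type*} [Fintype V] [DecidableEq V] (s t : V) (χst : V → ℝ)
    (hχ : χst = fun v => (if v = t then (1 : ℝ) else 0) - (if v = s then 1 else 0))
    (ψ : V → ℝ) : χst ⬝ᵥ ψ = ψ t - ψ s := by
  subst hχ
  simp only [dotProduct, sub_mul, ite_mul, one_mul, zero_mul, Finset.sum_sub_distrib,
    Finset.sum_ite_eq', Finset.mem_univ, if_true]

lemma term_nonneg {uu x : ℝ} (h1 : x < uu) (h2 : -uu < x) :
    0 ≤ x * ((uu - x)⁻¹ - (uu + x)⁻¹) := by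
  have ha : 0 < uu - x := by linarith
  have hb : 0 < uu + x := by linarith
  have hrw : (uu - x)⁻¹ - (uu + x)⁻¹ = 2 * x / ((uu - x) * (uu + x)) := by
    field_simp; ring
  rw [hrw]
  calc (0:ℝ) ≤ 2 * (x * x) / ((uu - x) * (uu + x)) :=
        div_nonneg (by nlinarith) (mul_pos ha hb).le
    _ = x * (2 * x / ((uu - x) * (uu + x))) := by ring

lemma term_eq_zero {uu x : ℝ} (h1 : x < uu) (h2 : -uu < x)
    (h : x * ((uu - x)⁻¹ - (uu + x)⁻¹) = 0) : x = 0 := by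
  have ha : 0 < uu - x := by linarith
  have hb : 0 < uu + x := by linarith
  have hrw : x * ((uu - x)⁻¹ - (uu + x)⁻¹) = 2 * x ^ 2 / ((uu - x) * (uu + x)) := by
    field_simp; ring
  rw [hrw, div_eq_zero_iff] at h
  rcases h with h | h
  · nlinarith
  · nlinarith

/-- central-path potentials are "aligned": `φ t - φ s ≥ 0`. -/
lemma pot_nonneg {V E : Type*} [Fintype V] [Fintype E] [DecidableEq V]
    (head tail : E → V) (s t : V)
    (u : E → ℝ) (hu : ∀ e, 0 < u e)
    (B : Matrix E V ℝ)
    (hB : ∀ e v, B e v = (if v = head e then (1 : ℝ) else 0) - (if v = tail e then 1 else 0))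
    (χst : V → ℝ)
    (hχ : χst = fun v => (if v = t then (1 : ℝ) else 0) - (if v = s then 1 else 0))
    (hconn : ∀ x : V → ℝ, (∀ e, x (head e) = x (tail e)) → ∀ v w : V, x v = x w)
    (Fstar ν : ℝ) (hν : ν ≤ Fstar)
    (f : E → ℝ) (hf : ∀ e, |f e| < u e)
    (hflow : Bᵀ *ᵥ f = (Fstar - ν) • χst)
    (φ : V → ℝ) (hφ : ∀ e, (B *ᵥ φ) e = (u e - f e)⁻¹ - (u e + f e)⁻¹) :
    0 ≤ φ t - φ s := by
  have key : (Fstar - ν) * (φ t - φ s)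
      = ∑ e, f e * ((u e - f e)⁻¹ - (u e + f e)⁻¹) := by
    have h1 : ∑ e, f e * (B *ᵥ φ) e = (Bᵀ *ᵥ f) ⬝ᵥ φ := dot_shift B f φ
    rw [hflow, smul_dotProduct, chi_dot s t χst hχ φ] at h1
    rw [smul_eq_mul] at h1
    rw [← h1]
    exact Finset.sum_congr rfl fun e _ => by rw [hφ e]
  have hterm : ∀ e, 0 ≤ f e * ((u e - f e)⁻¹ - (u e + f e)⁻¹) := fun e =>
    term_nonneg (abs_lt.mp (hf e)).2 (abs_lt.mp (hf e)).1
  rcases lt_or_eq_of_le hν with h | h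
  · have hs : (0:ℝ) ≤ ∑ e, f e * ((u e - f e)⁻¹ - (u e + f e)⁻¹) :=
      Finset.sum_nonneg fun e _ => hterm e
    nlinarith
  · have h0 : ∑ e, f e * ((u e - f e)⁻¹ - (u e + f e)⁻¹) = 0 := by
      rw [← key, ← h]; ring
    have hfz : ∀ e, f e = 0 := by
      intro e
      have := (Finset.sum_eq_zero_iff_of_nonneg (fun e _ => hterm e)).mp h0 e
        (Finset.mem_univ e)
      exact term_eq_zero (abs_lt.mp (hf e)).2 (abs_lt.mp (hf e)).1 this
    have hloc : ∀ e, φ (head e) = φ (tail e) := by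
      intro e
      have h2 := hφ e
      rw [incidence_mulVec head tail B hB φ e, hfz e] at h2
      simp at h2
      linarith
    have := hconn φ hloc t s
    linarith

/-- potential difference upper bound `ν (φ t - φ s) ≤ m`. -/
lemma pot_upper {V E : Type*} [Fintype V] [Fintype E] [DecidableEq V]
    (s t : V)
    (u : E → ℝ) (hu : ∀ e, 0 < u e)
    (B : Matrix E V ℝ)
    (χst : V → ℝ)
    (hχ : χst = fun v => (if v = t then (1 : ℝ) else 0) - (if v = s then 1 else 0))
    (Fstar ν : ℝ)
    (fstar : E → ℝ) (hfs1 : ∀ e, |fstar e| ≤ u e) (hfs2 : Bᵀ *ᵥ fstar = Fstar • χst)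
    (f : E → ℝ) (hf : ∀ e, |f e| < u e)
    (hflow : Bᵀ *ᵥ f = (Fstar - ν) • χst)
    (φ : V → ℝ) (hφ : ∀ e, (B *ᵥ φ) e = (u e - f e)⁻¹ - (u e + f e)⁻¹) :
    ν * (φ t - φ s) ≤ Fintype.card E := by
  have key : ν * (φ t - φ s)
      = ∑ e, (fstar e - f e) * ((u e - f e)⁻¹ - (u e + f e)⁻¹) := by
    have h1 : ∑ e, (fstar e - f e) * (B *ᵥ φ) e = (Bᵀ *ᵥ (fstar - f)) ⬝ᵥ φ :=
      dot_shift B (fstar - f) φ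
    rw [Matrix.mulVec_sub, hfs2, hflow, ← sub_smul] at h1
    rw [smul_dotProduct, chi_dot s t χst hχ φ] at h1
    have h2 : Fstar - (Fstar - ν) = ν := by ring
    rw [h2] at h1
    rw [smul_eq_mul] at h1
    rw [← h1]
    exact Finset.sum_congr rfl fun e _ => by rw [hφ e]
  rw [key]
  calc ∑ e, (fstar e - f e) * ((u e - f e)⁻¹ - (u e + f e)⁻¹)
      ≤ ∑ _e : E, (1:ℝ) := by
        apply Finset.sum_le_sum
        intro e _
        have h1 := (abs_lt.mp (hf e)).1
        have h2 := (abs_lt.mp (hf e)).2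
        have h3 := (abs_le.mp (hfs1 e)).1
        have h4 := (abs_le.mp (hfs1 e)).2
        exact aux_gy_le_one (by linarith) (by linarith) (by linarith) (by linarith)
    _ = Fintype.card E := by simp
/-- capacity bound: `Fstar ≤ 3 U |P|` for preconditioned graphs. -/
lemma Fstar_cap {V E : Type*} [Fintype V] [Fintype E] [DecidableEq V] [DecidableEq E]
    (head tail : E → V) (s t : V) (hst : s ≠ t)
    (u : E → ℝ) (hu : ∀ e, 0 < u e)
    (B : Matrix E V ℝ)
    (hB : ∀ e v, B e v = (if v = head e then (1 : ℝ) else 0) - (if v = tail e then 1 else 0))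
    (χst : V → ℝ)
    (hχ : χst = fun v => (if v = t then (1 : ℝ) else 0) - (if v = s then 1 else 0))
    (Fstar : ℝ)
    (fstar : E → ℝ) (hfs1 : ∀ e, |fstar e| ≤ u e) (hfs2 : Bᵀ *ᵥ fstar = Fstar • χst)
    (U : ℝ) (hU : 0 < U) (P : Finset E)
    (hP2 : ∀ e ∈ P, u e = 2 * U) (hP3 : ∀ e ∉ P, u e ≤ U)
    (hP4 : Fintype.card E ≤ 2 * P.card) :
    Fstar ≤ 3 * U * P.card := by
  classical
  set ψ : V → ℝ := fun v => if v = s then 0 else 1 with hψ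
  have h1 : ∑ e, fstar e * (B *ᵥ ψ) e = (Bᵀ *ᵥ fstar) ⬝ᵥ ψ := dot_shift B fstar ψ
  rw [hfs2, smul_dotProduct, chi_dot s t χst hχ ψ, smul_eq_mul] at h1
  have hψt : ψ t = 1 := by simp [hψ, hst.symm]
  have hψs : ψ s = 0 := by simp [hψ]
  rw [hψt, hψs] at h1
  have h2 : Fstar ≤ ∑ e, u e := by
    rw [show Fstar = Fstar * (1 - 0) by ring, ← h1]
    apply Finset.sum_le_sum
    intro e _
    have hBe := incidence_mulVec head tail B hB ψ e
    have hb : |(B *ᵥ ψ) e| ≤ 1 := by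
      rw [hBe, hψ]
      dsimp only
      split_ifs <;> norm_num
    calc fstar e * (B *ᵥ ψ) e ≤ |fstar e * (B *ᵥ ψ) e| := le_abs_self _
      _ = |fstar e| * |(B *ᵥ ψ) e| := abs_mul _ _
      _ ≤ u e * 1 := mul_le_mul (hfs1 e) hb (abs_nonneg _) (hu e).le
      _ = u e := mul_one _
  have h3 : ∑ e ∈ P, u e = 2 * U * P.card := by
    rw [Finset.sum_congr rfl (fun e he => hP2 e he), Finset.sum_const, nsmul_eq_mul]
    ring
  have h4 : ∑ e ∈ Pᶜ, u e ≤ U * P.card := by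
    have hcard : (Pᶜ : Finset E).card ≤ P.card := by
      have := Finset.card_compl (α := E) P
      omega
    calc ∑ e ∈ Pᶜ, u e ≤ ∑ _e ∈ Pᶜ, U := by
          apply Finset.sum_le_sum
          intro e he
          exact hP3 e (Finset.mem_compl.mp he)
      _ = (Pᶜ : Finset E).card * U := by rw [Finset.sum_const, nsmul_eq_mul]
      _ ≤ P.card * U := by
          have : ((Pᶜ : Finset E).card : ℝ) ≤ (P.card : ℝ) := Nat.cast_le.mpr hcard
          nlinarith
      _ = U * P.card := by ring
  have h5 : ∑ e, u e = ∑ e ∈ P, u e + ∑ e ∈ Pᶜ, u e := (Finset.sum_add_sum_compl P u).symm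
  linarith

lemma sq_term_eq {a w d : ℝ} (hw : w ≠ 0) (h : a * w = d) : a ^ 2 * w = d ^ 2 / w := by
  field_simp [← h]; rw [← h]; ring

set_option maxHeartbeats 2000000 in
/-- Lemma `l2lemma`: for `μ̂ = μ − kμ/√m` with `1 ≤ k ≤ √m/10` and
`Δf = f(μ̂) − f(μ)`, one has
`Σ_e (Δf_e)² [1/(u⁺(f(μ))_e u⁺(f(μ̂))_e) + 1/(u⁻(f(μ))_e u⁻(f(μ̂))_e)] ≤ 500 k²`. -/
theorem central_path_l2_stability {V E : Type*} [Fintype V] [Fintype E] [DecidableEq V]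
    [DecidableEq E]
    (head tail : E → V) (s t : V) (hst : s ≠ t)
    (u : E → ℝ) (hu : ∀ e, 0 < u e)
    (B : Matrix E V ℝ)
    (hB : ∀ e v, B e v = (if v = head e then (1 : ℝ) else 0) - (if v = tail e then 1 else 0))
    (χst : V → ℝ)
    (hχ : χst = fun v => (if v = t then (1 : ℝ) else 0) - (if v = s then 1 else 0))
    (hconn : ∀ x : V → ℝ, (∀ e, x (head e) = x (tail e)) → ∀ v w : V, x v = x w)
    (Fstar : ℝ)
    (hFstar : IsGreatest
      {F : ℝ | ∃ f : E → ℝ, (∀ e, |f e| ≤ u e) ∧ Bᵀ *ᵥ f = F • χst} Fstar)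
    (U : ℝ) (P : Finset E) (hpre : Preconditioned head tail s t u U P)
    (μ : ℝ) (hμ0 : 0 < μ) (hμF : μ ≤ Fstar)
    (k : ℝ) (hk1 : 1 ≤ k) (hk2 : k ≤ Real.sqrt (Fintype.card E) / 10)
    (μhat : ℝ) (hμhat : μhat = μ - k * μ / Real.sqrt (Fintype.card E))
    (fμ : E → ℝ) (hfμ : IsCentralFlow B u χst Fstar μ fμ)
    (fh : E → ℝ) (hfh : IsCentralFlow B u χst Fstar μhat fh) :
    ∑ e, (fh e - fμ e) ^ 2 *
        (((u e - fμ e) * (u e - fh e))⁻¹ + ((u e + fμ e) * (u e + fh e))⁻¹) ≤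
      500 * k ^ 2 := by
  classical
  obtain ⟨hU, hPmem, hPout, hPcard⟩ := hpre
  obtain ⟨hfeas, hflow, φ, hφ⟩ := hfμ
  obtain ⟨hfeasH, hflowH, φh, hφh⟩ := hfh
  obtain ⟨fstar, hfs1, hfs2⟩ := hFstar.1
  set m' : ℝ := (Fintype.card E : ℝ) with hm'
  have hm0 : (0:ℝ) ≤ m' := by positivity
  have hsq10 : 10 * k ≤ Real.sqrt m' := by rw [hm']; linarith
  have hsq0 : 0 < Real.sqrt m' := by linarith
  have hm100 : (100:ℝ) ≤ m' := by
    have := Real.sq_sqrt hm0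
    nlinarith
  have hmpos : (0:ℝ) < m' := by linarith
  -- basic μhat facts
  have hc : μ - μhat = k * μ / Real.sqrt m' := by rw [hμhat, hm']; ring
  have hcpos : 0 < μ - μhat := by
    rw [hc]; positivity
  have hμhat9 : 9 / 10 * μ ≤ μhat := by
    have h1 : k * μ / Real.sqrt m' ≤ k * μ / (10 * k) := by
      apply div_le_div_of_nonneg_left (by positivity) (by positivity) hsq10
    have h2 : k * μ / (10 * k) = μ / 10 := by
      field_simp
    rw [h2] at h1
    have := hc
    linarith
  have hμhat0 : 0 < μhat := by linarith
  have hμhatF : μhat < Fstar := by linarith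
  -- per edge positivity
  have hap : ∀ e, 0 < u e - fμ e := fun e => by linarith [(abs_lt.mp (hfeas e)).2]
  have hbp : ∀ e, 0 < u e + fμ e := fun e => by linarith [(abs_lt.mp (hfeas e)).1]
  have haph : ∀ e, 0 < u e - fh e := fun e => by linarith [(abs_lt.mp (hfeasH e)).2]
  have hbph : ∀ e, 0 < u e + fh e := fun e => by linarith [(abs_lt.mp (hfeasH e)).1]
  set w : E → ℝ := fun e =>
    ((u e - fμ e) * (u e - fh e))⁻¹ + ((u e + fμ e) * (u e + fh e))⁻¹ with hwdef
  have hwpos : ∀ e, 0 < w e := fun e => by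
    have := hap e; have := hbp e; have := haph e; have := hbph e
    positivity
  -- the per-edge derivative identity
  have hBdiff : ∀ e, (B *ᵥ (φh - φ)) e = (fh e - fμ e) * w e := by
    intro e
    have h1 : (B *ᵥ (φh - φ)) e = (B *ᵥ φh) e - (B *ᵥ φ) e := by
      rw [Matrix.mulVec_sub]; rfl
    rw [h1, hφh e, hφ e]
    exact aux_edge_identity (fμ e) (fh e) (u e) (abs_lt.mp (hfeas e)).2
      (abs_lt.mp (hfeas e)).1 (abs_lt.mp (hfeasH e)).2 (abs_lt.mp (hfeasH e)).1
  set x : ℝ := φ t - φ s with hx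
  set xh : ℝ := φh t - φh s with hxh
  set D : ℝ := xh - x with hD
  -- the sum identity
  have hS : ∑ e, (fh e - fμ e) ^ 2 * w e = (μ - μhat) * D := by
    have h1 : ∑ e, (fh e - fμ e) * (B *ᵥ (φh - φ)) e = (Bᵀ *ᵥ (fh - fμ)) ⬝ᵥ (φh - φ) :=
      dot_shift B (fh - fμ) (φh - φ)
    rw [Matrix.mulVec_sub Bᵀ fh fμ, hflowH, hflow, ← sub_smul] at h1
    have h2 : Fstar - μhat - (Fstar - μ) = μ - μhat := by ring
    rw [h2, smul_dotProduct, chi_dot s t χst hχ (φh - φ), smul_eq_mul] at h1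
    have h3 : ∑ e, (fh e - fμ e) * (B *ᵥ (φh - φ)) e = ∑ e, (fh e - fμ e) ^ 2 * w e :=
      Finset.sum_congr rfl fun e _ => by rw [hBdiff e]; ring
    rw [h3] at h1
    rw [h1, hD, hx, hxh]
    simp only [Pi.sub_apply]
    ring
  -- potential bounds
  have hx0 : 0 ≤ x :=
    pot_nonneg head tail s t u hu B hB χst hχ hconn Fstar μ hμF fμ hfeas hflow φ hφ
  have hxh0 : 0 ≤ xh :=
    pot_nonneg head tail s t u hu B hB χst hχ hconn Fstar μhat hμhatF.le fh hfeasH hflowH φh hφh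
  have hxU : μ * x ≤ m' :=
    pot_upper s t u hu B χst hχ Fstar μ fstar hfs1 hfs2 fμ hfeas hflow φ hφ
  have hxhU : μhat * xh ≤ m' :=
    pot_upper s t u hu B χst hχ Fstar μhat fstar hfs1 hfs2 fh hfeasH hflowH φh hφh
  -- goal rewriting
  have goal_eq : ∑ e, (fh e - fμ e) ^ 2 *
      (((u e - fμ e) * (u e - fh e))⁻¹ + ((u e + fμ e) * (u e + fh e))⁻¹)
      = ∑ e, (fh e - fμ e) ^ 2 * w e := rfl
  clear_value w x xh D
  rw [goal_eq, hS]
  rcases le_or_gt D 0 with hD0 | hD0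
  · have h1 : (μ - μhat) * D ≤ 0 := mul_nonpos_of_nonneg_of_nonpos hcpos.le hD0
    nlinarith [sq_nonneg k]
  -- main case : D > 0
  have hk0 : (0:ℝ) < k := by linarith
  -- p and capacity bounds
  have hpcard : (50:ℕ) ≤ P.card := by
    have h100 := hm100
    rw [hm'] at h100
    have : (100:ℕ) ≤ Fintype.card E := by exact_mod_cast h100
    omega
  have hp0 : (0:ℝ) < P.card := by
    have : (0:ℕ) < P.card := by omega
    exact_mod_cast this
  have hpm : (P.card : ℝ) ≤ m' := by
    rw [hm']
    exact_mod_cast Finset.card_le_univ P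
  have hm2p : m' ≤ 2 * P.card := by
    rw [hm']
    exact_mod_cast hPcard
  have hFcap : Fstar ≤ 3 * U * P.card :=
    Fstar_cap head tail s t hst u hu B hB χst hχ Fstar fstar hfs1 hfs2 U hU P
      (fun e he => (hPmem e he).1) hPout hPcard
  have hUinv : U⁻¹ ≤ 3 * P.card / μ := by
    rw [le_div_iff₀ hμ0]
    have h1 : μ ≤ 3 * U * P.card := le_trans hμF hFcap
    calc U⁻¹ * μ ≤ U⁻¹ * (3 * U * P.card) := mul_le_mul_of_nonneg_left h1 (by positivity)
      _ = 3 * P.card := by field_simp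
  -- bound w on preconditioning edges
  set W : ℝ := (2 * x + U⁻¹) * (2 * xh + U⁻¹) + U⁻¹ * U⁻¹ with hWdef
  clear_value W
  have hUinv0 : 0 < U⁻¹ := inv_pos.mpr hU
  have hW1 : 0 < 2 * x + U⁻¹ := by linarith
  have hW2 : 0 < 2 * xh + U⁻¹ := by linarith
  have hWpos : 0 < W := by
    rw [hWdef]; exact add_pos (mul_pos hW1 hW2) (mul_pos hUinv0 hUinv0)
  have hwW : ∀ e ∈ P, w e ≤ W := by
    intro e he
    obtain ⟨hue, hor⟩ := hPmem e he
    have hwe : w e = (u e - fμ e)⁻¹ * (u e - fh e)⁻¹ + (u e + fμ e)⁻¹ * (u e + fh e)⁻¹ := by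
      rw [hwdef]; dsimp only; rw [mul_inv, mul_inv]
    rcases hor with ⟨hh, ht⟩ | ⟨hh, ht⟩
    · -- head = s, tail = t : potential drop is -x resp. -xh
      have h1 : (u e + fμ e)⁻¹ - (u e - fμ e)⁻¹ = x := by
        have := hφ e
        rw [incidence_mulVec head tail B hB φ e, hh, ht] at this
        rw [hx]; linarith
      have h1h : (u e + fh e)⁻¹ - (u e - fh e)⁻¹ = xh := by
        have := hφh e
        rw [incidence_mulVec head tail B hB φh e, hh, ht] at this
        rw [hxh]; linarith
      obtain ⟨hb1, hb2⟩ := aux_recip_bound (hbp e) (hap e) (by linarith) hU h1 hx0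
      obtain ⟨hb1h, hb2h⟩ := aux_recip_bound (hbph e) (haph e) (by linarith) hU h1h hxh0
      have hm1 : (u e - fμ e)⁻¹ * (u e - fh e)⁻¹ ≤ U⁻¹ * U⁻¹ :=
        mul_le_mul hb2 hb2h (inv_pos.mpr (haph e)).le hUinv0.le
      have hm2 : (u e + fμ e)⁻¹ * (u e + fh e)⁻¹ ≤ (2 * x + U⁻¹) * (2 * xh + U⁻¹) :=
        mul_le_mul hb1 hb1h (inv_pos.mpr (hbph e)).le hW1.le
      rw [hwe, hWdef]; linarith
    · -- head = t, tail = s : potential drop is x resp. xh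
      have h1 : (u e - fμ e)⁻¹ - (u e + fμ e)⁻¹ = x := by
        have := hφ e
        rw [incidence_mulVec head tail B hB φ e, hh, ht] at this
        rw [hx]; linarith
      have h1h : (u e - fh e)⁻¹ - (u e + fh e)⁻¹ = xh := by
        have := hφh e
        rw [incidence_mulVec head tail B hB φh e, hh, ht] at this
        rw [hxh]; linarith
      obtain ⟨hb1, hb2⟩ := aux_recip_bound (hap e) (hbp e) (by linarith) hU h1 hx0
      obtain ⟨hb1h, hb2h⟩ := aux_recip_bound (haph e) (hbph e) (by linarith) hU h1h hxh0
      have hm1 : (u e - fμ e)⁻¹ * (u e - fh e)⁻¹ ≤ (2 * x + U⁻¹) * (2 * xh + U⁻¹) :=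
        mul_le_mul hb1 hb1h (inv_pos.mpr (haph e)).le hW1.le
      have hm2 : (u e + fμ e)⁻¹ * (u e + fh e)⁻¹ ≤ U⁻¹ * U⁻¹ :=
        mul_le_mul hb2 hb2h (inv_pos.mpr (hbph e)).le hUinv0.le
      rw [hwe, hWdef]; linarith
  -- each preconditioning edge contributes at least D² / W
  have hterm : ∀ e ∈ P, D ^ 2 / W ≤ (fh e - fμ e) ^ 2 * w e := by
    intro e he
    obtain ⟨hue, hor⟩ := hPmem e he
    have hε : (fh e - fμ e) * w e = D ∨ (fh e - fμ e) * w e = -D := by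
      have h1 := hBdiff e
      rw [incidence_mulVec head tail B hB (φh - φ) e] at h1
      rcases hor with ⟨hh, ht⟩ | ⟨hh, ht⟩
      · right; rw [hh, ht] at h1; simp only [Pi.sub_apply] at h1
        rw [← h1, hD, hx, hxh]; ring
      · left; rw [hh, ht] at h1; simp only [Pi.sub_apply] at h1
        rw [← h1, hD, hx, hxh]; ring
    have hsq : (fh e - fμ e) ^ 2 * w e = D ^ 2 / w e := by
      rcases hε with h | h
      · exact sq_term_eq (hwpos e).ne' h
      · have h2 := sq_term_eq (hwpos e).ne' h
        have h3 : (-D) ^ 2 = D ^ 2 := by ring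
        rw [h2, h3]
    rw [hsq]
    exact div_le_div_of_nonneg_left (sq_nonneg D) (hwpos e) (hwW e he)
  have hsumP : (P.card : ℝ) * (D ^ 2 / W) ≤ ∑ e ∈ P, (fh e - fμ e) ^ 2 * w e := by
    have := Finset.card_nsmul_le_sum P (fun e => (fh e - fμ e) ^ 2 * w e) (D ^ 2 / W) hterm
    rwa [nsmul_eq_mul] at this
  have hsub : ∑ e ∈ P, (fh e - fμ e) ^ 2 * w e ≤ ∑ e, (fh e - fμ e) ^ 2 * w e := by
    apply Finset.sum_le_sum_of_subset_of_nonneg (Finset.subset_univ P)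
    intro e _ _
    exact mul_nonneg (sq_nonneg _) (hwpos e).le
  have hkey : (P.card : ℝ) * (D ^ 2 / W) ≤ (μ - μhat) * D := by
    rw [← hS]; exact le_trans hsumP hsub
  set c : ℝ := μ - μhat with hcdef
  clear_value c
  have hDle : D ≤ c * W / P.card := by
    have h1 : ((P.card : ℝ) * D / W) * D ≤ c * D := by
      calc ((P.card : ℝ) * D / W) * D = P.card * (D ^ 2 / W) := by ring
        _ ≤ c * D := hkey
    have h2 : (P.card : ℝ) * D / W ≤ c := le_of_mul_le_mul_right h1 hD0
    calc D = ((P.card : ℝ) * D / W) * (W / P.card) := by rw [div_mul_div_comm, eq_div_iff (mul_ne_zero hWpos.ne' hp0.ne')]; ring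
      _ ≤ c * (W / P.card) := mul_le_mul_of_nonneg_right h2 (div_nonneg hWpos.le hp0.le)
      _ = c * W / P.card := by ring
  have hSle : c * D ≤ c * (c * W / P.card) := mul_le_mul_of_nonneg_left hDle hcpos.le
  -- numeric conclusion
  set Q : ℝ := m' / μ with hQdef
  clear_value Q
  have hQ0 : 0 < Q := by rw [hQdef]; positivity
  have hxQ : x ≤ Q := by rw [hQdef, le_div_iff₀ hμ0]; linarith
  have hxhQ : xh ≤ 10 / 9 * Q := by
    have hq : (10:ℝ) / 9 * Q = 10 / 9 * m' / μ := by rw [hQdef]; ring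
    rw [hq, le_div_iff₀ hμ0]
    have h1 : xh * (9 / 10 * μ) ≤ xh * μhat := mul_le_mul_of_nonneg_left hμhat9 hxh0
    linarith
  have hUQ : U⁻¹ ≤ 3 * Q := by
    have h1 : 3 * (P.card : ℝ) / μ ≤ 3 * m' / μ := by gcongr
    have h2 : 3 * Q = 3 * m' / μ := by rw [hQdef]; ring
    linarith
  have hf1 : 2 * x + U⁻¹ ≤ 5 * Q := by linarith
  have hf2 : 2 * xh + U⁻¹ ≤ 6 * Q := by linarith
  have hWQ : W ≤ 39 * Q ^ 2 := by
    have h1 : (2 * x + U⁻¹) * (2 * xh + U⁻¹) ≤ 5 * Q * (6 * Q) :=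
      mul_le_mul hf1 hf2 hW2.le (by positivity)
    have h2 : U⁻¹ * U⁻¹ ≤ 3 * Q * (3 * Q) := mul_le_mul hUQ hUQ hUinv0.le (by positivity)
    rw [hWdef]; linarith
  have hc2 : c ^ 2 = k ^ 2 * μ ^ 2 / m' := by
    rw [hc, div_pow, Real.sq_sqrt hm0]; ring
  have hfinal : c * (c * W / P.card) ≤ 500 * k ^ 2 := by
    have hnum : c ^ 2 * W ≤ c ^ 2 * (39 * Q ^ 2) :=
      mul_le_mul_of_nonneg_left hWQ (sq_nonneg c)
    have h3 : c ^ 2 * (39 * Q ^ 2) = 39 * k ^ 2 * m' := by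
      rw [hc2, hQdef]
      field_simp
    have h4 : c ^ 2 * W / P.card ≤ 39 * k ^ 2 * m' / P.card := by
      rw [← h3]
      have hnum' := hnum
      exact div_le_div_of_nonneg_right hnum' hp0.le
    have h5 : 39 * k ^ 2 * m' / P.card ≤ 500 * k ^ 2 := by
      rw [div_le_iff₀ hp0]
      linarith [mul_nonneg (sq_nonneg k) (by linarith : (0:ℝ) ≤ 2 * (P.card:ℝ) - m'),
        mul_nonneg (sq_nonneg k) hp0.le]
    calc c * (c * W / P.card) = c ^ 2 * W / P.card := by ring
      _ ≤ 39 * k ^ 2 * m' / P.card := h4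
      _ ≤ 500 * k ^ 2 := h5
  linarith
end

section
/- Suppose G is preconditioned, μ ∈ (0, F*], 1 ≤ k ≤ √m/10, and μ̂ = μ − kμ/√m. Let φ(μ) and φ(μ̂) be central path potential vectors for f(μ) and f(μ̂) respectively. Then |χ_{st}ᵀ (φ(μ̂) − φ(μ))| ≤ 500 k √m / μ. (Since each central path potential vector is determined up to a global additive constant, the value χ_{st}ᵀ φ(·) = φ(·)_t − φ(·)_s is well defined.) -/
open Matrix

/-- Monotonicity of the edge voltage function `x ↦ (c-x)⁻¹ - (c+x)⁻¹`. -/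
lemma psi_mono' {c x y : ℝ} (hx : |x| < c) (hy : |y| < c) (hxy : x ≤ y) :
    (c - x)⁻¹ - (c + x)⁻¹ ≤ (c - y)⁻¹ - (c + y)⁻¹ := by
  obtain ⟨hx1, hx2⟩ := abs_lt.mp hx
  obtain ⟨hy1, hy2⟩ := abs_lt.mp hy
  have h1 : (c - x)⁻¹ ≤ (c - y)⁻¹ := inv_anti₀ (by linarith) (by linarith)
  have h2 : (c + x)⁻¹ ≥ (c + y)⁻¹ := inv_anti₀ (by linarith) (by linarith)
  linarith

lemma psi_strict' {c x y : ℝ} (hx : |x| < c) (hy : |y| < c) (hxy : x < y) :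
    (c - x)⁻¹ - (c + x)⁻¹ < (c - y)⁻¹ - (c + y)⁻¹ := by
  obtain ⟨hx1, hx2⟩ := abs_lt.mp hx
  obtain ⟨hy1, hy2⟩ := abs_lt.mp hy
  have h1 : (c - x)⁻¹ < (c - y)⁻¹ := inv_strictAnti₀ (by linarith) (by linarith)
  have h2 : (c + x)⁻¹ > (c + y)⁻¹ := inv_strictAnti₀ (by linarith) (by linarith)
  linarith

lemma psi_mono_prod' {c x y : ℝ} (hx : |x| < c) (hy : |y| < c) :
    0 ≤ (y - x) * (((c - y)⁻¹ - (c + y)⁻¹) - ((c - x)⁻¹ - (c + x)⁻¹)) := by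
  rcases le_total x y with h | h
  · exact mul_nonneg (by linarith) (by linarith [psi_mono' hx hy h])
  · have h1 := psi_mono' hy hx h
    have h2 := mul_nonneg (a := x - y)
      (b := ((c - x)⁻¹ - (c + x)⁻¹) - ((c - y)⁻¹ - (c + y)⁻¹)) (by linarith) (by linarith)
    nlinarith

lemma term_le_one' {u f q : ℝ} (hf : |f| < u) (hq : |q| ≤ u) :
    (q - f) * ((u - f)⁻¹ - (u + f)⁻¹) ≤ 1 := by
  obtain ⟨hf1, hf2⟩ := abs_lt.mp hf
  obtain ⟨hq1, hq2⟩ := abs_le.mp hq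
  have ha : 0 < u - f := by linarith
  have hb : 0 < u + f := by linarith
  rcases le_total f q with h | h
  · have h1 : (q - f) * (u - f)⁻¹ ≤ 1 := by
      rw [← div_eq_mul_inv, div_le_one ha]; linarith
    have h2 : 0 ≤ (q - f) * (u + f)⁻¹ := mul_nonneg (by linarith) (by positivity)
    nlinarith
  · have h1 : (q - f) * (-(u + f)⁻¹) ≤ 1 := by
      rw [mul_neg, ← neg_mul, ← div_eq_mul_inv, div_le_one hb]; linarith
    have h2 : (q - f) * (u - f)⁻¹ ≤ 0 :=
      mul_nonpos_iff.mpr (Or.inr ⟨by linarith, by positivity⟩)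
    nlinarith

/-- Lower bound on both residual capacities of a preconditioning edge,
given a bound on the potential drop. -/
lemma resid_lb' {U x Dx ν m : ℝ} (hU : 0 < U) (hν : 0 < ν) (hm : 0 < m)
    (hν2U : ν ≤ 2 * U * m) (hx : |x| < 2 * U)
    (hDx : (2 * U - x)⁻¹ - (2 * U + x)⁻¹ = Dx) (hDxb : |Dx| ≤ m / ν) :
    ν / (2 * m) ≤ 2 * U - x ∧ ν / (2 * m) ≤ 2 * U + x := by
  obtain ⟨hx1, hx2⟩ := abs_lt.mp hx
  obtain ⟨hDl, hDr⟩ := abs_le.mp hDxb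
  have hνU : ν / (2 * m) ≤ U := by rw [div_le_iff₀ (by positivity)]; nlinarith
  have hinv2U : (2 * U)⁻¹ ≤ m / ν := by
    rw [← one_div, div_le_div_iff₀ (by positivity) hν]; nlinarith
  constructor
  · rcases le_or_gt x 0 with h | h
    · linarith
    · have hpos : 0 < 2 * U - x := by linarith
      have h2 : (2 * U + x)⁻¹ ≤ (2 * U)⁻¹ := inv_anti₀ (by positivity) (by linarith)
      have h1 : (2 * U - x)⁻¹ ≤ 2 * (m / ν) := by linarith
      have h3 : (2 * (m / ν))⁻¹ ≤ 2 * U - x := by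
        rw [← inv_inv (2 * U - x)]
        exact inv_anti₀ (by positivity) h1
      have h4 : (2 * (m / ν))⁻¹ = ν / (2 * m) := by
        rw [show 2 * (m / ν) = 2 * m / ν by ring, inv_div]
      linarith
  · rcases le_or_gt 0 x with h | h
    · linarith
    · have hpos : 0 < 2 * U + x := by linarith
      have h2 : (2 * U - x)⁻¹ ≤ (2 * U)⁻¹ := inv_anti₀ (by positivity) (by linarith)
      have h1 : (2 * U + x)⁻¹ ≤ 2 * (m / ν) := by linarith
      have h3 : (2 * (m / ν))⁻¹ ≤ 2 * U + x := by
        rw [← inv_inv (2 * U + x)]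
        exact inv_anti₀ (by positivity) h1
      have h4 : (2 * (m / ν))⁻¹ = ν / (2 * m) := by
        rw [show 2 * (m / ν) = 2 * m / ν by ring, inv_div]
      linarith

set_option maxHeartbeats 1000000 in
/-- for `μ̂ = μ − kμ/√m` with `1 ≤ k ≤ √m/10`, the `s`-`t` voltage drop
of the central path potentials changes by at most `500 k √m / μ`:
`|χ_{st}ᵀ (φ(μ̂) − φ(μ))| ≤ 500 k √m / μ`. -/
theorem central_path_potential_drop {V E : Type*} [Fintype V] [Fintype E] [DecidableEq V]
    [DecidableEq E]
    (head tail : E → V) (s t : V) (hst : s ≠ t)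
    (u : E → ℝ) (hu : ∀ e, 0 < u e)
    (B : Matrix E V ℝ)
    (hB : ∀ e v, B e v = (if v = head e then (1 : ℝ) else 0) - (if v = tail e then 1 else 0))
    (χst : V → ℝ)
    (hχ : χst = fun v => (if v = t then (1 : ℝ) else 0) - (if v = s then 1 else 0))
    (hconn : ∀ x : V → ℝ, (∀ e, x (head e) = x (tail e)) → ∀ v w : V, x v = x w)
    (Fstar : ℝ)
    (hFstar : IsGreatest
      {F : ℝ | ∃ f : E → ℝ, (∀ e, |f e| ≤ u e) ∧ Bᵀ *ᵥ f = F • χst} Fstar)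
    (U : ℝ) (P : Finset E) (hpre : Preconditioned head tail s t u U P)
    (μ : ℝ) (hμ0 : 0 < μ) (hμF : μ ≤ Fstar)
    (k : ℝ) (hk1 : 1 ≤ k) (hk2 : k ≤ Real.sqrt (Fintype.card E) / 10)
    (μhat : ℝ) (hμhat : μhat = μ - k * μ / Real.sqrt (Fintype.card E))
    (fμ : E → ℝ) (hfμ : IsCentralFlow B u χst Fstar μ fμ)
    (fh : E → ℝ) (hfh : IsCentralFlow B u χst Fstar μhat fh)
    (φ : V → ℝ) (hφ : ∀ e, (B *ᵥ φ) e = (u e - fμ e)⁻¹ - (u e + fμ e)⁻¹)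
    (φh : V → ℝ) (hφh : ∀ e, (B *ᵥ φh) e = (u e - fh e)⁻¹ - (u e + fh e)⁻¹) :
    |χst ⬝ᵥ (φh - φ)| ≤ 500 * k * Real.sqrt (Fintype.card E) / μ := by
  classical
  obtain ⟨hfμ1, hfμ2, -⟩ := hfμ
  obtain ⟨hfh1, hfh2, -⟩ := hfh
  obtain ⟨hU, hP, hPc, hcard⟩ := hpre
  set m : ℝ := (Fintype.card E : ℝ) with hm
  set sm : ℝ := Real.sqrt (Fintype.card E) with hsmdef
  have hm0 : (0 : ℝ) ≤ m := by positivity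
  have hsm2 : sm ^ 2 = m := Real.sq_sqrt hm0
  have hsm10 : 10 ≤ sm := by linarith only [hk1, hk2]
  have hsm0 : 0 < sm := by linarith only [hsm10]
  have hm100 : 100 ≤ m := by nlinarith only [hsm2, hsm10, sq_nonneg (sm - 10)]
  have hmpos : (0 : ℝ) < m := by linarith only [hm100]
  -- μhat facts
  have hε0 : 0 < μ - μhat := by
    have h : 0 < k * μ / sm := by positivity
    rw [hμhat]; linarith only [h]
  have hμhat9 : 9 / 10 * μ ≤ μhat := by
    have h : k * μ / sm ≤ μ / 10 := by
      have hkm : 0 ≤ (sm / 10 - k) * μ :=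
        mul_nonneg (by linarith only [hk2]) hμ0.le
      rw [div_le_div_iff₀ hsm0 (by norm_num)]
      nlinarith only [hkm]
    rw [hμhat]; linarith only [h, hε0]
  have hμhat0 : 0 < μhat := by linarith only [hμhat9, hμ0]
  have hμhatμ : μhat ≤ μ := by linarith only [hε0]
  -- row and dot computations
  have hBrow : ∀ (ψ : V → ℝ) (e : E), (B *ᵥ ψ) e = ψ (head e) - ψ (tail e) := by
    intro ψ e
    simp only [Matrix.mulVec, dotProduct, hB, sub_mul, one_mul, zero_mul,
      Finset.sum_sub_distrib, ite_mul, Finset.sum_ite_eq', Finset.mem_univ, if_true]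
  have hdot : ∀ ψ : V → ℝ, χst ⬝ᵥ ψ = ψ t - ψ s := by
    intro ψ
    simp only [hχ, dotProduct, sub_mul, one_mul, zero_mul,
      Finset.sum_sub_distrib, ite_mul, Finset.sum_ite_eq', Finset.mem_univ, if_true]
  -- the maximum flow and the capacity bound
  obtain ⟨⟨fs, hfs1, hfs2⟩, -⟩ := hFstar
  have hF0 : 0 < Fstar := lt_of_lt_of_le hμ0 hμF
  have hF2Um : Fstar ≤ 2 * U * m := by
    have hχt : χst t = 1 := by
      rw [hχ]; simp [hst, Ne.symm hst]
    have hFt : Fstar = ∑ e, B e t * fs e := by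
      have h := congrFun hfs2 t
      simp only [Pi.smul_apply, smul_eq_mul, hχt, mul_one] at h
      rw [← h]
      simp [Matrix.mulVec, dotProduct, Matrix.transpose_apply]
    rw [hFt]
    calc ∑ e, B e t * fs e ≤ ∑ e : E, 2 * U := by
          apply Finset.sum_le_sum
          intro e _
          have h1 : |B e t| ≤ 1 := by rw [hB]; split_ifs <;> norm_num
          have h2 := hfs1 e
          have h3 : u e ≤ 2 * U := by
            by_cases he : e ∈ P
            · exact (hP e he).1.le
            · have h4 := hPc e he; linarith only [h4, hU]
          calc B e t * fs e ≤ |B e t * fs e| := le_abs_self _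
            _ = |B e t| * |fs e| := abs_mul _ _
            _ ≤ 1 * u e := mul_le_mul h1 h2 (abs_nonneg _) zero_le_one
            _ ≤ 2 * U := by linarith only [h3]
      _ = 2 * U * m := by
          rw [Finset.sum_const, Finset.card_univ, nsmul_eq_mul, hm]; ring
  -- the pairing bound |χᵀ pot| ≤ m / ν
  have pairing : ∀ (ν : ℝ) (f : E → ℝ) (pot : V → ℝ), 0 < ν → ν ≤ Fstar →
      (∀ e, |f e| < u e) → Bᵀ *ᵥ f = (Fstar - ν) • χst →
      (∀ e, (B *ᵥ pot) e = (u e - f e)⁻¹ - (u e + f e)⁻¹) →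
      |χst ⬝ᵥ pot| ≤ m / ν := by
    intro ν f pot hν0 hνF hfeas hval hpot
    have key : ∀ (c : ℝ) (q : E → ℝ), (∀ e, |q e| ≤ u e) → Bᵀ *ᵥ q = c • χst →
        (c - (Fstar - ν)) * (χst ⬝ᵥ pot) ≤ m := by
      intro c q hq hqv
      have h1 : (q - f) ⬝ᵥ (B *ᵥ pot) = (c - (Fstar - ν)) * (χst ⬝ᵥ pot) := by
        rw [Matrix.dotProduct_mulVec, ← Matrix.mulVec_transpose]
        rw [Matrix.mulVec_sub, hqv, hval, ← sub_smul, smul_dotProduct, smul_eq_mul]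
      have h2 : (q - f) ⬝ᵥ (B *ᵥ pot) ≤ m := by
        have e1 : (q - f) ⬝ᵥ (B *ᵥ pot)
            = ∑ e, (q e - f e) * ((u e - f e)⁻¹ - (u e + f e)⁻¹) := by
          simp only [dotProduct, Pi.sub_apply]
          exact Finset.sum_congr rfl fun e _ => by rw [hpot e]
        rw [e1]
        calc ∑ e, (q e - f e) * ((u e - f e)⁻¹ - (u e + f e)⁻¹) ≤ ∑ _e : E, (1 : ℝ) :=
              Finset.sum_le_sum fun e _ => term_le_one' (hfeas e) (hq e)
          _ = m := by rw [Finset.sum_const, Finset.card_univ, nsmul_eq_mul, hm, mul_one]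
      linarith only [h1 ▸ h2]
    have k1 := key Fstar fs hfs1 hfs2
    have habs : |1 - 2 * ν / Fstar| ≤ 1 := by
      rw [abs_le]
      constructor
      · have h : 2 * ν / Fstar ≤ 2 := by
          rw [div_le_iff₀ hF0]; linarith only [hνF]
        linarith only [h]
      · have h : 0 ≤ 2 * ν / Fstar := by positivity
        linarith only [h]
    have k2 := key (Fstar - 2 * ν) ((1 - 2 * ν / Fstar) • fs)
      (fun e => by
        simp only [Pi.smul_apply, smul_eq_mul, abs_mul]
        calc |1 - 2 * ν / Fstar| * |fs e| ≤ 1 * |fs e| :=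
              mul_le_mul_of_nonneg_right habs (abs_nonneg _)
          _ = |fs e| := one_mul _
          _ ≤ u e := hfs1 e)
      (by
        rw [Matrix.mulVec_smul, hfs2, smul_smul]
        congr 1
        field_simp)
    have k1' : ν * (χst ⬝ᵥ pot) ≤ m := by linear_combination k1
    have k2' : -(ν * (χst ⬝ᵥ pot)) ≤ m := by linear_combination k2
    clear k1 k2
    obtain ⟨X, hX⟩ : ∃ X, χst ⬝ᵥ pot = X := ⟨_, rfl⟩
    rw [hX] at k1' k2' ⊢
    rw [le_div_iff₀ hν0]
    rcases abs_cases X with ⟨h, _⟩ | ⟨h, _⟩ <;> rw [h] <;> linarith only [k1', k2']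
  -- potentials drop values
  obtain ⟨D, hD⟩ : ∃ D, χst ⬝ᵥ φ = D := ⟨_, rfl⟩
  obtain ⟨Dh, hDh⟩ : ∃ Dh, χst ⬝ᵥ φh = Dh := ⟨_, rfl⟩
  have hDbound : |D| ≤ m / μ := hD ▸ pairing μ fμ φ hμ0 hμF hfμ1 hfμ2 hφ
  have hDhbound : |Dh| ≤ m / μhat :=
    hDh ▸ pairing μhat fh φh hμhat0 (le_trans hμhatμ hμF) hfh1 hfh2 hφh
  have hgoalLHS : χst ⬝ᵥ (φh - φ) = Dh - D := by
    rw [dotProduct_sub, hD, hDh]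
  -- the global monotonicity sum
  have hS : ∑ e, (fh e - fμ e) * ((B *ᵥ φh) e - (B *ᵥ φ) e) = (μ - μhat) * (Dh - D) := by
    have h1 : ∑ e, (fh e - fμ e) * ((B *ᵥ φh) e - (B *ᵥ φ) e)
        = (fh - fμ) ⬝ᵥ (B *ᵥ (φh - φ)) := by
      simp [dotProduct, Matrix.mulVec_sub, Pi.sub_apply]
    rw [h1, Matrix.dotProduct_mulVec, ← Matrix.mulVec_transpose,
      Matrix.mulVec_sub, hfh2, hfμ2, ← sub_smul, smul_dotProduct, smul_eq_mul,
      dotProduct_sub]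
    rw [hD, hDh]
    ring
  have hSnonneg : ∀ e ∈ Finset.univ (α := E),
      0 ≤ (fh e - fμ e) * ((B *ᵥ φh) e - (B *ᵥ φ) e) := by
    intro e _
    rw [hφ e, hφh e]
    exact psi_mono_prod' (hfμ1 e) (hfh1 e)
  have hDleDh : D ≤ Dh := by
    have h0 : 0 ≤ (μ - μhat) * (Dh - D) := hS ▸ Finset.sum_nonneg hSnonneg
    by_contra hcon
    push_neg at hcon
    have h1 : (μ - μhat) * (Dh - D) < 0 :=
      mul_neg_of_pos_of_neg hε0 (by linarith only [hcon])
    linarith only [h0, h1]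
  rcases eq_or_lt_of_le hDleDh with heq | hlt
  · rw [hgoalLHS, ← heq, sub_self, abs_zero]
    positivity
  -- nontrivial case
  have hPne : P.Nonempty := by
    rw [← Finset.card_pos]
    by_contra h
    push_neg at h
    have h0 : P.card = 0 := by omega
    have h1 : Fintype.card E = 0 := by omega
    rw [hm, h1] at hmpos
    norm_num at hmpos
  obtain ⟨e0, he0⟩ := hPne
  -- normalized flows on preconditioning edges
  have hGspec : ∀ (f : E → ℝ) (pot : V → ℝ), (∀ e, |f e| < u e) →
      (∀ e, (B *ᵥ pot) e = (u e - f e)⁻¹ - (u e + f e)⁻¹) →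
      ∀ e ∈ P, |(if head e = t then f e else -f e)| < 2 * U ∧
        (2 * U - (if head e = t then f e else -f e))⁻¹
          - (2 * U + (if head e = t then f e else -f e))⁻¹ = χst ⬝ᵥ pot := by
    intro f pot hfeas hpot e he
    obtain ⟨hue, hor⟩ := hP e he
    have hfe := hfeas e
    have hpe := hpot e
    rw [hBrow pot e] at hpe
    rw [hdot pot]
    rcases hor with ⟨h1, h2⟩ | ⟨h1, h2⟩
    · have hne : head e ≠ t := by rw [h1]; exact hst
      rw [if_neg hne]
      constructor
      · rw [abs_neg, ← hue]; exact hfe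
      · rw [h1, h2, hue] at hpe
        have e1 : 2 * U - -f e = 2 * U + f e := by ring
        have e2 : 2 * U + -f e = 2 * U - f e := by ring
        rw [e1, e2]
        linarith
    · rw [if_pos h1]
      constructor
      · rw [← hue]; exact hfe
      · rw [h1, h2, hue] at hpe
        linarith
  have hGP := hGspec fμ φ hfμ1 hφ
  have hGhP := hGspec fh φh hfh1 hφh
  set g : ℝ := (if head e0 = t then fμ e0 else -fμ e0) with hgdef
  set gh : ℝ := (if head e0 = t then fh e0 else -fh e0) with hghdef
  have hgabs : |g| < 2 * U := (hGP e0 he0).1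
  have hgD : (2 * U - g)⁻¹ - (2 * U + g)⁻¹ = D := by
    rw [← hD]; exact (hGP e0 he0).2
  have hghabs : |gh| < 2 * U := (hGhP e0 he0).1
  have hghD : (2 * U - gh)⁻¹ - (2 * U + gh)⁻¹ = Dh := by
    rw [← hDh]; exact (hGhP e0 he0).2
  have hGconst : ∀ e ∈ P, (if head e = t then fμ e else -fμ e) = g := by
    intro e he
    rcases lt_trichotomy (if head e = t then fμ e else -fμ e) g with h | h | h
    · exfalso
      have := psi_strict' (hGP e he).1 hgabs h
      rw [(hGP e he).2, hD, hgD] at this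
      exact lt_irrefl _ this
    · exact h
    · exfalso
      have := psi_strict' hgabs (hGP e he).1 h
      rw [(hGP e he).2, hD, hgD] at this
      exact lt_irrefl _ this
  have hGhconst : ∀ e ∈ P, (if head e = t then fh e else -fh e) = gh := by
    intro e he
    rcases lt_trichotomy (if head e = t then fh e else -fh e) gh with h | h | h
    · exfalso
      have := psi_strict' (hGhP e he).1 hghabs h
      rw [(hGhP e he).2, hDh, hghD] at this
      exact lt_irrefl _ this
    · exact h
    · exfalso
      have := psi_strict' hghabs (hGhP e he).1 h
      rw [(hGhP e he).2, hDh, hghD] at this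
      exact lt_irrefl _ this
  -- each preconditioning edge contributes the same term
  have hflowP : ∀ e ∈ P,
      (fh e - fμ e) * ((B *ᵥ φh) e - (B *ᵥ φ) e) = (gh - g) * (Dh - D) := by
    intro e he
    obtain ⟨hue, hor⟩ := hP e he
    have h1 := hGconst e he
    have h2 := hGhconst e he
    have hpe : (B *ᵥ φ) e = φ (head e) - φ (tail e) := hBrow φ e
    have hpeh : (B *ᵥ φh) e = φh (head e) - φh (tail e) := hBrow φh e
    have hDval : D = φ t - φ s := by rw [← hD]; exact hdot φ
    have hDhval : Dh = φh t - φh s := by rw [← hDh]; exact hdot φh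
    rcases hor with ⟨ha, hb⟩ | ⟨ha, hb⟩
    · have hne : head e ≠ t := by rw [ha]; exact hst
      rw [if_neg hne] at h1 h2
      rw [hpe, hpeh, ha, hb, hDval, hDhval]
      have hfμe : fμ e = -g := by linarith
      have hfhe : fh e = -gh := by linarith
      rw [hfμe, hfhe]; ring
    · rw [if_pos ha] at h1 h2
      rw [hpe, hpeh, ha, hb, hDval, hDhval, h1, h2]
  -- sum over P
  set pr : ℝ := (P.card : ℝ) with hprdef
  have hprm : m ≤ 2 * pr := by
    rw [hm, hprdef]
    exact_mod_cast hcard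
  have hpr0 : (0 : ℝ) < pr := by linarith only [hprm, hmpos]
  have hsumP : ∑ e ∈ P, (fh e - fμ e) * ((B *ᵥ φh) e - (B *ᵥ φ) e)
      = pr * ((gh - g) * (Dh - D)) := by
    rw [Finset.sum_congr rfl hflowP, Finset.sum_const, nsmul_eq_mul, hprdef]
  have hPle : pr * ((gh - g) * (Dh - D)) ≤ (μ - μhat) * (Dh - D) := by
    rw [← hsumP, ← hS]
    exact Finset.sum_le_sum_of_subset_of_nonneg (Finset.subset_univ P)
      (fun e _ _ => hSnonneg e (Finset.mem_univ e))
  have hDhD : 0 < Dh - D := by linarith only [hlt]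
  have hgap : gh - g ≤ (μ - μhat) / pr := by
    rw [le_div_iff₀ hpr0]
    have h := (mul_le_mul_iff_of_pos_right hDhD).mp
      (by linear_combination hPle : (gh - g) * pr * (Dh - D) ≤ (μ - μhat) * (Dh - D))
    linarith only [h]
  -- residual lower bounds
  have hμ2Um : μ ≤ 2 * U * m := le_trans hμF hF2Um
  have hμhat2Um : μhat ≤ 2 * U * m := le_trans hμhatμ hμ2Um
  obtain ⟨hr1, hr2⟩ := resid_lb' hU hμ0 hmpos hμ2Um hgabs hgD hDbound
  obtain ⟨hr3, hr4⟩ := resid_lb' hU hμhat0 hmpos hμhat2Um hghabs hghD hDhbound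
  have hd1 : 0 < 2 * U - g := lt_of_lt_of_le (by positivity) hr1
  have hd2 : 0 < 2 * U + g := lt_of_lt_of_le (by positivity) hr2
  have hd3 : 0 < 2 * U - gh := lt_of_lt_of_le (by positivity) hr3
  have hd4 : 0 < 2 * U + gh := lt_of_lt_of_le (by positivity) hr4
  -- the exact expansion
  have hfinal : Dh - D = (gh - g) *
      ((2 * U - g)⁻¹ * (2 * U - gh)⁻¹ + (2 * U + g)⁻¹ * (2 * U + gh)⁻¹) := by
    rw [← hgD, ← hghD]
    field_simp
    ring
  -- bounds on the inverses
  have hb1 : (2 * U - g)⁻¹ ≤ 2 * m / μ := by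
    rw [show (2 : ℝ) * m / μ = (μ / (2 * m))⁻¹ by rw [inv_div]]
    exact inv_anti₀ (by positivity) hr1
  have hb2 : (2 * U + g)⁻¹ ≤ 2 * m / μ := by
    rw [show (2 : ℝ) * m / μ = (μ / (2 * m))⁻¹ by rw [inv_div]]
    exact inv_anti₀ (by positivity) hr2
  have hb3 : (2 * U - gh)⁻¹ ≤ 2 * m / μhat := by
    rw [show (2 : ℝ) * m / μhat = (μhat / (2 * m))⁻¹ by rw [inv_div]]
    exact inv_anti₀ (by positivity) hr3
  have hb4 : (2 * U + gh)⁻¹ ≤ 2 * m / μhat := by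
    rw [show (2 : ℝ) * m / μhat = (μhat / (2 * m))⁻¹ by rw [inv_div]]
    exact inv_anti₀ (by positivity) hr4
  have hbracket : (2 * U - g)⁻¹ * (2 * U - gh)⁻¹ + (2 * U + g)⁻¹ * (2 * U + gh)⁻¹
      ≤ 8 * m ^ 2 / (μ * μhat) := by
    have e1 : (2 * U - g)⁻¹ * (2 * U - gh)⁻¹ ≤ (2 * m / μ) * (2 * m / μhat) :=
      mul_le_mul hb1 hb3 (by positivity) (by positivity)
    have e2 : (2 * U + g)⁻¹ * (2 * U + gh)⁻¹ ≤ (2 * m / μ) * (2 * m / μhat) :=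
      mul_le_mul hb2 hb4 (by positivity) (by positivity)
    have e3 : (2 * m / μ) * (2 * m / μhat) + (2 * m / μ) * (2 * m / μhat)
        = 8 * m ^ 2 / (μ * μhat) := by
      field_simp
      ring
    linarith only [e1, e2, e3]
  have hbr : 0 < (2 * U - g)⁻¹ * (2 * U - gh)⁻¹ + (2 * U + g)⁻¹ * (2 * U + gh)⁻¹ := by
    have h1 := mul_pos (inv_pos.mpr hd1) (inv_pos.mpr hd3)
    have h2 := mul_pos (inv_pos.mpr hd2) (inv_pos.mpr hd4)
    linarith only [h1, h2]
  have hghg0 : 0 ≤ gh - g := by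
    by_contra hcon
    push_neg at hcon
    have h1 : (gh - g) * ((2 * U - g)⁻¹ * (2 * U - gh)⁻¹ + (2 * U + g)⁻¹ * (2 * U + gh)⁻¹) < 0 :=
      mul_neg_of_neg_of_pos (by linarith only [hcon]) hbr
    rw [← hfinal] at h1
    linarith only [h1, hDhD]
  have hmain : Dh - D ≤ ((μ - μhat) / pr) * (8 * m ^ 2 / (μ * μhat)) := by
    rw [hfinal]
    exact mul_le_mul hgap hbracket hbr.le (div_nonneg hε0.le hpr0.le)
  -- final numeric computation
  have hεeq : μ - μhat = k * μ / sm := by rw [hμhat]; ring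
  have hknn : 0 ≤ k * μ / sm :=
    div_nonneg (mul_nonneg (by linarith only [hk1]) hμ0.le) hsm0.le
  have hsmne : sm ≠ 0 := ne_of_gt hsm0
  have hμne : μ ≠ 0 := ne_of_gt hμ0
  have hfinal2 : ((μ - μhat) / pr) * (8 * m ^ 2 / (μ * μhat)) ≤ 500 * k * sm / μ := by
    have hb1' : 0 < μ * μhat := mul_pos hμ0 hμhat0
    have hb2' : 0 < μ * (9 / 10 * μ) := mul_pos hμ0 (by linarith only [hμ0])
    have h1 : (μ - μhat) / pr ≤ (k * μ / sm) / (m / 2) := by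
      rw [hεeq, div_le_div_iff₀ hpr0 (by linarith only [hmpos])]
      exact mul_le_mul_of_nonneg_left (by linarith only [hprm]) hknn
    have h2 : 8 * m ^ 2 / (μ * μhat) ≤ 8 * m ^ 2 / (μ * (9 / 10 * μ)) := by
      rw [div_le_div_iff₀ hb1' hb2']
      have hfac : 0 ≤ 8 * m ^ 2 * μ * (μhat - 9 / 10 * μ) :=
        mul_nonneg (mul_nonneg (by positivity) hμ0.le) (by linarith only [hμhat9])
      nlinarith only [hfac]
    have h3 : 0 ≤ 8 * m ^ 2 / (μ * μhat) := div_nonneg (by positivity) hb1'.le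
    have h4 : 0 ≤ (k * μ / sm) / (m / 2) := div_nonneg hknn (by linarith only [hmpos])
    calc ((μ - μhat) / pr) * (8 * m ^ 2 / (μ * μhat))
        ≤ ((k * μ / sm) / (m / 2)) * (8 * m ^ 2 / (μ * (9 / 10 * μ))) :=
          mul_le_mul h1 h2 h3 h4
      _ = (160 / 9) * k * sm / μ := by
          rw [← hsm2]
          field_simp
          ring
      _ ≤ 500 * k * sm / μ := by
          have h5 : 0 ≤ k * sm * μ :=
            mul_nonneg (mul_nonneg (by linarith only [hk1]) hsm0.le) hμ0.le
          rw [div_le_div_iff₀ hμ0 hμ0]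
          nlinarith only [h5]
  rw [hgoalLHS, abs_of_pos hDhD]
  linarith only [hmain, hfinal2]
end
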